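/- arXiv:2011.15010 — 12 statements merged into one kernel-verified Lean document; each statement's English description precedes it below -/
import Mathlib

section
/- Let B be a subset of the grid {1,...,N}×{1,...,N} such that no four points of B form the corners of an axis-parallel rectangle (i.e., there do not exist i1≠i2 and j1≠j2 with all four points (i1,j1),(i1,j2),(i2,j1),(i2,j2) in B). Then |B| < √2 · N^(3/2). -/
theorem rectangle_free_bound (N : ℕ) (hN : 0 < N) (B : Finset (Fin N × Fin N))
    (hB : ¬ ∃ i1 i2 j1 j2 : Fin N, i1 ≠ i2 ∧ j1 ≠ j2 ∧
      (i1, j1) ∈ B ∧ (i1, j2) ∈ B ∧ (i2, j1) ∈ B ∧ (i2, j2) ∈ B) :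
    (B.card : ℝ) < Real.sqrt 2 * (N : ℝ) ^ ((3 : ℝ) / 2) := by
  classical
  push_neg at hB
  set C : Fin N → Finset (Fin N) := fun i => Finset.univ.filter fun j => (i, j) ∈ B with hC
  set d : Fin N → ℕ := fun i => (C i).card with hd
  have hcard : B.card = ∑ i, d i := by
    rw [Finset.card_eq_sum_card_fiberwise (f := Prod.fst) (t := Finset.univ)
      (fun x _ => Finset.mem_univ _)]
    refine Finset.sum_congr rfl fun i _ => ?_
    refine Finset.card_bij (fun p _ => p.2) ?_ ?_ ?_
    · intro p hp
      simp only [Finset.mem_filter] at hp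
      simp only [hC, Finset.mem_filter, Finset.mem_univ, true_and]
      rw [← hp.2]
      simpa using hp.1
    · intro p hp q hq h
      simp only [Finset.mem_filter] at hp hq
      exact Prod.ext (hp.2.trans hq.2.symm) h
    · intro j hj
      simp only [hC, Finset.mem_filter, Finset.mem_univ, true_and] at hj
      exact ⟨(i, j), by simp [hj], rfl⟩
  set T : Finset (Fin N × Fin N × Fin N) :=
    Finset.univ.filter (fun t => t.2 ∈ (C t.1).offDiag) with hT
  have hT1 : T.card = ∑ i, (d i * d i - d i) := by
    rw [Finset.card_eq_sum_card_fiberwise (f := Prod.fst) (t := Finset.univ)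
      (fun x _ => Finset.mem_univ _)]
    refine Finset.sum_congr rfl fun i _ => ?_
    rw [hd, ← Finset.offDiag_card]
    refine Finset.card_bij (fun p _ => p.2) ?_ ?_ ?_
    · intro p hp
      simp only [hT, Finset.mem_filter, Finset.mem_univ, true_and] at hp
      show p.2 ∈ (C i).offDiag
      exact hp.2 ▸ hp.1
    · intro p hp q hq h
      simp only [Finset.mem_filter] at hp hq
      exact Prod.ext (hp.2.trans hq.2.symm) h
    · intro p hp
      exact ⟨(i, p), by
        simp only [Finset.mem_filter, hT, Finset.mem_univ, true_and]
        exact ⟨hp, trivial⟩, rfl⟩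
  have hT2 : T.card ≤ N * N - N := by
    have hle := Finset.card_le_card_of_injOn (s := T)
      (f := fun t : Fin N × Fin N × Fin N => t.2)
      (t := (Finset.univ : Finset (Fin N)).offDiag) ?_ ?_
    · simpa [Finset.offDiag_card] using hle
    · intro t ht
      simp only [hT, Finset.mem_filter, Finset.mem_univ, true_and,
        Finset.mem_offDiag, Finset.coe_filter, Set.mem_setOf_eq, Finset.mem_coe] at ht ⊢
      exact ht.2.2
    · intro t1 h1 t2 h2 h
      have h' : t1.2 = t2.2 := h
      simp only [hT, Finset.coe_filter, Finset.mem_univ, true_and, Set.mem_setOf_eq,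
        Finset.mem_offDiag, hC, Finset.mem_filter] at h1 h2
      obtain ⟨hb1, hb2, hne⟩ := h1
      obtain ⟨hc1, hc2, -⟩ := h2
      rw [← h'] at hc1 hc2
      by_cases hi : t1.1 = t2.1
      · exact Prod.ext hi h'
      · exact absurd hc2 (hB t1.1 t2.1 t1.2.1 t1.2.2 hi hne hb1 hb2 hc1)
  have hself : ∀ n : ℕ, n ≤ n * n := by
    intro n
    cases n with
    | zero => exact le_refl 0
    | succ k => exact Nat.le_mul_of_pos_left _ k.succ_pos
  have hsq : ∑ i, d i * d i ≤ N * N - N + ∑ i, d i := by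
    have heq : ∑ i, d i * d i = (∑ i, (d i * d i - d i)) + ∑ i, d i := by
      rw [← Finset.sum_add_distrib]
      exact Finset.sum_congr rfl fun i _ => (Nat.sub_add_cancel (hself (d i))).symm
    rw [heq]
    exact Nat.add_le_add_right (hT1 ▸ hT2) _
  have hmN : ∑ i, d i ≤ N * N := by
    rw [← hcard]
    calc B.card ≤ Fintype.card (Fin N × Fin N) := Finset.card_le_univ B
    _ = N * N := by simp
  -- Cauchy–Schwarz in ℕ
  have hcs : (∑ i, d i) ^ 2 ≤ N * ∑ i, d i ^ 2 := by
    have := Finset.sum_mul_sq_le_sq_mul_sq (R := ℕ) Finset.univ (fun _ => 1) d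
    simpa [Finset.card_univ] using this
  have hkey : B.card ^ 2 < 2 * N ^ 3 := by
    have h1 : B.card ^ 2 ≤ N * (N * N - N + N * N) := by
      rw [hcard]
      refine hcs.trans (Nat.mul_le_mul_left _ ?_)
      simp_rw [pow_two]
      exact hsq.trans (Nat.add_le_add_left hmN _)
    refine h1.trans_lt ?_
    have : N * N - N < N * N := Nat.sub_lt (Nat.mul_pos hN hN) hN
    calc N * (N * N - N + N * N) < N * (N * N + N * N) := by
          exact mul_lt_mul_of_pos_left (Nat.add_lt_add_right this _) hN
    _ = 2 * N ^ 3 := by ring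
  have hreal : (B.card : ℝ) ^ 2 < 2 * (N : ℝ) ^ 3 := by
    calc (B.card : ℝ) ^ 2 = ((B.card ^ 2 : ℕ) : ℝ) := by push_cast; ring
    _ < ((2 * N ^ 3 : ℕ) : ℝ) := by exact_mod_cast hkey
    _ = 2 * (N : ℝ) ^ 3 := by push_cast; ring
  have := Real.lt_sqrt_of_sq_lt hreal
  have hrw : Real.sqrt (2 * (N : ℝ) ^ 3) = Real.sqrt 2 * (N : ℝ) ^ ((3 : ℝ) / 2) := by
    rw [Real.sqrt_mul (by norm_num), Real.sqrt_eq_rpow ((N : ℝ) ^ 3),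
      ← Real.rpow_natCast (N : ℝ) 3, ← Real.rpow_mul (Nat.cast_nonneg N)]
    norm_num
  rwa [hrw] at this
end

section
/- Let A be a subset of the grid {1,...,N}³ such that no eight points of A form the corners of an axis-parallel rectangular box (i.e., there do not exist i1≠i2, j1≠j2, k1≠k2 with all eight points (i_a, j_b, k_c) in A). Then |A| < 2 · N^(11/4). -/
open Finset

theorem box_free_bound (N : ℕ) (hN : 0 < N) (A : Finset (Fin N × Fin N × Fin N))
    (hA : ¬ ∃ i1 i2 j1 j2 k1 k2 : Fin N, i1 ≠ i2 ∧ j1 ≠ j2 ∧ k1 ≠ k2 ∧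
      (i1, j1, k1) ∈ A ∧ (i1, j1, k2) ∈ A ∧ (i1, j2, k1) ∈ A ∧ (i1, j2, k2) ∈ A ∧
      (i2, j1, k1) ∈ A ∧ (i2, j1, k2) ∈ A ∧ (i2, j2, k1) ∈ A ∧ (i2, j2, k2) ∈ A) :
    (A.card : ℝ) < 2 * (N : ℝ) ^ ((11 : ℝ) / 4) := by
  classical
  set x : Fin N → Fin N → Fin N → ℕ := fun i j k => if (i, j, k) ∈ A then 1 else 0 with hxdef
  have hx1 : ∀ i j k, x i j k ≤ 1 := by
    intro i j k; simp only [hxdef]; split <;> simp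
  have hxx : ∀ i j k, x i j k * x i j k = x i j k := by
    intro i j k; simp only [hxdef]; split <;> simp
  set t : Fin N → Fin N → Fin N → ℕ := fun i1 i2 k => ∑ j, x i1 j k * x i2 j k with htdef
  set S : ℕ := ∑ i1, ∑ i2, ∑ k, t i1 i2 k with hSdef
  -- card as triple sum
  have hcard : A.card = ∑ i, ∑ j, ∑ k, x i j k := by
    have h : A.card = ∑ p : Fin N × Fin N × Fin N, if p ∈ A then 1 else 0 := by
      simp [Finset.sum_boole, Finset.filter_univ_mem]
    rw [h, Fintype.sum_prod_type]
    simp_rw [Fintype.sum_prod_type]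
    rfl
  -- identity : S = ∑ j, ∑ k, (∑ i, x i j k)^2
  have hSid : S = ∑ j, ∑ k, (∑ i, x i j k) ^ 2 := by
    rw [hSdef]
    simp_rw [htdef, sq, Finset.sum_mul_sum]
    conv_lhs => enter [2, i1, 2, i2]; rw [Finset.sum_comm]
    conv_lhs => enter [2, i1]; rw [Finset.sum_comm]
    conv_lhs => rw [Finset.sum_comm]
    conv_lhs => enter [2, j, 2, i1]; rw [Finset.sum_comm]
    conv_lhs => enter [2, j]; rw [Finset.sum_comm]
  -- Cauchy 1 : card^2 ≤ N^2 * S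
  have hC1 : A.card ^ 2 ≤ N ^ 2 * S := by
    have h := sq_sum_le_card_mul_sum_sq (s := (univ : Finset (Fin N × Fin N)))
      (f := fun p => ∑ i, x i p.1 p.2)
    have hc : A.card = ∑ j, ∑ k, ∑ i, x i j k := by
      rw [hcard, Finset.sum_comm]
      exact Finset.sum_congr rfl fun j _ => Finset.sum_comm
    simp only [Fintype.sum_prod_type, card_univ, Fintype.card_prod, Fintype.card_fin] at h
    rw [hSid, hc]
    calc (∑ j, ∑ k, ∑ i, x i j k) ^ 2 ≤ N * N * ∑ j, ∑ k, (∑ i, x i j k) ^ 2 := h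
      _ = N ^ 2 * ∑ j, ∑ k, (∑ i, x i j k) ^ 2 := by ring
  -- diagonal bound
  have hdiagt : ∀ i k, t i i k = ∑ j, x i j k := by
    intro i k; exact Finset.sum_congr rfl fun j _ => hxx i j k
  have htleN : ∀ i1 i2 k, t i1 i2 k ≤ N := by
    intro i1 i2 k
    calc t i1 i2 k ≤ ∑ _j : Fin N, 1 := Finset.sum_le_sum fun j _ => by
            calc x i1 j k * x i2 j k ≤ 1 * 1 :=
              Nat.mul_le_mul (hx1 i1 j k) (hx1 i2 j k)
            _ = 1 := by ring
      _ = N := by simp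
  have hdiag : ∀ i, ∑ k, (t i i k) ^ 2 ≤ N * ∑ k, t i i k := by
    intro i
    rw [Finset.mul_sum]
    refine Finset.sum_le_sum fun k _ => ?_
    rw [sq]
    exact Nat.mul_le_mul_right _ (htleN i i k)
  -- off-diagonal bound using hypothesis
  have hoff : ∀ i1 i2, i1 ≠ i2 → ∑ k, (t i1 i2 k) ^ 2 ≤ N ^ 2 + ∑ k, t i1 i2 k := by
    intro i1 i2 hne
    have expand : ∑ k, (t i1 i2 k) ^ 2
        = ∑ j1, ∑ j2, ∑ k, (x i1 j1 k * x i2 j1 k) * (x i1 j2 k * x i2 j2 k) := by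
      simp_rw [htdef, sq, Finset.sum_mul_sum]
      rw [Finset.sum_comm]
      exact Finset.sum_congr rfl fun j1 _ => Finset.sum_comm
    have key1 : ∀ j1, ∑ k, (x i1 j1 k * x i2 j1 k) * (x i1 j1 k * x i2 j1 k)
        = ∑ k, x i1 j1 k * x i2 j1 k := by
      intro j1
      refine Finset.sum_congr rfl fun k _ => ?_
      simp only [hxdef]
      by_cases h1 : (i1, j1, k) ∈ A <;> by_cases h2 : (i2, j1, k) ∈ A <;> simp [h1, h2]
    have key2 : ∀ j1 j2, j1 ≠ j2 →
        ∑ k, (x i1 j1 k * x i2 j1 k) * (x i1 j2 k * x i2 j2 k) ≤ 1 := by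
      intro j1 j2 hj
      have hrw : ∀ k, (x i1 j1 k * x i2 j1 k) * (x i1 j2 k * x i2 j2 k)
          = if ((i1, j1, k) ∈ A ∧ (i2, j1, k) ∈ A ∧ (i1, j2, k) ∈ A ∧ (i2, j2, k) ∈ A)
            then 1 else 0 := by
        intro k
        simp only [hxdef]
        by_cases h1 : (i1, j1, k) ∈ A <;> by_cases h2 : (i2, j1, k) ∈ A <;>
          by_cases h3 : (i1, j2, k) ∈ A <;> by_cases h4 : (i2, j2, k) ∈ A <;>
          simp [h1, h2, h3, h4]
      simp_rw [hrw]
      rw [← Finset.card_filter]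
      rw [Finset.card_le_one]
      intro k1 hk1 k2 hk2
      simp only [Finset.mem_filter, Finset.mem_univ, true_and] at hk1 hk2
      by_contra hkne
      exact hA ⟨i1, i2, j1, j2, k1, k2, hne, hj, hkne, hk1.1, hk2.1, hk1.2.2.1, hk2.2.2.1,
        hk1.2.1, hk2.2.1, hk1.2.2.2, hk2.2.2.2⟩
    rw [expand]
    have step : ∀ j1, ∑ j2, ∑ k, (x i1 j1 k * x i2 j1 k) * (x i1 j2 k * x i2 j2 k)
        ≤ (∑ k, x i1 j1 k * x i2 j1 k) + N := by
      intro j1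
      rw [← Finset.add_sum_erase _ _ (Finset.mem_univ j1), key1]
      refine Nat.add_le_add_left ?_ _
      calc ∑ j2 ∈ univ.erase j1, ∑ k, (x i1 j1 k * x i2 j1 k) * (x i1 j2 k * x i2 j2 k)
          ≤ ∑ _j2 ∈ univ.erase j1, 1 :=
            Finset.sum_le_sum fun j2 hj2 => key2 j1 j2 (Ne.symm (Finset.ne_of_mem_erase hj2))
        _ = (univ.erase j1).card := by simp
        _ ≤ N := le_trans (Finset.card_le_card (Finset.erase_subset _ _)) (by simp)
    calc ∑ j1, ∑ j2, ∑ k, (x i1 j1 k * x i2 j1 k) * (x i1 j2 k * x i2 j2 k)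
        ≤ ∑ j1, ((∑ k, x i1 j1 k * x i2 j1 k) + N) := Finset.sum_le_sum fun j1 _ => step j1
      _ = (∑ j1, ∑ k, x i1 j1 k * x i2 j1 k) + N * N := by
          rw [Finset.sum_add_distrib]; simp [mul_comm]
      _ = (∑ k, t i1 i2 k) + N * N := by rw [Finset.sum_comm]
      _ = N ^ 2 + ∑ k, t i1 i2 k := by ring
  -- total bound
  have hT : ∑ i1, ∑ i2, ∑ k, (t i1 i2 k) ^ 2 ≤ N ^ 4 + S + N * A.card := by
    have hdiagsum : ∑ i, ∑ k, t i i k = A.card := by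
      rw [hcard]
      refine Finset.sum_congr rfl fun i _ => ?_
      calc ∑ k, t i i k = ∑ k, ∑ j, x i j k := Finset.sum_congr rfl fun k _ => hdiagt i k
        _ = ∑ j, ∑ k, x i j k := Finset.sum_comm
    have step : ∀ i1, ∑ i2, ∑ k, (t i1 i2 k) ^ 2
        ≤ N * (∑ k, t i1 i1 k) + (N * N ^ 2 + ∑ i2, ∑ k, t i1 i2 k) := by
      intro i1
      rw [← Finset.add_sum_erase _ _ (Finset.mem_univ i1)]
      refine Nat.add_le_add (hdiag i1) ?_
      calc ∑ i2 ∈ univ.erase i1, ∑ k, (t i1 i2 k) ^ 2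
          ≤ ∑ i2 ∈ univ.erase i1, (N ^ 2 + ∑ k, t i1 i2 k) :=
            Finset.sum_le_sum fun i2 hi2 => hoff i1 i2 (Ne.symm (Finset.ne_of_mem_erase hi2))
        _ = (univ.erase i1).card * N ^ 2 + ∑ i2 ∈ univ.erase i1, ∑ k, t i1 i2 k := by
            rw [Finset.sum_add_distrib]; simp [mul_comm]
        _ ≤ N * N ^ 2 + ∑ i2, ∑ k, t i1 i2 k := by
            refine Nat.add_le_add ?_ ?_
            · exact Nat.mul_le_mul_right _
                (le_trans (Finset.card_le_card (Finset.erase_subset _ _)) (by simp))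
            · exact Finset.sum_le_sum_of_subset (Finset.subset_univ _)
    calc ∑ i1, ∑ i2, ∑ k, (t i1 i2 k) ^ 2
        ≤ ∑ i1, (N * (∑ k, t i1 i1 k) + (N * N ^ 2 + ∑ i2, ∑ k, t i1 i2 k)) :=
          Finset.sum_le_sum fun i1 _ => step i1
      _ = N * (∑ i1, ∑ k, t i1 i1 k) + (N * (N * N ^ 2) + S) := by
          rw [Finset.sum_add_distrib, Finset.sum_add_distrib, ← Finset.mul_sum, hSdef]
          simp [mul_comm]
      _ = N * A.card + (N ^ 4 + S) := by rw [hdiagsum]; ring_nf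
      _ = N ^ 4 + S + N * A.card := by ring
  -- Cauchy 2 : S^2 ≤ N^3 * (total)
  have hC2 : S ^ 2 ≤ N ^ 3 * (N ^ 4 + S + N * A.card) := by
    have h := sq_sum_le_card_mul_sum_sq (s := (univ : Finset (Fin N × Fin N × Fin N)))
      (f := fun p => t p.1 p.2.1 p.2.2)
    simp only [Fintype.sum_prod_type, card_univ, Fintype.card_prod, Fintype.card_fin] at h
    have h' : S ^ 2 ≤ N ^ 3 * ∑ i1, ∑ i2, ∑ k, (t i1 i2 k) ^ 2 := by
      rw [hSdef]
      calc (∑ i1, ∑ i2, ∑ k, t i1 i2 k) ^ 2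
          ≤ N * (N * N) * ∑ i1, ∑ i2, ∑ k, (t i1 i2 k) ^ 2 := h
        _ = N ^ 3 * ∑ i1, ∑ i2, ∑ k, (t i1 i2 k) ^ 2 := by ring
    exact le_trans h' (Nat.mul_le_mul_left _ hT)
  have hcN : A.card ≤ N ^ 3 := by
    calc A.card ≤ (univ : Finset (Fin N × Fin N × Fin N)).card := Finset.card_le_univ A
      _ = N ^ 3 := by simp [pow_succ, mul_assoc]
  -- pass to the reals
  set q : ℝ := (N : ℝ) ^ ((1 : ℝ) / 4) with hqdef
  have hq0 : 0 ≤ q := Real.rpow_nonneg (Nat.cast_nonneg N) _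
  have hq4 : q ^ 4 = (N : ℝ) := by
    rw [hqdef, ← Real.rpow_natCast ((N : ℝ) ^ ((1 : ℝ) / 4)) 4,
      ← Real.rpow_mul (Nat.cast_nonneg N)]
    norm_num
  have hq11 : q ^ 11 = (N : ℝ) ^ ((11 : ℝ) / 4) := by
    rw [hqdef, ← Real.rpow_natCast ((N : ℝ) ^ ((1 : ℝ) / 4)) 11,
      ← Real.rpow_mul (Nat.cast_nonneg N)]
    norm_num
  have hcard12 : (A.card : ℝ) ≤ q ^ 12 := by
    have : (A.card : ℝ) ≤ (N : ℝ) ^ 3 := by exact_mod_cast hcN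
    calc (A.card : ℝ) ≤ (N : ℝ) ^ 3 := this
      _ = (q ^ 4) ^ 3 := by rw [hq4]
      _ = q ^ 12 := by ring
  by_contra hcon
  push_neg at hcon
  rw [← hq11] at hcon
  -- hcon : 2 * q ^ 11 ≤ A.card
  rcases lt_or_ge N 16 with hN16 | hN16
  · -- small N : q < 2
    have hqlt : q < 2 := by
      have h4 : q ^ 4 < 2 ^ 4 := by
        rw [hq4]; norm_num
        exact_mod_cast hN16
      exact lt_of_pow_lt_pow_left₀ 4 (by norm_num) h4
    have hq1 : 1 ≤ q := by
      have h4 : (1 : ℝ) ^ 4 ≤ q ^ 4 := by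
        rw [hq4]; norm_num
        exact_mod_cast hN
      exact le_of_pow_le_pow_left₀ (by norm_num) hq0 h4
    nlinarith [pow_pos (lt_of_lt_of_le one_pos hq1) 11, hcard12, hcon,
      pow_le_pow_left₀ hq0 (le_of_lt hqlt) 11]
  · -- large N : 2 ≤ q
    have hq2 : 2 ≤ q := by
      have h4 : (2 : ℝ) ^ 4 ≤ q ^ 4 := by
        rw [hq4]; norm_num
        exact_mod_cast hN16
      exact le_of_pow_le_pow_left₀ (by norm_num) hq0 h4
    have hqpos : 0 < q := lt_of_lt_of_le two_pos hq2
    set a : ℝ := (A.card : ℝ) with hadef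
    set Sr : ℝ := (S : ℝ) with hSrdef
    have hSr0 : 0 ≤ Sr := Nat.cast_nonneg S
    have ha0 : 0 ≤ a := Nat.cast_nonneg _
    have rC1 : a ^ 2 ≤ q ^ 8 * Sr := by
      have := hC1
      have h : (A.card : ℝ) ^ 2 ≤ (N : ℝ) ^ 2 * (S : ℝ) := by exact_mod_cast this
      calc a ^ 2 ≤ (N : ℝ) ^ 2 * Sr := h
        _ = (q ^ 4) ^ 2 * Sr := by rw [hq4]
        _ = q ^ 8 * Sr := by ring
    have rC2 : Sr ^ 2 ≤ q ^ 28 + q ^ 12 * Sr + q ^ 16 * a := by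
      have h : (S : ℝ) ^ 2 ≤ (N : ℝ) ^ 3 * ((N : ℝ) ^ 4 + (S : ℝ) + (N : ℝ) * (A.card : ℝ)) := by
        exact_mod_cast hC2
      calc Sr ^ 2 ≤ (N : ℝ) ^ 3 * ((N : ℝ) ^ 4 + Sr + (N : ℝ) * a) := h
        _ = (q ^ 4) ^ 3 * ((q ^ 4) ^ 4 + Sr + q ^ 4 * a) := by rw [hq4]
        _ = q ^ 28 + q ^ 12 * Sr + q ^ 16 * a := by ring
    -- S ≥ 4 q^14
    have hS4 : 4 * q ^ 14 ≤ Sr := by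
      have h1 : (2 * q ^ 11) * (2 * q ^ 11) ≤ a * a :=
        mul_le_mul hcon hcon (by positivity) ha0
      have h2 : q ^ 8 * (4 * q ^ 14) ≤ q ^ 8 * Sr := by
        calc q ^ 8 * (4 * q ^ 14) = (2 * q ^ 11) * (2 * q ^ 11) := by ring
          _ ≤ a * a := h1
          _ = a ^ 2 := (sq a).symm
          _ ≤ q ^ 8 * Sr := rC1
      exact le_of_mul_le_mul_left h2 (by positivity)
    have hSpos : 0 < Sr := lt_of_lt_of_le (by positivity) hS4
    have e1 : 16 * q ^ 28 ≤ Sr ^ 2 := by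
      calc 16 * q ^ 28 = (4 * q ^ 14) * (4 * q ^ 14) := by ring
        _ ≤ Sr * Sr := mul_le_mul hS4 hS4 (by positivity) hSr0
        _ = Sr ^ 2 := (sq Sr).symm
    have e2 : 16 * (q ^ 12 * Sr) ≤ Sr ^ 2 := by
      have hqq : (4 : ℝ) ≤ q ^ 2 := by nlinarith
      have h16 : 16 * q ^ 12 ≤ 4 * q ^ 14 := by
        calc 16 * q ^ 12 = (4 * q ^ 12) * 4 := by ring
          _ ≤ (4 * q ^ 12) * q ^ 2 := mul_le_mul_of_nonneg_left hqq (by positivity)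
          _ = 4 * q ^ 14 := by ring
      calc 16 * (q ^ 12 * Sr) = (16 * q ^ 12) * Sr := by ring
        _ ≤ Sr * Sr := mul_le_mul_of_nonneg_right (le_trans h16 hS4) hSr0
        _ = Sr ^ 2 := (sq Sr).symm
    have e3 : q ^ 16 * a ≤ q ^ 28 := by
      calc q ^ 16 * a ≤ q ^ 16 * q ^ 12 := by
            exact mul_le_mul_of_nonneg_left hcard12 (by positivity)
        _ = q ^ 28 := by ring
    linarith [rC2, e1, e2, e3, pow_pos hSpos 2]
end

section
/- The minimum number of marked points in the 4×4 grid {1,...,4}² such that every axis-parallel rectangle has at least one marked corner is 7. -/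
set_option linter.unnecessarySimpa false

set_option maxRecDepth 4000
set_option maxHeartbeats 1000000

def HitsAllRectangles (N : ℕ) (R : Finset (Fin N × Fin N)) : Prop :=
  ∀ i1 i2 j1 j2 : Fin N, i1 < i2 → j1 < j2 →
    ((i1, j1) ∈ R ∨ (i1, j2) ∈ R ∨ (i2, j1) ∈ R ∨ (i2, j2) ∈ R)

instance (N : ℕ) (R : Finset (Fin N × Fin N)) : Decidable (HitsAllRectangles N R) := by
  unfold HitsAllRectangles; infer_instance

theorem min_marks_four_grid :
    IsLeast {m : ℕ | ∃ R : Finset (Fin 4 × Fin 4), HitsAllRectangles 4 R ∧ R.card = m} 7 := by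
  constructor
  · exact ⟨{(0,3),(1,1),(1,2),(2,0),(2,2),(3,0),(3,1)}, by decide, by decide⟩
  · rintro m ⟨R, hR, rfl⟩
    set s : Fin 4 → Finset (Fin 4) := fun i => Finset.univ.filter (fun j => (i, j) ∉ R) with hs
    have hinter : ∀ i i' : Fin 4, i < i' → ((s i) ∩ (s i')).card ≤ 1 := by
      intro i i' hii
      by_contra hc
      push_neg at hc
      obtain ⟨j, hj, j', hj', hne⟩ := Finset.one_lt_card.mp hc
      simp only [hs, Finset.mem_inter, Finset.mem_filter, Finset.mem_univ, true_and] at hj hj'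
      rcases lt_or_gt_of_ne hne with h | h
      · rcases hR i i' j j' hii h with h1 | h1 | h1 | h1 <;> tauto
      · rcases hR i i' j' j hii h with h1 | h1 | h1 | h1 <;> tauto
    have hpair : ∀ i i' : Fin 4, i < i' → (s i).card + (s i').card ≤ 5 := by
      intro i i' hii
      have h1 : ((s i) ∪ (s i')).card + ((s i) ∩ (s i')).card
          = (s i).card + (s i').card := Finset.card_union_add_card_inter _ _
      have h2 : ((s i) ∪ (s i')).card ≤ 4 := by
        have := Finset.card_le_univ ((s i) ∪ (s i'))
        simpa using this
      have h3 := hinter i i' hii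
      omega
    have hfiber : ∀ i : Fin 4,
        (Rᶜ.filter (fun p => p.1 = i)).card = (s i).card := by
      intro i
      have himg : Rᶜ.filter (fun p => p.1 = i) = (s i).image (fun j => (i, j)) := by
        ext ⟨a, b⟩
        simp only [Finset.mem_filter, Finset.mem_compl, Finset.mem_image, hs,
          Finset.mem_univ, true_and]
        constructor
        · rintro ⟨h1, rfl⟩; exact ⟨b, h1, rfl⟩
        · rintro ⟨j, hj, heq⟩
          obtain ⟨rfl, rfl⟩ := Prod.mk.injEq .. ▸ heq
          exact ⟨hj, rfl⟩
      rw [himg, Finset.card_image_of_injective _ (fun x y h => by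
        simpa using congrArg Prod.snd h)]
    have hcompl : Rᶜ.card = (s 0).card + (s 1).card + (s 2).card + (s 3).card := by
      have := Finset.card_eq_sum_card_fiberwise
        (f := Prod.fst) (s := Rᶜ) (t := (Finset.univ : Finset (Fin 4)))
        (fun x _ => Finset.mem_univ _)
      rw [this, Fin.sum_univ_four]
      simp only [hfiber]
    have htot : R.card + Rᶜ.card = 16 := by
      have := Finset.card_add_card_compl R
      simpa using this
    have h01 := hpair 0 1 (by decide)
    have h02 := hpair 0 2 (by decide)
    have h03 := hpair 0 3 (by decide)
    have h12 := hpair 1 2 (by decide)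
    have h13 := hpair 1 3 (by decide)
    have h23 := hpair 2 3 (by decide)
    omega
end

section
/- Let n ≥ 1 and let k satisfy n/2 < k ≤ n. If A is an n×n matrix with entries in {0,1} such that every k×k minor (submatrix given by k rows and k columns) contains at least one entry equal to 1, then the number of 1-entries of A is at least 2(n-k)+1. -/
/-- Every k×k minor (choice of k rows and k columns) of `A` contains a 1. -/
def MinorHit (n k : ℕ) (A : Fin n → Fin n → Bool) : Prop :=
  ∀ S T : Finset (Fin n), S.card = k → T.card = k → ∃ i ∈ S, ∃ j ∈ T, A i j = true

/-- The number of entries of `A` equal to 1. -/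
def onesCount {n : ℕ} (A : Fin n → Fin n → Bool) : ℕ :=
  (Finset.univ.filter fun p : Fin n × Fin n => A p.1 p.2 = true).card

theorem minor_lower_bound (n k : ℕ) (hn : 1 ≤ n) (hk1 : n < 2 * k) (hk2 : k ≤ n)
    (A : Fin n → Fin n → Bool) (hA : MinorHit n k A) :
    2 * (n - k) + 1 ≤ onesCount A := by
  by_contra hcon
  push_neg at hcon
  set m := n - k with hm
  set E := (Finset.univ.filter fun p : Fin n × Fin n => A p.1 p.2 = true) with hE
  have hEcard : E.card ≤ 2 * m := Nat.lt_succ_iff.mp hcon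
  obtain ⟨E1, hE1sub, hE1card⟩ :=
    Finset.exists_subset_card_eq (min_le_left E.card m)
  set E2 := E \ E1 with hE2
  have hE2card : E2.card ≤ m := by
    rw [hE2, Finset.card_sdiff_of_subset hE1sub, hE1card]
    omega
  have hE1m : E1.card ≤ m := by rw [hE1card]; exact min_le_right _ _
  set R := E1.image Prod.fst with hR
  set C := E2.image Prod.snd with hC
  have hRcard : R.card ≤ m := (Finset.card_image_le).trans hE1m
  have hCcard : C.card ≤ m := (Finset.card_image_le).trans hE2card
  have hmn : m ≤ Fintype.card (Fin n) := by simp; omega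
  obtain ⟨R', hRR', hR'card⟩ := Finset.exists_superset_card_eq hRcard hmn
  obtain ⟨C', hCC', hC'card⟩ := Finset.exists_superset_card_eq hCcard hmn
  have hScard : R'ᶜ.card = k := by
    rw [Finset.card_compl, hR'card, Fintype.card_fin]; omega
  have hTcard : C'ᶜ.card = k := by
    rw [Finset.card_compl, hC'card, Fintype.card_fin]; omega
  obtain ⟨i, hi, j, hj, hij⟩ := hA R'ᶜ C'ᶜ hScard hTcard
  have hmem : (i, j) ∈ E := by simp [hE, hij]
  by_cases h1 : (i, j) ∈ E1
  · exact (Finset.mem_compl.mp hi) (hRR' (Finset.mem_image_of_mem Prod.fst h1))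
  · exact (Finset.mem_compl.mp hj)
      (hCC' (Finset.mem_image_of_mem Prod.snd (Finset.mem_sdiff.mpr ⟨hmem, h1⟩)))
end

section
/- Let n ≥ 1 and n/2 < k ≤ n. There exists an n×n matrix with entries in {0,1} having exactly 2(n-k)+1 entries equal to 1 such that every k×k minor contains at least one entry equal to 1; namely, the matrix with 1's in the first 2(n-k)+1 diagonal positions and 0 elsewhere. -/
/-- The matrix with 1's in the first `2*(n-k)+1` diagonal positions and 0 elsewhere. -/
def diagMatrix (n k : ℕ) : Fin n → Fin n → Bool :=
  fun i j => decide (i = j ∧ i.val < 2 * (n - k) + 1)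

theorem diag_matrix_realizes_minimum (n k : ℕ) (hn : 1 ≤ n) (hk1 : n < 2 * k) (hk2 : k ≤ n) :
    onesCount (diagMatrix n k) = 2 * (n - k) + 1 ∧ MinorHit n k (diagMatrix n k) := by
  set m := 2 * (n - k) + 1 with hm
  have hmn : m ≤ n := by omega
  set D : Finset (Fin n) := Finset.univ.filter (fun i => i.val < m) with hD
  have hDcard : D.card = m := by
    have : D = Finset.map (Fin.castLEEmb hmn) Finset.univ := by
      ext i
      simp [hD, Finset.mem_map]
      constructor
      · intro h; exact ⟨⟨i.val, h⟩, Fin.ext rfl⟩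
      · rintro ⟨a, rfl⟩; exact a.isLt
    simp [this]
  constructor
  · have : (Finset.univ.filter fun p : Fin n × Fin n => diagMatrix n k p.1 p.2 = true)
        = D.map ⟨fun i => (i, i), fun a b h => by simpa using congrArg Prod.fst h⟩ := by
      ext ⟨i, j⟩
      simp [diagMatrix, hD, Finset.mem_map]
      constructor
      · rintro ⟨rfl, h⟩; exact ⟨i, by omega, rfl⟩
      · rintro ⟨a, ha, hij⟩; obtain ⟨rfl, rfl⟩ := Prod.mk.inj hij; exact ⟨rfl, by omega⟩
    rw [onesCount, this, Finset.card_map, hDcard]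
  · intro S T hS hT
    have h1 : S.card + T.card ≤ (S ∪ T).card + (S ∩ T).card := by
      rw [Finset.card_union_add_card_inter]
    have h2 : (S ∪ T).card ≤ n := by simpa using Finset.card_le_card (Finset.subset_univ (S ∪ T))
    have h3 : (S ∩ T).card + D.card ≤ ((S ∩ T) ∪ D).card + ((S ∩ T) ∩ D).card := by
      rw [Finset.card_union_add_card_inter]
    have h4 : ((S ∩ T) ∪ D).card ≤ n := by
      simpa using Finset.card_le_card (Finset.subset_univ (S ∩ T ∪ D))
    have h5 : 0 < ((S ∩ T) ∩ D).card := by omega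
    obtain ⟨i, hi⟩ := Finset.card_pos.mp h5
    simp only [Finset.mem_inter, hD, Finset.mem_filter] at hi
    exact ⟨i, hi.1.1, i, hi.1.2, by have := hi.2.2; simp [diagMatrix, hi.2.2]; omega⟩
end

section
/- Let n ≥ 1 and n/2 < k ≤ n, and suppose A is an n×n {0,1}-matrix with exactly 2(n-k)+1 ones such that every k×k minor contains a 1. Then there are permutations of the rows and columns of A transforming it into the diagonal matrix with 1's in the first 2(n-k)+1 diagonal entries and 0 elsewhere; in particular all 1's of A lie in distinct rows and distinct columns. -/
open Finset

lemma exists_uncovered {n k : ℕ} (hk2 : k ≤ n) {A : Fin n → Fin n → Bool}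
    (hA : MinorHit n k A) (R C : Finset (Fin n)) (hR : R.card ≤ n - k) (hC : C.card ≤ n - k) :
    ∃ i j, A i j = true ∧ i ∉ R ∧ j ∉ C := by
  obtain ⟨R', hRR', -, hR'⟩ := Finset.exists_subsuperset_card_eq (R.subset_univ) hR
    (by simp)
  obtain ⟨C', hCC', -, hC'⟩ := Finset.exists_subsuperset_card_eq (C.subset_univ) hC
    (by simp)
  obtain ⟨i, hi, j, hj, hij⟩ := hA R'ᶜ C'ᶜ
    (by rw [Finset.card_compl, hR', Fintype.card_fin]; omega)
    (by rw [Finset.card_compl, hC', Fintype.card_fin]; omega)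
  exact ⟨i, j, hij, fun h => (Finset.mem_compl.1 hi) (hRR' h),
    fun h => (Finset.mem_compl.1 hj) (hCC' h)⟩

lemma rows_distinct {n k : ℕ} (hk2 : k ≤ n) {A : Fin n → Fin n → Bool}
    (hA : MinorHit n k A) (hcard : onesCount A = 2 * (n - k) + 1)
    {p q : Fin n × Fin n} (hp : A p.1 p.2 = true) (hq : A q.1 q.2 = true) (hpq : p ≠ q) :
    p.1 ≠ q.1 := by
  intro hrow
  set O := Finset.univ.filter (fun r : Fin n × Fin n => A r.1 r.2 = true) with hO
  have hOcard : O.card = 2 * (n - k) + 1 := hcard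
  have hpO : p ∈ O := by simp [hO, hp]
  have hqO : q ∈ O := by simp [hO, hq]
  have hqO' : q ∈ O.erase p := Finset.mem_erase.2 ⟨Ne.symm hpq, hqO⟩
  have h2 : 2 ≤ O.card := Finset.one_lt_card.2 ⟨p, hpO, q, hqO, hpq⟩
  have hnk : 1 ≤ n - k := by omega
  set O' := (O.erase p).erase q with hO'
  have hO'card : O'.card = 2 * (n - k) - 1 := by
    rw [hO', Finset.card_erase_of_mem hqO', Finset.card_erase_of_mem hpO, hOcard]
    omega
  obtain ⟨B, hBsub, hBcard⟩ := Finset.exists_subset_card_eq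
    (show n - k - 1 ≤ O'.card by omega)
  set R := insert p.1 (B.image Prod.fst) with hRdef
  set C := (O' \ B).image Prod.snd with hCdef
  have hR : R.card ≤ n - k := by
    refine le_trans (Finset.card_insert_le _ _) ?_
    have := Finset.card_image_le (s := B) (f := Prod.fst)
    omega
  have hC : C.card ≤ n - k := by
    refine le_trans (Finset.card_image_le) ?_
    rw [Finset.card_sdiff_of_subset hBsub]
    omega
  obtain ⟨i, j, hij, hiR, hjC⟩ := exists_uncovered hk2 hA R C hR hC
  have hmem : (i, j) ∈ O := by simp [hO, hij]
  by_cases h1 : (i, j) = p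
  · exact hiR (by rw [hRdef]; exact (congrArg Prod.fst h1) ▸ Finset.mem_insert_self _ _)
  by_cases hcase2 : (i, j) = q
  · apply hiR
    have : i = q.1 := congrArg Prod.fst hcase2
    rw [hRdef, this, ← hrow]
    exact Finset.mem_insert_self _ _
  have hmO' : (i, j) ∈ O' := Finset.mem_erase.2 ⟨hcase2, Finset.mem_erase.2 ⟨h1, hmem⟩⟩
  by_cases hB : (i, j) ∈ B
  · exact hiR (Finset.mem_insert_of_mem (Finset.mem_image_of_mem Prod.fst hB))
  · exact hjC (Finset.mem_image_of_mem Prod.snd (Finset.mem_sdiff.2 ⟨hmO', hB⟩))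

lemma cols_distinct {n k : ℕ} (hk2 : k ≤ n) {A : Fin n → Fin n → Bool}
    (hA : MinorHit n k A) (hcard : onesCount A = 2 * (n - k) + 1)
    {p q : Fin n × Fin n} (hp : A p.1 p.2 = true) (hq : A q.1 q.2 = true) (hpq : p ≠ q) :
    p.2 ≠ q.2 := by
  have hA' : MinorHit n k (fun i j => A j i) := by
    intro S T hS hT
    obtain ⟨i, hi, j, hj, h⟩ := hA T S hT hS
    exact ⟨j, hj, i, hi, h⟩
  have hcard' : onesCount (fun i j => A j i) = 2 * (n - k) + 1 := by
    rw [← hcard]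
    unfold onesCount
    apply Finset.card_bij (fun p _ => p.swap)
    · intro a ha; simp only [Finset.mem_filter, Finset.mem_univ, true_and] at *; exact ha
    · intro a _ b _ h; exact Prod.swap_injective h
    · intro b hb; exact ⟨b.swap, by simpa using hb, by simp⟩
  exact rows_distinct hk2 hA' hcard' (p := p.swap) (q := q.swap) hp hq
    (fun h => hpq (Prod.swap_injective h))

lemma subtypeCongr_apply_pos {α : Type*} {p q : α → Prop} [DecidablePred p] [DecidablePred q]
    (e : { x // p x } ≃ { x // q x }) (f : { x // ¬p x } ≃ { x // ¬q x }) (a : α) (h : p a) :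
    Equiv.subtypeCongr e f a = (e ⟨a, h⟩ : { x // q x }).1 := by
  simp [Equiv.subtypeCongr, Equiv.sumCompl_symm_apply_of_pos h]

lemma subtypeCongr_apply_neg {α : Type*} {p q : α → Prop} [DecidablePred p] [DecidablePred q]
    (e : { x // p x } ≃ { x // q x }) (f : { x // ¬p x } ≃ { x // ¬q x }) (a : α) (h : ¬ p a) :
    Equiv.subtypeCongr e f a = (f ⟨a, h⟩ : { x // ¬q x }).1 := by
  simp [Equiv.subtypeCongr, Equiv.sumCompl_symm_apply_of_neg h]

lemma card_val_lt_subtype {n m : ℕ} (hm : m ≤ n) :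
    Fintype.card {i : Fin n // (i : ℕ) < m} = m :=
  (Fintype.card_congr
    { toFun := fun i : {i : Fin n // (i : ℕ) < m} => (⟨i.1.1, i.2⟩ : Fin m)
      invFun := fun j => ⟨⟨j.1, lt_of_lt_of_le j.2 hm⟩, j.2⟩
      left_inv := fun _ => rfl
      right_inv := fun _ => rfl }).trans (Fintype.card_fin m)

/-- The complement equivalence used to extend an injection to a permutation. -/
noncomputable def extendPermCompl {n m : ℕ} (hm : m ≤ n) (f : Fin m → Fin n)
    (hf : Function.Injective f) :
    {i : Fin n // ¬ (i : ℕ) < m} ≃ {x : Fin n // ¬ x ∈ Set.range f} :=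
  Fintype.equivOfCardEq (by
    rw [Fintype.card_subtype_compl, Fintype.card_subtype_compl,
      Set.card_range_of_injective hf, card_val_lt_subtype hm, Fintype.card_fin,
      Fintype.card_fin])

/-- An injective map `Fin m → Fin n` (with `m ≤ n`) extended to a permutation of `Fin n`,
placing the image on the first `m` positions. -/
noncomputable def extendPerm {n m : ℕ} (hm : m ≤ n) (f : Fin m → Fin n)
    (hf : Function.Injective f) : Equiv.Perm (Fin n) :=
  Equiv.subtypeCongr
    (p := fun i : Fin n => (i : ℕ) < m) (q := fun i : Fin n => i ∈ Set.range f)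
    (Equiv.ofBijective (fun i => ⟨f ⟨i.1.1, i.2⟩, ⟨_, rfl⟩⟩)
      ⟨fun a b h => by
        have h2 := hf (Subtype.ext_iff.1 h)
        have h3 := congrArg Fin.val h2
        exact Subtype.ext (Fin.ext h3),
       fun x => by
        obtain ⟨t, ht⟩ := x.2
        exact ⟨⟨⟨t.1, lt_of_lt_of_le t.2 hm⟩, t.2⟩, Subtype.ext (by simpa using ht)⟩⟩)
    (extendPermCompl hm f hf)

lemma extendPerm_lt {n m : ℕ} (hm : m ≤ n) (f : Fin m → Fin n) (hf : Function.Injective f)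
    {i : Fin n} (h : (i : ℕ) < m) : extendPerm hm f hf i = f ⟨i.1, h⟩ := by
  rw [extendPerm, subtypeCongr_apply_pos _ _ i h]
  rfl

lemma extendPerm_not_mem {n m : ℕ} (hm : m ≤ n) (f : Fin m → Fin n) (hf : Function.Injective f)
    {i : Fin n} (h : ¬ (i : ℕ) < m) : extendPerm hm f hf i ∉ Set.range f := by
  rw [extendPerm, subtypeCongr_apply_neg _ _ i h]
  exact (extendPermCompl hm f hf ⟨i, h⟩).2

theorem minimum_configuration_unique (n k : ℕ) (hn : 1 ≤ n) (hk1 : n < 2 * k) (hk2 : k ≤ n)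
    (A : Fin n → Fin n → Bool) (hA : MinorHit n k A)
    (hcard : onesCount A = 2 * (n - k) + 1) :
    (∃ σ τ : Equiv.Perm (Fin n), ∀ i j, A (σ i) (τ j) = diagMatrix n k i j) ∧
    (∀ p q : Fin n × Fin n, A p.1 p.2 = true → A q.1 q.2 = true → p ≠ q →
      p.1 ≠ q.1 ∧ p.2 ≠ q.2) := by
  have hrow : ∀ p q : Fin n × Fin n, A p.1 p.2 = true → A q.1 q.2 = true → p ≠ q →
      p.1 ≠ q.1 := fun p q hp hq hpq => rows_distinct hk2 hA hcard hp hq hpq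
  have hcol : ∀ p q : Fin n × Fin n, A p.1 p.2 = true → A q.1 q.2 = true → p ≠ q →
      p.2 ≠ q.2 := fun p q hp hq hpq => cols_distinct hk2 hA hcard hp hq hpq
  refine ⟨?_, fun p q hp hq hpq => ⟨hrow p q hp hq hpq, hcol p q hp hq hpq⟩⟩
  set m := 2 * (n - k) + 1 with hm
  have hmn : m ≤ n := by omega
  set O := Finset.univ.filter (fun r : Fin n × Fin n => A r.1 r.2 = true) with hO
  have hOmem : ∀ r : Fin n × Fin n, r ∈ O ↔ A r.1 r.2 = true := by
    intro r; simp [hO]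
  have hOcard : O.card = m := hcard
  have fstInj : ∀ r s : Fin n × Fin n, r ∈ O → s ∈ O → r.1 = s.1 → r = s := by
    intro r s hr hs h
    by_contra hne
    exact hrow r s ((hOmem r).1 hr) ((hOmem s).1 hs) hne h
  have sndInj : ∀ r s : Fin n × Fin n, r ∈ O → s ∈ O → r.2 = s.2 → r = s := by
    intro r s hr hs h
    by_contra hne
    exact hcol r s ((hOmem r).1 hr) ((hOmem s).1 hs) hne h
  have e : Fin m ≃ {x // x ∈ O} :=
    (Fintype.equivFinOfCardEq (by rw [Fintype.card_coe, hOcard])).symm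
  set fr : Fin m → Fin n := fun t => ((e t).1).1 with hfr
  set fc : Fin m → Fin n := fun t => ((e t).1).2 with hfc
  have hfrInj : Function.Injective fr := by
    intro a b h
    exact e.injective (Subtype.ext (fstInj _ _ (e a).2 (e b).2 h))
  have hfcInj : Function.Injective fc := by
    intro a b h
    exact e.injective (Subtype.ext (sndInj _ _ (e a).2 (e b).2 h))
  refine ⟨extendPerm hmn fr hfrInj, extendPerm hmn fc hfcInj, ?_⟩
  intro i j
  by_cases hi : (i : ℕ) < m
  · by_cases hj : (j : ℕ) < m
    · rw [show (extendPerm hmn fr hfrInj) i = fr ⟨i.1, hi⟩ from extendPerm_lt hmn fr hfrInj hi,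
        show (extendPerm hmn fc hfcInj) j = fc ⟨j.1, hj⟩ from extendPerm_lt hmn fc hfcInj hj]
      by_cases hij : i = j
      · subst hij
        have hmemO : ((e ⟨i.1, hi⟩).1 : Fin n × Fin n) ∈ O := (e ⟨i.1, hi⟩).2
        have : A (fr ⟨i.1, hi⟩) (fc ⟨i.1, hi⟩) = true := by
          rw [hfr, hfc]; exact (hOmem _).1 hmemO
        rw [this]
        simp [diagMatrix, hi, hm]
        omega
      · have hne : A (fr ⟨i.1, hi⟩) (fc ⟨j.1, hj⟩) ≠ true := by
          intro habs
          have hmemO : (fr ⟨i.1, hi⟩, fc ⟨j.1, hj⟩) ∈ O := (hOmem _).2 habs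
          have h1 : (fr ⟨i.1, hi⟩, fc ⟨j.1, hj⟩) = (e ⟨i.1, hi⟩).1 :=
            fstInj _ _ hmemO (e ⟨i.1, hi⟩).2 rfl
          have h2 : (fr ⟨i.1, hi⟩, fc ⟨j.1, hj⟩) = (e ⟨j.1, hj⟩).1 :=
            sndInj _ _ hmemO (e ⟨j.1, hj⟩).2 rfl
          have heq : (⟨i.1, hi⟩ : Fin m) = ⟨j.1, hj⟩ :=
            e.injective (Subtype.ext (h1.symm.trans h2))
          have hval := congrArg Fin.val heq
          exact hij (Fin.ext hval)
        have : A (fr ⟨i.1, hi⟩) (fc ⟨j.1, hj⟩) = false := by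
          revert hne; cases (A (fr ⟨i.1, hi⟩) (fc ⟨j.1, hj⟩)) <;> simp
        rw [this]
        simp [diagMatrix, hij, hm]
    · have hnot := extendPerm_not_mem hmn fc hfcInj hj
      have hfalse : A (extendPerm hmn fr hfrInj i) (extendPerm hmn fc hfcInj j) = false := by
        by_contra habs
        have htrue : A (extendPerm hmn fr hfrInj i) (extendPerm hmn fc hfcInj j) = true := by
          revert habs; cases (A (extendPerm hmn fr hfrInj i) (extendPerm hmn fc hfcInj j)) <;> simp
        have hmemO : (extendPerm hmn fr hfrInj i, extendPerm hmn fc hfcInj j) ∈ O :=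
          (hOmem _).2 htrue
        refine hnot ⟨e.symm ⟨_, hmemO⟩, ?_⟩
        show ((e (e.symm ⟨_, hmemO⟩)).1).2 = _
        rw [Equiv.apply_symm_apply]
      rw [hfalse]
      have : ¬ (i = j ∧ (i : ℕ) < 2 * (n - k) + 1) := by
        rintro ⟨rfl, h⟩; exact hj (by omega)
      simp [diagMatrix, this]
      rintro rfl; omega
  · have hnot := extendPerm_not_mem hmn fr hfrInj hi
    have hfalse : A (extendPerm hmn fr hfrInj i) (extendPerm hmn fc hfcInj j) = false := by
      by_contra habs
      have htrue : A (extendPerm hmn fr hfrInj i) (extendPerm hmn fc hfcInj j) = true := by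
        revert habs; cases (A (extendPerm hmn fr hfrInj i) (extendPerm hmn fc hfcInj j)) <;> simp
      have hmemO : (extendPerm hmn fr hfrInj i, extendPerm hmn fc hfcInj j) ∈ O :=
        (hOmem _).2 htrue
      refine hnot ⟨e.symm ⟨_, hmemO⟩, ?_⟩
      show ((e (e.symm ⟨_, hmemO⟩)).1).1 = _
      rw [Equiv.apply_symm_apply]
    rw [hfalse]
    have : ¬ (i = j ∧ (i : ℕ) < 2 * (n - k) + 1) := by
      rintro ⟨rfl, h⟩; exact hi (by omega)
    simp [diagMatrix, this]
    rintro rfl; omega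
end

section
/- Let k ≥ 2 and n = 2k. If A is an n×n matrix with entries in {0,1} such that every k×k minor contains at least one entry equal to 1, then A has at least 3k+1 entries equal to 1. -/
theorem half_case_lower_bound (k : ℕ) (hk : 2 ≤ k)
    (A : Fin (2 * k) → Fin (2 * k) → Bool) (hA : MinorHit (2 * k) k A) :
    3 * k + 1 ≤ onesCount A := by
  classical
  set d : Fin (2*k) → ℕ := fun i => (Finset.univ.filter fun j => A i j = true).card with hd
  have hones : onesCount A = ∑ i : Fin (2*k), d i := by
    rw [onesCount, Finset.card_filter, Fintype.sum_prod_type]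
    exact Finset.sum_congr rfl fun i _ => (Finset.card_filter _ _).symm
  -- key: for any S with card k, k+1 ≤ ∑_{i∈S} d i
  have key : ∀ S : Finset (Fin (2*k)), S.card = k → k + 1 ≤ ∑ i ∈ S, d i := by
    intro S hS
    by_contra h
    push_neg at h
    have hsum : ∑ i ∈ S, d i ≤ k := by omega
    set N := S.biUnion (fun i => Finset.univ.filter fun j => A i j = true) with hN
    have hNcard : N.card ≤ k := le_trans Finset.card_biUnion_le hsum
    have hcompl : k ≤ Nᶜ.card := by
      have := Finset.card_compl N
      simp only [Fintype.card_fin] at this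
      omega
    obtain ⟨T, hTsub, hT⟩ := Finset.exists_subset_card_eq hcompl
    obtain ⟨i, hi, j, hj, hij⟩ := hA S T hS hT
    have hjN : j ∈ N := Finset.mem_biUnion.mpr ⟨i, hi, by simp [hij]⟩
    have := hTsub hj
    simp [Finset.mem_compl] at this
    exact this hjN
  -- minimizer S
  have hne : (Finset.univ.powersetCard k : Finset (Finset (Fin (2*k)))).Nonempty := by
    have hkle : k ≤ (Finset.univ : Finset (Fin (2*k))).card := by
      simp; omega
    obtain ⟨S, hSsub, hScard⟩ := Finset.exists_subset_card_eq hkle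
    exact ⟨S, Finset.mem_powersetCard.mpr ⟨hSsub, hScard⟩⟩
  obtain ⟨S, hSmem, hSmin⟩ := Finset.exists_min_image _ (fun S => ∑ i ∈ S, d i) hne
  have hScard : S.card = k := (Finset.mem_powersetCard.mp hSmem).2
  have h1 : k + 1 ≤ ∑ i ∈ S, d i := key S hScard
  obtain ⟨i0, hi0, hdi0⟩ : ∃ i ∈ S, 2 ≤ d i := by
    by_contra h
    push_neg at h
    have : ∑ i ∈ S, d i ≤ ∑ i ∈ S, 1 := Finset.sum_le_sum (fun i hi => by
      have := h i hi; omega)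
    simp [hScard] at this
    omega
  have h2 : ∀ j, j ∉ S → 2 ≤ d j := by
    intro j hj
    set S' := insert j (S.erase i0) with hS'
    have hjne : j ∉ S.erase i0 := fun hc => hj (Finset.mem_of_mem_erase hc)
    have hcard' : S'.card = k := by
      rw [hS', Finset.card_insert_of_notMem hjne, Finset.card_erase_of_mem hi0, hScard]
      omega
    have hmem' : S' ∈ Finset.univ.powersetCard k :=
      Finset.mem_powersetCard.mpr ⟨Finset.subset_univ _, hcard'⟩
    have hle := hSmin S' hmem'
    have hsumS' : ∑ i ∈ S', d i = d j + ∑ i ∈ S.erase i0, d i := by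
      rw [hS', Finset.sum_insert hjne]
    have hsumS : ∑ i ∈ S, d i = d i0 + ∑ i ∈ S.erase i0, d i :=
      (Finset.add_sum_erase _ _ hi0).symm
    simp only [hsumS', hsumS] at hle ⊢
    omega
  have hcomplS : Sᶜ.card = k := by
    have := Finset.card_compl S
    simp only [Fintype.card_fin, hScard] at this
    omega
  have h3 : 2 * k ≤ ∑ j ∈ Sᶜ, d j := by
    calc 2 * k = ∑ _j ∈ Sᶜ, 2 := by rw [Finset.sum_const, hcomplS]; ring
    _ ≤ ∑ j ∈ Sᶜ, d j := Finset.sum_le_sum (fun j hj => h2 j (Finset.mem_compl.mp hj))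
  have htotal : ∑ i : Fin (2*k), d i = ∑ i ∈ S, d i + ∑ i ∈ Sᶜ, d i :=
    (Finset.sum_add_sum_compl S d).symm
  omega
end

section
/- Let k ≥ 2 and n = 2k. There exists an n×n {0,1}-matrix with exactly 3k+1 ones such that every k×k minor contains at least one 1. It can be taken as the block-diagonal matrix with the (k-1)×(k-1) identity in the top-left and the (k+1)×(k+1) matrix B in the bottom-right, where B has 1's exactly at positions (1,1),(1,2),(k+1,k),(k+1,k+1), and (j,j-1),(j,j+1) for 2 ≤ j ≤ k. -/
/-- Block-diagonal matrix: identity `I_{k-1}` in the top-left, and in the bottom-right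
the `(k+1)×(k+1)` block `B` with 1's exactly at (0-indexed) positions
`(0,0),(0,1),(k,k-1),(k,k)` and `(r,r-1),(r,r+1)` for `1 ≤ r ≤ k-1`. -/
def blockMatrix (k : ℕ) : Fin (2 * k) → Fin (2 * k) → Bool :=
  fun i j =>
    decide ((i.val < k - 1 ∧ i = j) ∨
      (k - 1 ≤ i.val ∧ k - 1 ≤ j.val ∧
        ((i.val - (k - 1)) + 1 = j.val - (k - 1) ∨
         (j.val - (k - 1)) + 1 = i.val - (k - 1) ∨
         (i.val = k - 1 ∧ j.val = k - 1) ∨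
         (i.val = 2 * k - 1 ∧ j.val = 2 * k - 1))))

section Aux

open Finset


def cov (k : ℕ) (T : Finset ℕ) : Finset ℕ :=
  (Finset.range (k+1)).filter (fun c =>
    (1 ≤ c ∧ c - 1 ∈ T) ∨ (c + 1 ≤ k ∧ c + 1 ∈ T) ∨ (c = 0 ∧ 0 ∈ T) ∨ (c = k ∧ k ∈ T))

lemma cov_mono (k : ℕ) {T T' : Finset ℕ} (h : T ⊆ T') : cov k T ⊆ cov k T' := by
  intro c hc
  simp only [cov, mem_filter, mem_range] at hc ⊢
  refine ⟨hc.1, ?_⟩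
  rcases hc.2 with ⟨h1, h2⟩ | ⟨h1, h2⟩ | ⟨h1, h2⟩ | ⟨h1, h2⟩
  · exact Or.inl ⟨h1, h h2⟩
  · exact Or.inr (Or.inl ⟨h1, h h2⟩)
  · exact Or.inr (Or.inr (Or.inl ⟨h1, h h2⟩))
  · exact Or.inr (Or.inr (Or.inr ⟨h1, h h2⟩))

lemma mem_cov_succ {k t : ℕ} {T : Finset ℕ} (ht : t ∈ T) (htk : t < k) : t + 1 ∈ cov k T := by
  simp only [cov, mem_filter, mem_range]
  exact ⟨by omega, Or.inl ⟨by omega, by simpa using ht⟩⟩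

lemma mem_cov_pred {k t : ℕ} {T : Finset ℕ} (ht : t ∈ T) (htk : t ≤ k) (h1 : 1 ≤ t) :
    t - 1 ∈ cov k T := by
  simp only [cov, mem_filter, mem_range]
  exact ⟨by omega, Or.inr (Or.inl ⟨by omega, by rwa [Nat.sub_add_cancel h1]⟩)⟩

lemma mem_cov_zero {k : ℕ} {T : Finset ℕ} (ht : 0 ∈ T) : 0 ∈ cov k T := by
  simp only [cov, mem_filter, mem_range]
  exact ⟨by omega, Or.inr (Or.inr (Or.inl ⟨trivial, ht⟩))⟩

lemma mem_cov_k {k : ℕ} {T : Finset ℕ} (ht : k ∈ T) : k ∈ cov k T := by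
  simp only [cov, mem_filter, mem_range]
  exact ⟨by omega, Or.inr (Or.inr (Or.inr ⟨trivial, ht⟩))⟩

lemma covA (k : ℕ) : ∀ T : Finset ℕ, ∀ hne : T.Nonempty, (∀ t ∈ T, t < k) →
    T.card + 1 ≤ ((cov k T).filter (· ≤ T.max' hne + 1)).card := by
  intro T
  induction T using Finset.strongInductionOn with
  | _ T ih =>
    intro hne hlt
    set M := T.max' hne with hM
    have hMT : M ∈ T := T.max'_mem hne
    have hMk : M < k := hlt M hMT
    by_cases hT' : (T.erase M).Nonempty
    · -- inductive step
      set T' := T.erase M with hT'def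
      have hsub : T' ⊂ T := Finset.erase_ssubset hMT
      set M' := T'.max' hT' with hM'
      have hM'T : M' ∈ T := (Finset.mem_erase.mp (T'.max'_mem hT')).2
      have hM'M : M' < M := lt_of_le_of_ne (T.le_max' M' hM'T)
        (Finset.mem_erase.mp (T'.max'_mem hT')).1
      have ihT' := ih T' hsub hT' (fun t ht => hlt t (Finset.mem_erase.mp ht).2)
      rw [← hM'] at ihT'
      have hins : insert (M+1) ((cov k T').filter (· ≤ M'+1)) ⊆
          (cov k T).filter (· ≤ M+1) := by
        intro c hc
        rcases Finset.mem_insert.mp hc with rfl | hc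
        · exact Finset.mem_filter.mpr ⟨mem_cov_succ hMT hMk, by omega⟩
        · have hc' := Finset.mem_filter.mp hc
          exact Finset.mem_filter.mpr ⟨cov_mono k (Finset.erase_subset _ _) hc'.1,
            by omega⟩
      have hnotmem : (M+1) ∉ (cov k T').filter (· ≤ M'+1) := by
        intro h
        have := (Finset.mem_filter.mp h).2
        omega
      have hcard : T'.card + 1 = T.card := Finset.card_erase_add_one hMT
      calc T.card + 1 = (T'.card + 1) + 1 := by omega
        _ ≤ ((cov k T').filter (· ≤ M'+1)).card + 1 := by omega
        _ = (insert (M+1) ((cov k T').filter (· ≤ M'+1))).card :=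
            (Finset.card_insert_of_notMem hnotmem).symm
        _ ≤ _ := Finset.card_le_card hins
    · -- base case : T = {M}
      have hTM : T = {M} := by
        apply Finset.eq_singleton_iff_unique_mem.mpr
        refine ⟨hMT, fun x hx => ?_⟩
        by_contra hx'
        exact hT' ⟨x, Finset.mem_erase.mpr ⟨hx', hx⟩⟩
      have hc1 : T.card = 1 := by rw [hTM]; simp
      have hmem1 : M + 1 ∈ (cov k T).filter (· ≤ M+1) :=
        Finset.mem_filter.mpr ⟨mem_cov_succ hMT hMk, by omega⟩
      have hmem2 : M - 1 ∈ (cov k T).filter (· ≤ M+1) := by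
        refine Finset.mem_filter.mpr ⟨?_, by omega⟩
        rcases Nat.eq_zero_or_pos M with h0 | h1
        · rw [h0]; exact mem_cov_zero (h0 ▸ hMT)
        · exact mem_cov_pred hMT (by omega) h1
      have hpair : ({M - 1, M + 1} : Finset ℕ) ⊆ (cov k T).filter (· ≤ M+1) := by
        intro x hx
        rcases Finset.mem_insert.mp hx with rfl | hx
        · exact hmem2
        · rwa [Finset.mem_singleton.mp hx]
      have : ({M - 1, M + 1} : Finset ℕ).card = 2 := Finset.card_pair (by omega)
      have := Finset.card_le_card hpair
      omega

lemma covB (k : ℕ) : ∀ T : Finset ℕ, ∀ hne : T.Nonempty, (∀ t ∈ T, t ≤ k) →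
    (∀ t ∈ T, 0 < t) →
    T.card + 1 ≤ ((cov k T).filter (fun c => T.min' hne ≤ c + 1)).card := by
  intro T
  induction T using Finset.strongInductionOn with
  | _ T ih =>
    intro hne hle hpos
    set m := T.min' hne with hm
    have hmT : m ∈ T := T.min'_mem hne
    have hmk : m ≤ k := hle m hmT
    have hm1 : 1 ≤ m := hpos m hmT
    by_cases hT' : (T.erase m).Nonempty
    · set T' := T.erase m with hT'def
      have hsub : T' ⊂ T := Finset.erase_ssubset hmT
      set m' := T'.min' hT' with hm'
      have hm'T : m' ∈ T := (Finset.mem_erase.mp (T'.min'_mem hT')).2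
      have hmm' : m < m' := lt_of_le_of_ne (T.min'_le m' hm'T)
        (Ne.symm (Finset.mem_erase.mp (T'.min'_mem hT')).1)
      have ihT' := ih T' hsub hT' (fun t ht => hle t (Finset.mem_erase.mp ht).2)
        (fun t ht => hpos t (Finset.mem_erase.mp ht).2)
      rw [← hm'] at ihT'
      have hins : insert (m-1) ((cov k T').filter (fun c => m' ≤ c + 1)) ⊆
          (cov k T).filter (fun c => m ≤ c + 1) := by
        intro c hc
        rcases Finset.mem_insert.mp hc with rfl | hc
        · exact Finset.mem_filter.mpr ⟨mem_cov_pred hmT hmk hm1, by omega⟩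
        · have hc' := Finset.mem_filter.mp hc
          exact Finset.mem_filter.mpr ⟨cov_mono k (Finset.erase_subset _ _) hc'.1,
            by omega⟩
      have hnotmem : (m-1) ∉ (cov k T').filter (fun c => m' ≤ c + 1) := by
        intro h
        have := (Finset.mem_filter.mp h).2
        omega
      have hcard : T'.card + 1 = T.card := Finset.card_erase_add_one hmT
      calc T.card + 1 = (T'.card + 1) + 1 := by omega
        _ ≤ ((cov k T').filter (fun c => m' ≤ c + 1)).card + 1 := by omega
        _ = (insert (m-1) ((cov k T').filter (fun c => m' ≤ c + 1))).card :=
            (Finset.card_insert_of_notMem hnotmem).symm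
        _ ≤ _ := Finset.card_le_card hins
    · have hTm : T = {m} := by
        apply Finset.eq_singleton_iff_unique_mem.mpr
        refine ⟨hmT, fun x hx => ?_⟩
        by_contra hx'
        exact hT' ⟨x, Finset.mem_erase.mpr ⟨hx', hx⟩⟩
      have hc1 : T.card = 1 := by rw [hTm]; simp
      have hmem2 : m - 1 ∈ (cov k T).filter (fun c => m ≤ c + 1) :=
        Finset.mem_filter.mpr ⟨mem_cov_pred hmT hmk hm1, by omega⟩
      have hmem1 : min (m+1) k ∈ (cov k T).filter (fun c => m ≤ c + 1) := by
        refine Finset.mem_filter.mpr ⟨?_, by omega⟩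
        rcases lt_or_ge m k with h | h
        · rw [min_eq_left (by omega)]; exact mem_cov_succ hmT h
        · have : m = k := le_antisymm hmk h
          rw [min_eq_right (by omega)]; exact mem_cov_k (this ▸ hmT)
      have hpair : ({m - 1, min (m+1) k} : Finset ℕ) ⊆
          (cov k T).filter (fun c => m ≤ c + 1) := by
        intro x hx
        rcases Finset.mem_insert.mp hx with rfl | hx
        · exact hmem2
        · rwa [Finset.mem_singleton.mp hx]
      have : ({m - 1, min (m+1) k} : Finset ℕ).card = 2 := Finset.card_pair (by omega)
      have := Finset.card_le_card hpair
      omega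

lemma covC (k : ℕ) (T : Finset ℕ) (hne : T.Nonempty) (hsub : ∀ t ∈ T, t ≤ k)
    (hcard : T.card ≤ k) : T.card + 1 ≤ (cov k T).card := by
  by_cases hA : ∀ t ∈ T, t < k
  · calc T.card + 1 ≤ ((cov k T).filter (· ≤ T.max' hne + 1)).card := covA k T hne hA
      _ ≤ (cov k T).card := Finset.card_le_card (Finset.filter_subset _ _)
  · by_cases hB : ∀ t ∈ T, 0 < t
    · calc T.card + 1 ≤ ((cov k T).filter (fun c => T.min' hne ≤ c + 1)).card :=
          covB k T hne hsub hB
        _ ≤ (cov k T).card := Finset.card_le_card (Finset.filter_subset _ _)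
    · -- 0 ∈ T and k ∈ T
      push_neg at hA hB
      obtain ⟨tk, htk, htk2⟩ := hA
      obtain ⟨t0, ht0, ht02⟩ := hB
      have htkk : tk = k := by have := hsub tk htk; omega
      have hkT : k ∈ T := htkk ▸ htk
      have h0T : (0:ℕ) ∈ T := by have : t0 = 0 := by omega
                                 rwa [this] at ht0
      -- find a gap s ∉ T with 0 < s < k
      have hTsub : T ⊆ Finset.range (k+1) := fun t ht => Finset.mem_range.mpr (by
        have := hsub t ht; omega)
      have hnss : ¬ (Finset.range (k+1) ⊆ T) := by
        intro h
        have := Finset.card_le_card h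
        rw [Finset.card_range] at this
        omega
      obtain ⟨s, hs1, hs2⟩ := Finset.not_subset.mp hnss
      have hs1' : s ≤ k := by have := Finset.mem_range.mp hs1; omega
      have hs0 : 0 < s := by rcases Nat.eq_zero_or_pos s with h | h
                             · exact absurd (h ▸ h0T) (h ▸ hs2)
                             · exact h
      have hsk : s < k := by rcases lt_or_ge s k with h | h
                             · exact h
                             · have : s = k := by omega
                               exact absurd (this ▸ hkT) hs2
      set T₁ := T.filter (· < s) with hT1
      set T₂ := T.filter (s < ·) with hT2
      have hne1 : T₁.Nonempty := ⟨0, Finset.mem_filter.mpr ⟨h0T, by omega⟩⟩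
      have hne2 : T₂.Nonempty := ⟨k, Finset.mem_filter.mpr ⟨hkT, by omega⟩⟩
      have hcards : T₁.card + T₂.card = T.card := by
        rw [hT1, hT2]
        rw [← Finset.card_union_of_disjoint]
        · congr 1
          ext t
          simp only [Finset.mem_union, Finset.mem_filter]
          constructor
          · rintro (⟨h, _⟩ | ⟨h, _⟩) <;> exact h
          · intro ht
            rcases lt_trichotomy t s with h | h | h
            · exact Or.inl ⟨ht, h⟩
            · exact absurd (h ▸ ht) hs2
            · exact Or.inr ⟨ht, h⟩
        · rw [Finset.disjoint_filter]
          intro x _ h1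
          omega
      -- apply covA to T₁
      have hA1 : T₁.card + 1 ≤ ((cov k T₁).filter (· ≤ T₁.max' hne1 + 1)).card :=
        covA k T₁ hne1 (fun t ht => by
          have := (Finset.mem_filter.mp ht).2
          omega)
      have hB2 : T₂.card + 1 ≤ ((cov k T₂).filter (fun c => T₂.min' hne2 ≤ c + 1)).card :=
        covB k T₂ hne2 (fun t ht => hsub t (Finset.mem_filter.mp ht).1)
          (fun t ht => by have := (Finset.mem_filter.mp ht).2; omega)
      set A₁ := (cov k T₁).filter (· ≤ T₁.max' hne1 + 1) with hA₁
      set A₂ := (cov k T₂).filter (fun c => T₂.min' hne2 ≤ c + 1) with hA₂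
      have hM1 : T₁.max' hne1 < s := (Finset.mem_filter.mp (T₁.max'_mem hne1)).2
      have hm2 : s < T₂.min' hne2 := (Finset.mem_filter.mp (T₂.min'_mem hne2)).2
      have hunion : A₁ ∪ A₂ ⊆ cov k T := by
        intro c hc
        rcases Finset.mem_union.mp hc with hc | hc
        · exact cov_mono k (Finset.filter_subset _ _) (Finset.mem_filter.mp hc).1
        · exact cov_mono k (Finset.filter_subset _ _) (Finset.mem_filter.mp hc).1
      have hinter : A₁ ∩ A₂ ⊆ {s} := by
        intro c hc
        have h1 := (Finset.mem_filter.mp (Finset.mem_inter.mp hc).1).2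
        have h2 := (Finset.mem_filter.mp (Finset.mem_inter.mp hc).2).2
        simp only [Finset.mem_singleton]
        omega
      have hinter' : (A₁ ∩ A₂).card ≤ 1 := by
        calc (A₁ ∩ A₂).card ≤ ({s} : Finset ℕ).card := Finset.card_le_card hinter
          _ = 1 := Finset.card_singleton s
      have hcu : (A₁ ∪ A₂).card + (A₁ ∩ A₂).card = A₁.card + A₂.card :=
        Finset.card_union_add_card_inter A₁ A₂
      have := Finset.card_le_card hunion
      omega


lemma onesCount_eq (k : ℕ) (hk : 2 ≤ k) : onesCount (blockMatrix k) = 3 * k + 1 := by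
  classical
  set E1 : Finset (ℕ × ℕ) := (Finset.range (k-1)).image (fun t => (t, t)) with hE1
  set E2 : Finset (ℕ × ℕ) := (Finset.range k).image (fun t => (k-1+t, k+t)) with hE2
  set E3 : Finset (ℕ × ℕ) := (Finset.range k).image (fun t => (k+t, k-1+t)) with hE3
  set E4 : Finset (ℕ × ℕ) := {(k-1, k-1), (2*k-1, 2*k-1)} with hE4
  set F := Finset.univ.filter
    (fun p : Fin (2*k) × Fin (2*k) => blockMatrix k p.1 p.2 = true) with hF
  have himg : F.image (fun p => (p.1.val, p.2.val)) = E1 ∪ E2 ∪ E3 ∪ E4 := by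
    ext ⟨a, b⟩
    constructor
    · intro h
      obtain ⟨p, hp, hpe⟩ := Finset.mem_image.mp h
      simp only [Prod.mk.injEq] at hpe; obtain ⟨ha, hb⟩ := hpe
      have hcond : _ := (Finset.mem_filter.mp hp).2
      simp only [blockMatrix, decide_eq_true_eq, Fin.ext_iff] at hcond
      have h1 := p.1.isLt
      have h2 := p.2.isLt
      rcases hcond with ⟨hlt, heq⟩ | ⟨hi, hj, hd⟩
      · refine Finset.mem_union.mpr (Or.inl (Finset.mem_union.mpr (Or.inl
          (Finset.mem_union.mpr (Or.inl (Finset.mem_image.mpr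
            ⟨a, Finset.mem_range.mpr (by omega), by simp only [Prod.mk.injEq]; refine ⟨?_, ?_⟩ <;> first | trivial | omega⟩))))))
      · rcases hd with hd | hd | hd | hd
        · refine Finset.mem_union.mpr (Or.inl (Finset.mem_union.mpr (Or.inl
            (Finset.mem_union.mpr (Or.inr (Finset.mem_image.mpr
              ⟨a - (k-1), Finset.mem_range.mpr (by omega),
                by simp only [Prod.mk.injEq]; refine ⟨?_, ?_⟩ <;> first | trivial | omega⟩))))))
        · refine Finset.mem_union.mpr (Or.inl (Finset.mem_union.mpr (Or.inr
            (Finset.mem_image.mpr ⟨b - (k-1), Finset.mem_range.mpr (by omega),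
              by simp only [Prod.mk.injEq]; refine ⟨?_, ?_⟩ <;> first | trivial | omega⟩))))
        · refine Finset.mem_union.mpr (Or.inr ?_)
          simp only [hE4, Finset.mem_insert, Finset.mem_singleton, Prod.mk.injEq]
          left; omega
        · refine Finset.mem_union.mpr (Or.inr ?_)
          simp only [hE4, Finset.mem_insert, Finset.mem_singleton, Prod.mk.injEq]
          right; omega
    · intro h
      have hmk : ∀ (x y : ℕ) (hx : x < 2*k) (hy : y < 2*k),
          (blockMatrix k ⟨x, hx⟩ ⟨y, hy⟩ = true) → (a = x ∧ b = y) →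
          (a, b) ∈ F.image (fun p => (p.1.val, p.2.val)) := by
        rintro x y hx hy hbm ⟨rfl, rfl⟩
        exact Finset.mem_image.mpr ⟨(⟨a, hx⟩, ⟨b, hy⟩),
          Finset.mem_filter.mpr ⟨Finset.mem_univ _, hbm⟩, rfl⟩
      rcases Finset.mem_union.mp h with h | h4
      · rcases Finset.mem_union.mp h with h | h3
        · rcases Finset.mem_union.mp h with h1 | h2
          · obtain ⟨t, ht, hte⟩ := Finset.mem_image.mp h1
            simp only [Prod.mk.injEq] at hte; obtain ⟨hta, htb⟩ := hte
            have ht' := Finset.mem_range.mp ht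
            refine hmk t t (by omega) (by omega) ?_ (by omega)
            simp only [blockMatrix, decide_eq_true_eq, Fin.ext_iff, and_true, true_and, or_true, true_or, and_self] <;> omega
          · obtain ⟨t, ht, hte⟩ := Finset.mem_image.mp h2
            simp only [Prod.mk.injEq] at hte; obtain ⟨hta, htb⟩ := hte
            have ht' := Finset.mem_range.mp ht
            refine hmk (k-1+t) (k+t) (by omega) (by omega) ?_ (by omega)
            simp only [blockMatrix, decide_eq_true_eq, Fin.ext_iff, and_true, true_and, or_true, true_or, and_self] <;> omega
        · obtain ⟨t, ht, hte⟩ := Finset.mem_image.mp h3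
          simp only [Prod.mk.injEq] at hte; obtain ⟨hta, htb⟩ := hte
          have ht' := Finset.mem_range.mp ht
          refine hmk (k+t) (k-1+t) (by omega) (by omega) ?_ (by omega)
          simp only [blockMatrix, decide_eq_true_eq, Fin.ext_iff, and_true, true_and, or_true, true_or, and_self] <;> omega
      · simp only [hE4, Finset.mem_insert, Finset.mem_singleton, Prod.mk.injEq] at h4
        rcases h4 with ⟨ha, hb⟩ | ⟨ha, hb⟩
        · refine hmk (k-1) (k-1) (by omega) (by omega) ?_ (by omega)
          simp only [blockMatrix, decide_eq_true_eq, Fin.ext_iff, and_true, true_and, or_true, true_or, and_self] <;> omega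
        · refine hmk (2*k-1) (2*k-1) (by omega) (by omega) ?_ (by omega)
          simp only [blockMatrix, decide_eq_true_eq, Fin.ext_iff, and_true, true_and, or_true, true_or, and_self] <;> omega
  have hinj : Set.InjOn (fun p : Fin (2*k) × Fin (2*k) => (p.1.val, p.2.val)) F := by
    intro p _ q _ hpq
    simp only [Prod.mk.injEq] at hpq; obtain ⟨h1, h2⟩ := hpq
    exact Prod.ext (Fin.ext h1) (Fin.ext h2)
  have hcard : onesCount (blockMatrix k) = (E1 ∪ E2 ∪ E3 ∪ E4).card := by
    rw [onesCount, ← himg, Finset.card_image_of_injOn hinj]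
  rw [hcard]
  -- disjointness
  have d12 : Disjoint E1 E2 := by
    rw [Finset.disjoint_left]
    rintro ⟨a, b⟩ h1 h2
    obtain ⟨t, ht, hte⟩ := Finset.mem_image.mp h1
    obtain ⟨s, hs, hse⟩ := Finset.mem_image.mp h2
    simp only [Prod.mk.injEq] at hte; obtain ⟨h1a, h1b⟩ := hte
    simp only [Prod.mk.injEq] at hse; obtain ⟨h2a, h2b⟩ := hse
    have := Finset.mem_range.mp ht
    have := Finset.mem_range.mp hs
    omega
  have d123 : Disjoint (E1 ∪ E2) E3 := by
    rw [Finset.disjoint_left]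
    rintro ⟨a, b⟩ h1 h3
    obtain ⟨s, hs, hse⟩ := Finset.mem_image.mp h3
    simp only [Prod.mk.injEq] at hse; obtain ⟨h3a, h3b⟩ := hse
    have hs' := Finset.mem_range.mp hs
    rcases Finset.mem_union.mp h1 with h | h
    · obtain ⟨t, ht, hte⟩ := Finset.mem_image.mp h
      simp only [Prod.mk.injEq] at hte; obtain ⟨h1a, h1b⟩ := hte
      have := Finset.mem_range.mp ht
      omega
    · obtain ⟨t, ht, hte⟩ := Finset.mem_image.mp h
      simp only [Prod.mk.injEq] at hte; obtain ⟨h1a, h1b⟩ := hte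
      have := Finset.mem_range.mp ht
      omega
  have d1234 : Disjoint (E1 ∪ E2 ∪ E3) E4 := by
    rw [Finset.disjoint_left]
    rintro ⟨a, b⟩ h1 h4
    simp only [hE4, Finset.mem_insert, Finset.mem_singleton, Prod.mk.injEq] at h4
    rcases Finset.mem_union.mp h1 with h | h
    · rcases Finset.mem_union.mp h with h | h
      · obtain ⟨t, ht, hte⟩ := Finset.mem_image.mp h
        simp only [Prod.mk.injEq] at hte; obtain ⟨h1a, h1b⟩ := hte
        have := Finset.mem_range.mp ht
        omega
      · obtain ⟨t, ht, hte⟩ := Finset.mem_image.mp h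
        simp only [Prod.mk.injEq] at hte; obtain ⟨h1a, h1b⟩ := hte
        have := Finset.mem_range.mp ht
        omega
    · obtain ⟨t, ht, hte⟩ := Finset.mem_image.mp h
      simp only [Prod.mk.injEq] at hte; obtain ⟨h1a, h1b⟩ := hte
      have := Finset.mem_range.mp ht
      omega
  have c1 : E1.card = k - 1 := by
    rw [hE1, Finset.card_image_of_injOn, Finset.card_range]
    intro x _ y _ hxy
    simp only [Prod.mk.injEq] at hxy; obtain ⟨h, _⟩ := hxy
    exact h
  have c2 : E2.card = k := by
    rw [hE2, Finset.card_image_of_injOn, Finset.card_range]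
    intro x _ y _ hxy
    simp only [Prod.mk.injEq] at hxy; obtain ⟨h, _⟩ := hxy
    omega
  have c3 : E3.card = k := by
    rw [hE3, Finset.card_image_of_injOn, Finset.card_range]
    intro x _ y _ hxy
    simp only [Prod.mk.injEq] at hxy; obtain ⟨h, _⟩ := hxy
    omega
  have c4 : E4.card = 2 := by
    rw [hE4]
    rw [Finset.card_insert_of_notMem (by
      simp only [Finset.mem_singleton, Prod.mk.injEq]; omega), Finset.card_singleton]
  rw [Finset.card_union_of_disjoint d1234, Finset.card_union_of_disjoint d123,
    Finset.card_union_of_disjoint d12, c1, c2, c3, c4]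
  omega


lemma minorHit (k : ℕ) (hk : 2 ≤ k) : MinorHit (2 * k) k (blockMatrix k) := by
  intro S T hS hT
  by_contra hcon
  push_neg at hcon
  set C : Finset (Fin (2*k)) :=
    univ.filter (fun j => ∃ i ∈ S, blockMatrix k i j = true) with hC
  have hdisj : Disjoint C T := by
    rw [Finset.disjoint_left]
    intro j hj hjT
    obtain ⟨i, hiS, hij⟩ := (Finset.mem_filter.mp hj).2
    exact hcon i hiS j hjT hij
  have hCk : C.card ≤ k := by
    have h1 : (C ∪ T).card = C.card + T.card := Finset.card_union_of_disjoint hdisj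
    have h2 : (C ∪ T).card ≤ Fintype.card (Fin (2*k)) := Finset.card_le_univ _
    rw [Fintype.card_fin] at h2
    omega
  -- split S into top and bottom
  set Stop := S.filter (fun i => i.val < k - 1) with hStop
  set Sbot := S.filter (fun i => ¬ i.val < k - 1) with hSbot
  have hsplit : Stop.card + Sbot.card = S.card :=
    Finset.card_filter_add_card_filter_not _
  have hStopC : Stop ⊆ C := by
    intro i hi
    have h1 : i.val < k - 1 := (Finset.mem_filter.mp hi).2
    refine Finset.mem_filter.mpr ⟨Finset.mem_univ _, ⟨i, (Finset.mem_filter.mp hi).1, ?_⟩⟩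
    simp only [blockMatrix, decide_eq_true_eq]
    exact Or.inl ⟨h1, trivial⟩
  have hStopcard : Stop.card ≤ k - 1 := by
    have : Stop.image (fun i => i.val) ⊆ Finset.range (k-1) := by
      intro x hx
      obtain ⟨i, hi, rfl⟩ := Finset.mem_image.mp hx
      exact Finset.mem_range.mpr (Finset.mem_filter.mp hi).2
    have h1 := Finset.card_le_card this
    rw [Finset.card_range] at h1
    rwa [Finset.card_image_of_injective _ Fin.val_injective] at h1
  -- bottom rows as a subset of ℕ
  set Tb : Finset ℕ := Sbot.image (fun i => i.val - (k-1)) with hTb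
  have hTbcard : Tb.card = Sbot.card := by
    apply Finset.card_image_of_injOn
    intro i hi j hj hij
    have h1 : ¬ i.val < k - 1 := (Finset.mem_filter.mp hi).2
    have h2 : ¬ j.val < k - 1 := (Finset.mem_filter.mp hj).2
    have hij' : i.val - (k-1) = j.val - (k-1) := hij
    have : i.val = j.val := by omega
    exact Fin.ext this
  have hTbsub : ∀ t ∈ Tb, t ≤ k := by
    intro t ht
    obtain ⟨i, _, rfl⟩ := Finset.mem_image.mp ht
    have := i.isLt
    omega
  have hTbne : Tb.Nonempty := by
    rw [← Finset.card_pos, hTbcard]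
    omega
  have hTble : Tb.card ≤ k := by rw [hTbcard]; omega
  have hcov := covC k Tb hTbne hTbsub hTble
  -- map covered columns into C
  set f : ℕ → Fin (2*k) := fun c => ⟨min (c + (k-1)) (2*k - 1), by omega⟩ with hf
  set G := (cov k Tb).image f with hG
  have hGcard : G.card = (cov k Tb).card := by
    apply Finset.card_image_of_injOn
    intro c hc c' hc' hcc
    have h1 : c ≤ k := by
      have := (Finset.mem_filter.mp hc).1
      exact Nat.lt_succ_iff.mp (Finset.mem_range.mp this)
    have h2 : c' ≤ k := by
      have := (Finset.mem_filter.mp hc').1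
      exact Nat.lt_succ_iff.mp (Finset.mem_range.mp this)
    have := congrArg Fin.val hcc
    simp only [hf] at this
    omega
  have hGC : G ⊆ C := by
    intro j hj
    obtain ⟨c, hc, rfl⟩ := Finset.mem_image.mp hj
    have hcr : c ≤ k := Nat.lt_succ_iff.mp (Finset.mem_range.mp (Finset.mem_filter.mp hc).1)
    have hcd := (Finset.mem_filter.mp hc).2
    refine Finset.mem_filter.mpr ⟨Finset.mem_univ _, ?_⟩
    have key : ∀ i ∈ Sbot, ∀ t : ℕ, i.val - (k-1) = t →
        ((1 ≤ c ∧ t = c - 1) ∨ (c + 1 ≤ k ∧ t = c + 1) ∨ (c = 0 ∧ t = 0) ∨ (c = k ∧ t = k)) →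
        blockMatrix k i (f c) = true := by
      intro i hi t hit hcase
      have h1 : ¬ i.val < k - 1 := (Finset.mem_filter.mp hi).2
      have h2 := i.isLt
      simp only [blockMatrix, decide_eq_true_eq, hf, Fin.ext_iff]
      omega
    rcases hcd with ⟨h1, h2⟩ | ⟨h1, h2⟩ | ⟨h1, h2⟩ | ⟨h1, h2⟩
    · obtain ⟨i, hi, hit⟩ := Finset.mem_image.mp h2
      exact ⟨i, (Finset.mem_filter.mp hi).1, key i hi _ hit (Or.inl ⟨h1, hit ▸ rfl⟩)⟩
    · obtain ⟨i, hi, hit⟩ := Finset.mem_image.mp h2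
      exact ⟨i, (Finset.mem_filter.mp hi).1, key i hi _ hit (Or.inr (Or.inl ⟨h1, rfl⟩))⟩
    · obtain ⟨i, hi, hit⟩ := Finset.mem_image.mp h2
      exact ⟨i, (Finset.mem_filter.mp hi).1, key i hi _ hit (Or.inr (Or.inr (Or.inl ⟨h1, rfl⟩)))⟩
    · obtain ⟨i, hi, hit⟩ := Finset.mem_image.mp h2
      exact ⟨i, (Finset.mem_filter.mp hi).1, key i hi _ hit (Or.inr (Or.inr (Or.inr ⟨h1, rfl⟩)))⟩
  have hdisj2 : Disjoint Stop G := by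
    rw [Finset.disjoint_left]
    intro a ha hb
    have h1 : a.val < k - 1 := (Finset.mem_filter.mp ha).2
    obtain ⟨c, _, rfl⟩ := Finset.mem_image.mp hb
    simp only [hf] at h1
    omega
  have hsubC : Stop ∪ G ⊆ C := Finset.union_subset hStopC hGC
  have hfinal := Finset.card_le_card hsubC
  rw [Finset.card_union_of_disjoint hdisj2] at hfinal
  omega

end Aux

theorem block_matrix_realizes_minimum (k : ℕ) (hk : 2 ≤ k) :
    onesCount (blockMatrix k) = 3 * k + 1 ∧ MinorHit (2 * k) k (blockMatrix k) := ⟨onesCount_eq k hk, minorHit k hk⟩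
end

section
/- Let k ≥ 1 and n = 2k+1, and define α(k,n) as the minimum number of 1-entries in an n×n {0,1}-matrix in which every k×k minor contains at least one 1. Then α(k, 2k+1) ≤ 4k+5. -/
section Aux

lemma shift_one (m : ℕ) [NeZero m] (J : Finset (ZMod m)) (h1 : J.Nonempty) (h2 : J ≠ Finset.univ) :
    J.card + 1 ≤ (J ∪ J.image (· + 1)).card := by
  have hx : ∃ x ∈ J, x + 1 ∉ J := by
    by_contra h
    push_neg at h
    apply h2
    obtain ⟨a, ha⟩ := h1
    have key : ∀ n : ℕ, a + (n : ZMod m) ∈ J := by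
      intro n
      induction n with
      | zero => simpa using ha
      | succ n ih =>
        have := h _ ih
        push_cast
        convert this using 1
        ring
    rw [Finset.eq_univ_iff_forall]
    intro b
    have : a + (((b - a).val : ℕ) : ZMod m) = b := by
      rw [ZMod.natCast_val, ZMod.cast_id]; ring
    rw [← this]
    exact key _
  obtain ⟨x, hx1, hx2⟩ := hx
  have hsub : insert (x + 1) J ⊆ J ∪ J.image (· + 1) := by
    intro y hy
    rcases Finset.mem_insert.1 hy with rfl | hy
    · exact Finset.mem_union_right _ (Finset.mem_image.2 ⟨x, hx1, rfl⟩)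
    · exact Finset.mem_union_left _ hy
  calc J.card + 1 = (insert (x + 1) J).card := (Finset.card_insert_of_notMem hx2).symm
    _ ≤ _ := Finset.card_le_card hsub

lemma shift_two (m : ℕ) [NeZero m] (J : Finset (ZMod m)) (h1 : J.Nonempty)
    (h2 : J.card + 2 ≤ m) :
    J.card + 2 ≤ (J ∪ J.image (· + 1) ∪ J.image (· + 2)).card := by
  set K := J ∪ J.image (· + 1) with hK
  have hKsub : K ∪ K.image (· + 1) ⊆ J ∪ J.image (· + 1) ∪ J.image (· + 2) := by
    rw [hK, Finset.image_union, Finset.image_image]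
    intro y hy
    simp only [Finset.mem_union] at hy ⊢
    rcases hy with (h | h) | (h | h)
    · exact Or.inl (Or.inl h)
    · exact Or.inl (Or.inr h)
    · exact Or.inl (Or.inr h)
    · refine Or.inr ?_
      simp only [Finset.mem_image, Function.comp_apply] at h ⊢
      obtain ⟨z, hz, rfl⟩ := h
      exact ⟨z, hz, by ring⟩
  by_cases hKu : K = Finset.univ
  · have hbig : J ∪ J.image (· + 1) ∪ J.image (· + 2) = Finset.univ := by
      apply Finset.univ_subset_iff.1
      calc Finset.univ = K := hKu.symm
        _ ⊆ K ∪ K.image (· + 1) := Finset.subset_union_left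
        _ ⊆ _ := hKsub
    rw [hbig]
    simpa using h2
  · have hJu : J ≠ Finset.univ := by
      intro h
      apply hKu
      apply Finset.univ_subset_iff.1
      rw [hK, h]
      exact Finset.subset_union_left
    have s1 := shift_one m J h1 hJu
    have hKne : K.Nonempty := h1.mono (hK ▸ Finset.subset_union_left)
    have s2 := shift_one m K hKne hKu
    have hKc : J.card + 1 ≤ K.card := s1
    calc J.card + 2 ≤ K.card + 1 := by omega
      _ ≤ (K ∪ K.image (· + 1)).card := s2
      _ ≤ _ := Finset.card_le_card hKsub

/-- The column in `Fin (2k+1)` corresponding to `z` among the last `k+2` columns. -/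
def bigCol (k : ℕ) (z : ZMod (k + 2)) : Fin (2 * k + 1) :=
  ⟨(k - 1 + z.val) % (2 * k + 1), Nat.mod_lt _ (by omega)⟩

lemma bigCol_val (k : ℕ) (hk : 1 ≤ k) (z : ZMod (k + 2)) :
    (bigCol k z : ℕ) = k - 1 + z.val := by
  have := z.val_lt
  exact Nat.mod_eq_of_lt (by omega)

lemma bigCol_injective (k : ℕ) (hk : 1 ≤ k) : Function.Injective (bigCol k) := by
  intro a b h
  have h' : (bigCol k a : ℕ) = (bigCol k b : ℕ) := congrArg Fin.val h
  rw [bigCol_val k hk, bigCol_val k hk] at h'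
  exact ZMod.val_injective _ (by omega)

/-- The set of columns where row `i` has a 1. -/
def colsOf (k : ℕ) (i : Fin (2 * k + 1)) : Finset (Fin (2 * k + 1)) :=
  if (i : ℕ) < k - 1 then {i}
  else
    {bigCol k (((i : ℕ) - (k - 1) : ℕ) : ZMod (k + 2)),
     bigCol k ((((i : ℕ) - (k - 1) : ℕ) : ZMod (k + 2)) + 1),
     bigCol k ((((i : ℕ) - (k - 1) : ℕ) : ZMod (k + 2)) + 2)}

lemma colsOf_card (k : ℕ) (i : Fin (2 * k + 1)) :
    (colsOf k i).card ≤ if (i : ℕ) < k - 1 then 1 else 3 := by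
  unfold colsOf
  split
  · simp
  · refine (Finset.card_insert_le _ _).trans ?_
    have := Finset.card_insert_le
      (bigCol k ((((i : ℕ) - (k - 1) : ℕ) : ZMod (k + 2)) + 1))
      ({bigCol k ((((i : ℕ) - (k - 1) : ℕ) : ZMod (k + 2)) + 2)} : Finset _)
    simp at this ⊢
    omega

lemma colsOf_big (k : ℕ) (i : Fin (2 * k + 1)) (h : ¬ (i : ℕ) < k - 1) :
    colsOf k i = Finset.image (bigCol k)
      {(((i : ℕ) - (k - 1) : ℕ) : ZMod (k + 2)),
       ((((i : ℕ) - (k - 1) : ℕ) : ZMod (k + 2)) + 1),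
       ((((i : ℕ) - (k - 1) : ℕ) : ZMod (k + 2)) + 2)} := by
  unfold colsOf
  rw [if_neg h]
  simp [Finset.image_insert]

lemma card_small (k : ℕ) :
    (Finset.univ.filter fun i : Fin (2 * k + 1) => (i : ℕ) < k - 1).card = k - 1 := by
  have h : ∀ m ∈ Finset.range (k - 1), m < 2 * k + 1 := by
    intro m hm
    simp only [Finset.mem_range] at hm
    omega
  have : (Finset.univ.filter fun i : Fin (2 * k + 1) => (i : ℕ) < k - 1)
      = (Finset.range (k - 1)).attachFin h := by
    ext i
    simp [Finset.mem_attachFin]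
  rw [this, Finset.card_attachFin, Finset.card_range]

/-- The coverage lemma: every `k` rows cover at least `k+2` columns. -/
lemma cover_card (k : ℕ) (hk : 1 ≤ k) (S : Finset (Fin (2 * k + 1))) (hS : S.card = k) :
    k + 2 ≤ (S.biUnion (colsOf k)).card := by
  haveI : NeZero (k + 2) := ⟨by omega⟩
  set S₁ := S.filter (fun i : Fin (2 * k + 1) => (i : ℕ) < k - 1) with hS₁
  set S₂ := S.filter (fun i : Fin (2 * k + 1) => ¬ (i : ℕ) < k - 1) with hS₂
  have hst : S₁.card + S₂.card = k := by
    have h := Finset.card_filter_add_card_filter_not (s := S)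
      (fun i : Fin (2 * k + 1) => (i : ℕ) < k - 1)
    rw [hS] at h
    exact h
  have hs1 : S₁.card ≤ k - 1 := by
    have hsub : S₁ ⊆ Finset.univ.filter (fun i : Fin (2 * k + 1) => (i : ℕ) < k - 1) := by
      rw [hS₁]
      exact Finset.filter_subset_filter _ (Finset.subset_univ S)
    have := Finset.card_le_card hsub
    rwa [card_small] at this
  have ht1 : 1 ≤ S₂.card := by omega
  -- the residues of the big rows
  set r : Fin (2 * k + 1) → ZMod (k + 2) := fun i => (((i : ℕ) - (k - 1) : ℕ) : ZMod (k + 2))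
    with hr
  set J := S₂.image r with hJ
  have hJcard : J.card = S₂.card := by
    apply Finset.card_image_of_injOn
    intro a ha b hb hab
    have ha' : ¬ (a : ℕ) < k - 1 := (Finset.mem_filter.1 ha).2
    have hb' : ¬ (b : ℕ) < k - 1 := (Finset.mem_filter.1 hb).2
    have hav : ((a : ℕ) - (k - 1)) < k + 2 := by omega
    have hbv : ((b : ℕ) - (k - 1)) < k + 2 := by omega
    have : ((a : ℕ) - (k - 1)) = ((b : ℕ) - (k - 1)) := by
      have := congrArg ZMod.val hab
      rwa [hr, ZMod.val_cast_of_lt hav, ZMod.val_cast_of_lt hbv] at this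
    exact Fin.ext (by omega)
  have hJne : J.Nonempty := by
    rw [hJ]
    apply Finset.Nonempty.image
    rw [← Finset.card_pos]; omega
  have hU := shift_two (k + 2) J hJne (by omega)
  set U := J ∪ J.image (· + 1) ∪ J.image (· + 2) with hUdef
  -- the image of U under bigCol is covered by S₂
  have himg : Finset.image (bigCol k) U ⊆ S.biUnion (colsOf k) := by
    intro y hy
    obtain ⟨z, hz, rfl⟩ := Finset.mem_image.1 hy
    have : ∃ i ∈ S₂, z = r i ∨ z = r i + 1 ∨ z = r i + 2 := by
      rw [hUdef] at hz
      simp only [Finset.mem_union, Finset.mem_image, hJ] at hz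
      rcases hz with (hz | hz) | hz
      · obtain ⟨i, hi, rfl⟩ := hz
        exact ⟨i, hi, Or.inl rfl⟩
      · obtain ⟨w, hw, rfl⟩ := hz
        obtain ⟨i, hi, rfl⟩ := hw
        exact ⟨i, hi, Or.inr (Or.inl rfl)⟩
      · obtain ⟨w, hw, rfl⟩ := hz
        obtain ⟨i, hi, rfl⟩ := hw
        exact ⟨i, hi, Or.inr (Or.inr rfl)⟩
    obtain ⟨i, hi, hzi⟩ := this
    have hiS : i ∈ S := (Finset.mem_filter.1 hi).1
    have hibig : ¬ (i : ℕ) < k - 1 := (Finset.mem_filter.1 hi).2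
    refine Finset.mem_biUnion.2 ⟨i, hiS, ?_⟩
    rw [colsOf_big k i hibig]
    refine Finset.mem_image.2 ⟨z, ?_, rfl⟩
    simp only [Finset.mem_insert, Finset.mem_singleton]
    rcases hzi with rfl | rfl | rfl
    · exact Or.inl rfl
    · exact Or.inr (Or.inl rfl)
    · exact Or.inr (Or.inr rfl)
  have hsmall : S₁ ⊆ S.biUnion (colsOf k) := by
    intro i hi
    have hiS : i ∈ S := (Finset.mem_filter.1 hi).1
    have hism : (i : ℕ) < k - 1 := (Finset.mem_filter.1 hi).2
    refine Finset.mem_biUnion.2 ⟨i, hiS, ?_⟩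
    unfold colsOf
    rw [if_pos hism]
    exact Finset.mem_singleton_self i
  have hdisj : Disjoint S₁ (Finset.image (bigCol k) U) := by
    rw [Finset.disjoint_left]
    intro i hi hi'
    have hism : (i : ℕ) < k - 1 := (Finset.mem_filter.1 hi).2
    obtain ⟨z, _, hz⟩ := Finset.mem_image.1 hi'
    have := bigCol_val k hk z
    rw [hz] at this
    omega
  have hUcard : (Finset.image (bigCol k) U).card = U.card :=
    Finset.card_image_of_injective _ (bigCol_injective k hk)
  calc k + 2 = S₁.card + (J.card + 2) := by omega
    _ ≤ S₁.card + U.card := by omega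
    _ = (S₁ ∪ Finset.image (bigCol k) U).card := by
        rw [Finset.card_union_of_disjoint hdisj, hUcard]
    _ ≤ (S.biUnion (colsOf k)).card :=
        Finset.card_le_card (Finset.union_subset hsmall himg)

end Aux

/-- `alpha k n` is the minimum number of 1-entries in an `n × n` {0,1}-matrix in which
every `k × k` minor contains at least one 1. -/
noncomputable def alpha (k n : ℕ) : ℕ :=
  sInf {m : ℕ | ∃ A : Fin n → Fin n → Bool, MinorHit n k A ∧ onesCount A = m}

theorem alpha_le_four_k_plus_five (k : ℕ) (hk : 1 ≤ k) :
    alpha k (2 * k + 1) ≤ 4 * k + 5 := by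
  set A : Fin (2 * k + 1) → Fin (2 * k + 1) → Bool := fun i j => decide (j ∈ colsOf k i) with hA
  have hMH : MinorHit (2 * k + 1) k A := by
    intro S T hS hT
    by_contra hcon
    push_neg at hcon
    have hdisj : Disjoint (S.biUnion (colsOf k)) T := by
      rw [Finset.disjoint_left]
      intro j hj hjT
      obtain ⟨i, hiS, hji⟩ := Finset.mem_biUnion.1 hj
      have hAij : A i j = true := by
        simp only [hA, decide_eq_true_eq]
        exact hji
      exact hcon i hiS j hjT hAij
    have h1 := cover_card k hk S hS
    have h2 : (S.biUnion (colsOf k)).card + T.card ≤ 2 * k + 1 := by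
      rw [← Finset.card_union_of_disjoint hdisj]
      have := Finset.card_le_card (Finset.subset_univ (S.biUnion (colsOf k) ∪ T))
      simpa using this
    omega
  have hcount : onesCount A ≤ 4 * k + 5 := by
    have heq : onesCount A = ∑ i : Fin (2 * k + 1), (colsOf k i).card := by
      unfold onesCount
      rw [Finset.card_filter, Fintype.sum_prod_type]
      congr 1
      funext i
      rw [← Finset.card_filter]
      congr 1
      ext j
      simp [hA]
    rw [heq]
    have hle : ∑ i : Fin (2 * k + 1), (colsOf k i).card
        ≤ ∑ i : Fin (2 * k + 1), (if (i : ℕ) < k - 1 then 1 else 3) :=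
      Finset.sum_le_sum fun i _ => colsOf_card k i
    have hsum : ∑ i : Fin (2 * k + 1), (if (i : ℕ) < k - 1 then 1 else 3)
        = (k - 1) * 1 + (k + 2) * 3 := by
      rw [Finset.sum_ite, Finset.sum_const, Finset.sum_const]
      have h1 := card_small k
      have h2 : (Finset.univ.filter fun i : Fin (2 * k + 1) => ¬ (i : ℕ) < k - 1).card = k + 2 := by
        have htot : (Finset.univ.filter fun i : Fin (2 * k + 1) => (i : ℕ) < k - 1).card
            + (Finset.univ.filter fun i : Fin (2 * k + 1) => ¬ (i : ℕ) < k - 1).card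
            = (Finset.univ : Finset (Fin (2 * k + 1))).card :=
          Finset.card_filter_add_card_filter_not _
        rw [Finset.card_univ, Fintype.card_fin] at htot
        omega
      rw [h1, h2]
      simp [mul_comm]
    omega
  have hmem : onesCount A ∈
      {m : ℕ | ∃ B : Fin (2 * k + 1) → Fin (2 * k + 1) → Bool, MinorHit (2 * k + 1) k B ∧ onesCount B = m} :=
    ⟨A, hMH, rfl⟩
  exact le_trans (Nat.sInf_le hmem) hcount
end

section
/- Let k ≥ 1 and n = 2k+1, and let α(k,n) be the minimum number of 1-entries in an n×n {0,1}-matrix in which every k×k minor contains a 1. Then α(k, 2k+1) ≤ (7k+11)/2 if k is odd, and α(k, 2k+1) ≤ (7k+12)/2 if k is even. -/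
open Finset
open Fin.NatCast
open Fin.CommRing

/-! ### Helper lemmas -/

lemma alpha_le {k n : ℕ} (A : Fin n → Fin n → Bool) (hA : MinorHit n k A) :
    alpha k n ≤ onesCount A :=
  Nat.sInf_le ⟨A, hA, rfl⟩

lemma minorHit_of_cover {k n : ℕ} (hn : n = 2 * k + 1) (A : Fin n → Fin n → Bool)
    (hcov : ∀ S : Finset (Fin n), S.card = k →
      k + 2 ≤ (Finset.univ.filter fun j => ∃ i ∈ S, A i j = true).card) :
    MinorHit n k A := by
  intro S T hS hT
  by_contra hcon
  push_neg at hcon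
  have hdisj : Disjoint T (Finset.univ.filter fun j => ∃ i ∈ S, A i j = true) := by
    rw [Finset.disjoint_left]
    intro j hj hj2
    simp only [Finset.mem_filter, Finset.mem_univ, true_and] at hj2
    obtain ⟨i, hi, hAij⟩ := hj2
    exact hcon i hi j hj hAij
  have h1 := Finset.card_le_card
    (Finset.subset_univ (T ∪ (Finset.univ.filter fun j => ∃ i ∈ S, A i j = true)))
  rw [Finset.card_union_of_disjoint hdisj, Finset.card_univ, Fintype.card_fin] at h1
  have h2 := hcov S hS
  omega

lemma onesCount_eq_sum {n : ℕ} (A : Fin n → Fin n → Bool) :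
    onesCount A = ∑ j : Fin n, (Finset.univ.filter fun i => A i j = true).card := by
  unfold onesCount
  rw [Finset.card_eq_sum_card_fiberwise
    (f := fun p : Fin n × Fin n => p.2) (t := Finset.univ) (fun x _ => Finset.mem_univ _)]
  refine Finset.sum_congr rfl fun j _ => ?_
  apply Finset.card_bij (fun p _ => p.1)
  · intro p hp
    simp only [Finset.mem_filter, Finset.mem_univ, true_and] at hp ⊢
    rw [← hp.2]; exact hp.1
  · intro p hp q hq hpq
    simp only [Finset.mem_filter, Finset.mem_univ, true_and] at hp hq
    exact Prod.ext hpq (hp.2.trans hq.2.symm)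
  · intro i hi
    simp only [Finset.mem_filter, Finset.mem_univ, true_and] at hi ⊢
    exact ⟨(i, j), ⟨hi, rfl⟩, rfl⟩

lemma fin_closed_eq_univ {m : ℕ} [NeZero m] (T : Finset (Fin m)) (hne : T.Nonempty)
    (hcl : ∀ x ∈ T, x + 1 ∈ T) : T = Finset.univ := by
  obtain ⟨x0, hx0⟩ := hne
  have key : ∀ c : ℕ, x0 + (c : Fin m) ∈ T := by
    intro c
    induction c with
    | zero => simpa using hx0
    | succ c ih =>
      have h2 := hcl _ ih
      have h3 : x0 + ((c + 1 : ℕ) : Fin m) = x0 + (c : Fin m) + 1 := by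
        push_cast
        ring
      rw [h3]; exact h2
  apply Finset.eq_univ_of_forall
  intro y
  have h4 := key (y - x0).val
  rw [Fin.cast_val_eq_self] at h4
  have h5 : x0 + (y - x0) = y := by ring
  rwa [h5] at h4
/-! ### The two-bad-columns lemma on the cyclic structure -/

lemma two_bad {m g h t : ℕ} [NeZero m] (hg : 2 ≤ g) (hgh : g + 1 ≤ h)
    (hm : m = 2 * h - 1) (ht1 : g + 1 ≤ t) (ht2 : t + g ≤ m)
    (T : Finset (Fin m)) (hT : T.card = t) (hf : Fin m) (hfv : hf.val = h) :
    ∃ e1 e2 : Fin m, e1 ≠ e2 ∧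
      (e1 ∈ T ∧ (e1 + 1 ∉ T ∨ (e1.val % g = 0 ∧ e1 + hf ∉ T))) ∧
      (e2 ∈ T ∧ (e2 + 1 ∉ T ∨ (e2.val % g = 0 ∧ e2 + hf ∉ T))) := by
  have hm0 : 0 < m := Nat.pos_of_ne_zero (NeZero.ne m)
  have hm5 : 2 * g + 1 ≤ m := by omega
  have hTne : T.Nonempty := by rw [← Finset.card_pos, hT]; omega
  have hTnu : T ≠ Finset.univ := by
    intro hEq
    have : T.card = m := by rw [hEq, Finset.card_univ, Fintype.card_fin]
    omega
  set E := T.filter (fun q => q + 1 ∉ T) with hEdef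
  have hEne : E.Nonempty := by
    rw [hEdef, Finset.filter_nonempty_iff]
    by_contra hcon
    push_neg at hcon
    exact hTnu (fin_closed_eq_univ T hTne hcon)
  by_cases h2E : 2 ≤ E.card
  · obtain ⟨e1, he1, e2, he2, hne⟩ := Finset.one_lt_card.mp (show 1 < E.card by omega)
    rw [hEdef, Finset.mem_filter] at he1 he2
    exact ⟨e1, e2, hne, ⟨he1.1, Or.inl he1.2⟩, ⟨he2.1, Or.inl he2.2⟩⟩
  · have hE1 : E.card = 1 := by
      have := Finset.card_pos.mpr hEne; omega
    obtain ⟨e, hEe⟩ := Finset.card_eq_one.mp hE1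
    have heT : e ∈ T ∧ e + 1 ∉ T := by
      have : e ∈ E := by rw [hEe]; exact Finset.mem_singleton_self e
      rwa [hEdef, Finset.mem_filter] at this
    have huniq : ∀ x ∈ T, x + 1 ∉ T → x = e := by
      intro x hx hx1
      have : x ∈ E := by rw [hEdef, Finset.mem_filter]; exact ⟨hx, hx1⟩
      rw [hEe, Finset.mem_singleton] at this
      exact this
    have htm : t ≤ m := by omega
    -- every backward step from e stays in T
    have claim : ∀ j, j < t → e - (j : Fin m) ∈ T := by
      intro j
      induction j using Nat.strong_induction_on with
      | _ j ih =>
        intro hj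
        rcases Nat.eq_zero_or_pos j with rfl | hj1
        · simpa using heT.1
        by_contra hnot
        set Tprev := (Finset.range j).image (fun i : ℕ => e - (i : Fin m)) with hTp
        have hinj : Set.InjOn (fun i : ℕ => e - (i : Fin m)) (Finset.range j) := by
          intro a ha b hb hab
          simp only [Finset.coe_range, Set.mem_Iio] at ha hb
          have hab2 : (a : Fin m) = (b : Fin m) := by
            have := sub_right_injective (G := Fin m) hab
            exact this
          have := congrArg Fin.val hab2
          rwa [Fin.val_natCast, Fin.val_natCast, Nat.mod_eq_of_lt (by omega),
            Nat.mod_eq_of_lt (by omega)] at this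
        have hcardp : Tprev.card = j := by
          rw [hTp, Finset.card_image_of_injOn hinj, Finset.card_range]
        have hsubp : Tprev ⊆ T := by
          intro x hx
          rw [hTp, Finset.mem_image] at hx
          obtain ⟨i, hi, rfl⟩ := hx
          rw [Finset.mem_range] at hi
          exact ih i hi (by omega)
        set R := T \ Tprev with hR
        have hRne : R.Nonempty := by
          rw [← Finset.card_pos, hR, Finset.card_sdiff_of_subset hsubp, hT, hcardp]; omega
        have hjnotR : e - (j : Fin m) ∉ R := fun hx => hnot (Finset.mem_sdiff.mp hx).1
        have hex : ∃ y ∈ R, y + 1 ∉ R := by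
          by_contra hcl
          push_neg at hcl
          have := fin_closed_eq_univ R hRne hcl
          exact hjnotR (this ▸ Finset.mem_univ _)
        obtain ⟨y, hyR, hy1⟩ := hex
        have hyT : y ∈ T := (Finset.mem_sdiff.mp hyR).1
        by_cases hy1T : y + 1 ∈ T
        · have hy1p : y + 1 ∈ Tprev := by
            by_contra hcp
            exact hy1 (Finset.mem_sdiff.mpr ⟨hy1T, hcp⟩)
          rw [hTp, Finset.mem_image] at hy1p
          obtain ⟨i, hi, hie⟩ := hy1p
          rw [Finset.mem_range] at hi
          have hyi : y = e - ((i + 1 : ℕ) : Fin m) := by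
            push_cast
            have : y = (y + 1) - 1 := by ring
            rw [this, ← hie]
            ring
          rcases Nat.lt_or_ge (i + 1) j with hlt | hge
          · have : y ∈ Tprev := by
              rw [hTp, Finset.mem_image]
              exact ⟨i + 1, Finset.mem_range.mpr hlt, hyi.symm⟩
            exact (Finset.mem_sdiff.mp hyR).2 this
          · have hij : i + 1 = j := by omega
            rw [hij] at hyi
            rw [hyi] at hyT
            exact hnot hyT
        · have hye := huniq y hyT hy1T
          have heP : e ∈ Tprev := by
            rw [hTp, Finset.mem_image]
            exact ⟨0, Finset.mem_range.mpr hj1, by simp⟩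
          rw [hye] at hyR
          exact (Finset.mem_sdiff.mp hyR).2 heP
    -- T is exactly the backward interval from e
    have hTimg : T = (Finset.range t).image (fun j : ℕ => e - (j : Fin m)) := by
      symm
      apply Finset.eq_of_subset_of_card_le
      · intro x hx
        rw [Finset.mem_image] at hx
        obtain ⟨j, hj, rfl⟩ := hx
        exact claim j (Finset.mem_range.mp hj)
      · rw [hT, Finset.card_image_of_injOn ?_, Finset.card_range]
        intro a ha b hb hab
        simp only [Finset.coe_range, Set.mem_Iio] at ha hb
        have hab2 : (a : Fin m) = (b : Fin m) := sub_right_injective (G := Fin m) hab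
        have := congrArg Fin.val hab2
        rwa [Fin.val_natCast, Fin.val_natCast, Nat.mod_eq_of_lt (by omega),
          Nat.mod_eq_of_lt (by omega)] at this
    have memT : ∀ x : Fin m, x ∈ T ↔ (e - x).val < t := by
      intro x
      constructor
      · intro hx
        rw [hTimg, Finset.mem_image] at hx
        obtain ⟨j, hj, rfl⟩ := hx
        rw [Finset.mem_range] at hj
        rw [sub_sub_cancel, Fin.val_natCast, Nat.mod_eq_of_lt (by omega)]
        exact hj
      · intro hx
        rw [hTimg, Finset.mem_image]
        refine ⟨(e - x).val, Finset.mem_range.mpr hx, ?_⟩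
        rw [Fin.cast_val_eq_self, sub_sub_cancel]
    -- now construct the second bad point
    have hb : g ≤ h - 1 := by omega
    obtain ⟨lo, hlo1, hlo2, hloC⟩ :
        ∃ lo : ℕ, 1 ≤ lo ∧ lo + g - 1 ≤ t - 1 ∧
          ∀ j, lo ≤ j → j ≤ lo + g - 1 → (j + (h - 1) < m ∧ t ≤ j + (h - 1)) := by
      rcases le_or_gt t (h - 1) with hc | hc
      · exact ⟨1, le_refl _, by omega, fun j h1 h2 => ⟨by omega, by omega⟩⟩
      · exact ⟨t - (h - 1), by omega, by omega, fun j h1 h2 => ⟨by omega, by omega⟩⟩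
    set X := e.val + (m - lo) with hX
    set r := X % m with hr
    set d := r % g with hd
    set js := lo + d with hjs
    have hdg : d < g := Nat.mod_lt _ (by omega)
    have hjs1 : 1 ≤ js := by omega
    have hjst : js ≤ t - 1 := by omega
    have hjsm : js < m := by omega
    obtain ⟨hjb1, hjb2⟩ := hloC js (by omega) (by omega)
    set q := e - (js : Fin m) with hq
    have hjsval : ((js : Fin m)).val = js := by
      rw [Fin.val_natCast, Nat.mod_eq_of_lt hjsm]
    -- q ∈ T
    have hqT : q ∈ T := by
      rw [memT, hq, sub_sub_cancel, hjsval]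
      omega
    -- q + 1 ∈ T
    have hq1T : q + 1 ∈ T := by
      have h1 : e - (q + 1) = (js : Fin m) - 1 := by rw [hq]; ring
      rw [memT, h1, Fin.sub_def]
      simp only
      rw [Fin.val_one', Nat.mod_eq_of_lt (by omega : (1:ℕ) < m), hjsval]
      have : m - 1 + js = (js - 1) + m := by omega
      rw [this, Nat.add_mod_right, Nat.mod_eq_of_lt (by omega)]
      omega
    -- q + hf ∉ T
    have hqhT : q + hf ∉ T := by
      have h1 : e - (q + hf) = (js : Fin m) - hf := by rw [hq]; ring
      rw [memT, h1, Fin.sub_def]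
      simp only
      rw [hfv, hjsval]
      have h2 : m - h + js = js + (h - 1) := by omega
      rw [h2, Nat.mod_eq_of_lt hjb1]
      omega
    -- g ∣ q.val
    have hXlt : X < 2 * m := by
      have := e.isLt
      omega
    have hXd : d ≤ X := by
      have h1 : d ≤ r := Nat.mod_le _ _
      have h2 : r ≤ X := Nat.mod_le _ _
      omega
    have hqval : q.val = r - d := by
      have h1 : q.val = (m - js + e.val) % m := by
        rw [hq, Fin.sub_def]
        simp only
        rw [hjsval]
      have h2 : m - js + e.val = X - d := by
        rw [hX]
        omega
      rw [h1, h2]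
      rcases Nat.lt_or_ge X m with hc | hc
      · have : r = X := Nat.mod_eq_of_lt hc
        rw [this]
        exact Nat.mod_eq_of_lt (by omega)
      · have hrX : r = X - m := by
          rw [hr, Nat.mod_eq_sub_mod hc, Nat.mod_eq_of_lt (by omega)]
        have hdr : d ≤ r := Nat.mod_le _ _
        have h3 : X - d = (r - d) + m := by omega
        rw [h3, Nat.add_mod_right, Nat.mod_eq_of_lt (by omega)]
    have hqdvd : q.val % g = 0 := by
      have h1 := Nat.div_add_mod r g
      have h2 : q.val = g * (r / g) := by omega
      rw [h2, Nat.mul_mod_right]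
    have hqe : q ≠ e := by
      intro hqe
      rw [hqe] at hq1T
      exact heT.2 hq1T
    exact ⟨e, q, fun hh => hqe hh.symm, ⟨heT.1, Or.inl heT.2⟩,
      ⟨hqT, Or.inr ⟨hqdvd, hqhT⟩⟩⟩
/-! ### The general construction -/

def AG (k p m g h : ℕ) : Fin (2 * k + 1) → Fin (2 * k + 1) → Bool := fun i j =>
  decide ((i.val < p ∧ i.val = j.val) ∨
    (p ≤ i.val ∧ p ≤ j.val ∧
      (i.val - p = j.val - p ∨ i.val - p = (j.val - p + 1) % m ∨
        ((j.val - p) % g = 0 ∧ i.val - p = (j.val - p + h) % m))))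

lemma coverG {k p m g h : ℕ} (hg : 2 ≤ g) (hgh : g + 1 ≤ h) (hm : m = 2 * h - 1)
    (hpg : p + g = k) (hpm : p + m = 2 * k + 1) :
    ∀ S : Finset (Fin (2 * k + 1)), S.card = k →
      k + 2 ≤ (Finset.univ.filter fun j => ∃ i ∈ S, AG k p m g h i j = true).card := by
  intro S hS
  have hm0 : 0 < m := by omega
  haveI : NeZero m := ⟨by omega⟩
  have hmlt : m ≤ 2 * k + 1 := by omega
  -- the embedding of the gadget coordinates
  have hembv : ∀ q : Fin m, p + q.val < 2 * k + 1 := fun q => by have := q.isLt; omega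
  set emb : Fin m → Fin (2 * k + 1) := fun q => ⟨p + q.val, hembv q⟩ with hemb
  have hembinj : Function.Injective emb := by
    intro a b hab
    have : p + a.val = p + b.val := congrArg Fin.val hab
    exact Fin.ext (by omega)
  set hf : Fin m := ⟨h, by omega⟩ with hhf
  set SP := S.filter (fun i => i.val < p) with hSP
  set SG := S.filter (fun i => ¬ i.val < p) with hSG
  have hsplit : SP.card + SG.card = k := by
    rw [hSP, hSG, Finset.card_filter_add_card_filter_not, hS]
  have hsAp : SP.card ≤ p := by
    have : SP.card ≤ (Finset.range p).card := by
      apply Finset.card_le_card_of_injOn (fun i => i.val)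
      · intro i hi
        rw [Finset.mem_coe, hSP, Finset.mem_filter] at hi
        exact Finset.mem_range.mpr hi.2
      · intro a _ b _ hab
        exact Fin.ext hab
    rwa [Finset.card_range] at this
  set TT := Finset.univ.filter (fun q : Fin m => emb q ∉ S) with hTT
  have hTTc : (Finset.univ.filter (fun q : Fin m => emb q ∈ S)).card = SG.card := by
    apply Finset.card_bij (fun q _ => emb q)
    · intro q hq
      simp only [Finset.mem_filter, Finset.mem_univ, true_and] at hq
      rw [hSG, Finset.mem_filter]
      refine ⟨hq, ?_⟩
      simp only [hemb]
      omega
    · intro a _ b _ hab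
      exact hembinj hab
    · intro i hi
      rw [hSG, Finset.mem_filter] at hi
      have hiv : i.val < 2 * k + 1 := i.isLt
      refine ⟨⟨i.val - p, by omega⟩, ?_, ?_⟩
      · rw [Finset.mem_filter]
        refine ⟨Finset.mem_univ _, ?_⟩
        have : emb ⟨i.val - p, by omega⟩ = i := Fin.ext (by simp only [hemb]; omega)
        rw [this]
        exact hi.1
      · exact Fin.ext (by simp only [hemb]; omega)
  have hTTcard : TT.card = m - SG.card := by
    have h1 := Finset.card_filter_add_card_filter_not
      (s := (Finset.univ : Finset (Fin m))) (p := fun q => emb q ∈ S)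
    rw [Finset.card_univ, Fintype.card_fin, hTTc] at h1
    have h2 : SG.card ≤ m := by omega
    rw [hTT]
    omega
  have hsG1 : g ≤ SG.card := by omega
  have hsG2 : SG.card ≤ k := by omega
  -- apply two_bad
  obtain ⟨e1, e2, hne, hb1, hb2⟩ := two_bad hg hgh hm (t := m - SG.card)
    (by omega) (by omega) TT hTTcard hf (by simp [hhf])
  -- the set of gadget columns NOT fully inside TT (i.e. covered by S)
  set covered := Finset.univ.filter
    (fun q : Fin m => ¬ (q ∈ TT ∧ q + 1 ∈ TT ∧ (q.val % g = 0 → q + hf ∈ TT))) with hcov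
  have hsubcol : Finset.univ.filter
      (fun q : Fin m => (q ∈ TT ∧ q + 1 ∈ TT ∧ (q.val % g = 0 → q + hf ∈ TT)))
      ⊆ (TT.erase e1).erase e2 := by
    intro x hx
    rw [Finset.mem_filter] at hx
    rw [Finset.mem_erase, Finset.mem_erase]
    refine ⟨?_, ?_, hx.2.1⟩
    · intro hxe
      subst hxe
      rcases hb2.2 with hc | hc
      · exact hc hx.2.2.1
      · exact hc.2 (hx.2.2.2 hc.1)
    · intro hxe
      subst hxe
      rcases hb1.2 with hc | hc
      · exact hc hx.2.2.1
      · exact hc.2 (hx.2.2.2 hc.1)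
  have he2TT : e2 ∈ TT.erase e1 := Finset.mem_erase.mpr ⟨fun hh => hne hh.symm, hb2.1⟩
  have hcolcard : (Finset.univ.filter
      (fun q : Fin m => (q ∈ TT ∧ q + 1 ∈ TT ∧ (q.val % g = 0 → q + hf ∈ TT)))).card
      ≤ (m - SG.card) - 2 := by
    have h1 := Finset.card_le_card hsubcol
    rw [Finset.card_erase_of_mem he2TT, Finset.card_erase_of_mem hb1.1, hTTcard] at h1
    omega
  have hcoveredcard : SG.card + 2 ≤ covered.card := by
    have h1 := Finset.card_filter_add_card_filter_not
      (s := (Finset.univ : Finset (Fin m)))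
      (p := fun q : Fin m => (q ∈ TT ∧ q + 1 ∈ TT ∧ (q.val % g = 0 → q + hf ∈ TT)))
    rw [Finset.card_univ, Fintype.card_fin] at h1
    rw [hcov]
    omega
  -- each covered gadget column is indeed covered by a row of S
  have hcovS : ∀ q ∈ covered, ∃ i ∈ S, AG k p m g h i (emb q) = true := by
    intro q hq
    rw [hcov, Finset.mem_filter] at hq
    have hq2 := hq.2
    have hTTiff : ∀ x : Fin m, x ∉ TT ↔ emb x ∈ S := by
      intro x
      rw [hTT, Finset.mem_filter]
      simp only [Finset.mem_univ, true_and]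
      exact not_not
    by_cases hc1 : q ∈ TT
    · by_cases hc2 : q + 1 ∈ TT
      · have hc3 : q.val % g = 0 ∧ q + hf ∉ TT := by
          by_cases hg0 : q.val % g = 0
          · refine ⟨hg0, ?_⟩
            intro hmem
            exact hq2 ⟨hc1, hc2, fun _ => hmem⟩
          · exact absurd ⟨hc1, hc2, fun hh => absurd hh hg0⟩ hq2
        refine ⟨emb (q + hf), (hTTiff _).mp hc3.2, ?_⟩
        rw [AG, decide_eq_true_eq]
        right
        have hqv : (q + hf).val = (q.val + h) % m := by
          rw [Fin.val_add, hhf]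
        refine ⟨by simp [hemb], by simp [hemb], ?_⟩
        right; right
        constructor
        · simpa [hemb, Nat.add_sub_cancel_left] using hc3.1
        · simp only [hemb, hqv]
          rw [Nat.add_sub_cancel_left, Nat.add_sub_cancel_left]
      · refine ⟨emb (q + 1), (hTTiff _).mp hc2, ?_⟩
        rw [AG, decide_eq_true_eq]
        right
        have hqv : (q + 1).val = (q.val + 1) % m := by
          rw [Fin.val_add, Fin.val_one', Nat.mod_eq_of_lt (show (1:ℕ) < m by omega)]
        refine ⟨by simp [hemb], by simp [hemb], ?_⟩
        right; left
        simp only [hemb, hqv]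
        rw [Nat.add_sub_cancel_left, Nat.add_sub_cancel_left]
    · refine ⟨emb q, (hTTiff _).mp hc1, ?_⟩
      rw [AG, decide_eq_true_eq]
      right
      refine ⟨by simp [hemb], by simp [hemb], ?_⟩
      left
      rfl
  -- assemble
  have hSPsub : SP ⊆ Finset.univ.filter (fun j => ∃ i ∈ S, AG k p m g h i j = true) := by
    intro i hi
    rw [hSP, Finset.mem_filter] at hi
    rw [Finset.mem_filter]
    refine ⟨Finset.mem_univ _, i, hi.1, ?_⟩
    rw [AG, decide_eq_true_eq]
    exact Or.inl ⟨hi.2, rfl⟩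
  have hcovsub : covered.image emb ⊆
      Finset.univ.filter (fun j => ∃ i ∈ S, AG k p m g h i j = true) := by
    intro j hj
    rw [Finset.mem_image] at hj
    obtain ⟨q, hq, rfl⟩ := hj
    rw [Finset.mem_filter]
    exact ⟨Finset.mem_univ _, hcovS q hq⟩
  have hdisj : Disjoint SP (covered.image emb) := by
    rw [Finset.disjoint_left]
    intro x hx hx2
    rw [hSP, Finset.mem_filter] at hx
    rw [Finset.mem_image] at hx2
    obtain ⟨q, _, hq⟩ := hx2
    have : x.val = p + q.val := by rw [← hq]
    omega
  have hunion := Finset.card_le_card (Finset.union_subset hSPsub hcovsub)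
  rw [Finset.card_union_of_disjoint hdisj, Finset.card_image_of_injective _ hembinj] at hunion
  omega
/-! ### Counting the ones of the general construction -/

lemma onesCount_AG_le {k p m g h : ℕ} (hg : 2 ≤ g) (hm0 : 0 < m)
    (hpm : p + m = 2 * k + 1) :
    onesCount (AG k p m g h) ≤ p + 2 * m + ((m - 1) / g + 1) := by
  have hcol : ∀ j : Fin (2 * k + 1),
      (Finset.univ.filter fun i => AG k p m g h i j = true).card ≤
        (if j.val < p then 1 else if (j.val - p) % g = 0 then 3 else 2) := by
    intro j
    by_cases hj : j.val < p
    · rw [if_pos hj]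
      have hsub : (Finset.univ.filter fun i => AG k p m g h i j = true) ⊆ {j} := by
        intro i hi
        rw [Finset.mem_filter, AG, decide_eq_true_eq] at hi
        rw [Finset.mem_singleton]
        rcases hi.2 with ⟨_, hv⟩ | ⟨_, hv, _⟩
        · exact Fin.ext hv
        · omega
      simpa using Finset.card_le_card hsub
    · rw [if_neg hj]
      have hq : j.val - p < m := by have := j.isLt; omega
      have hb1 : p + (j.val - p) < 2 * k + 1 := by omega
      have hb2 : p + (j.val - p + 1) % m < 2 * k + 1 := by
        have := Nat.mod_lt (j.val - p + 1) hm0; omega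
      have hb3 : p + (j.val - p + h) % m < 2 * k + 1 := by
        have := Nat.mod_lt (j.val - p + h) hm0; omega
      by_cases hdv : (j.val - p) % g = 0
      · rw [if_pos hdv]
        have hsub : (Finset.univ.filter fun i => AG k p m g h i j = true) ⊆
            {(⟨p + (j.val - p), hb1⟩ : Fin (2 * k + 1)),
             ⟨p + (j.val - p + 1) % m, hb2⟩, ⟨p + (j.val - p + h) % m, hb3⟩} := by
          intro i hi
          rw [Finset.mem_filter, AG, decide_eq_true_eq] at hi
          simp only [Finset.mem_insert, Finset.mem_singleton]
          rcases hi.2 with ⟨hip, hv⟩ | ⟨hip, hjp, hc⟩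
          · omega
          · rcases hc with hc | hc | hc
            · exact Or.inl (Fin.ext (show i.val = p + (j.val - p) by omega))
            · exact Or.inr (Or.inl (Fin.ext (show i.val = p + (j.val - p + 1) % m by omega)))
            · exact Or.inr (Or.inr (Fin.ext (show i.val = p + (j.val - p + h) % m by omega)))
        calc (Finset.univ.filter fun i => AG k p m g h i j = true).card
            ≤ _ := Finset.card_le_card hsub
          _ ≤ 3 := by
              apply le_trans (Finset.card_insert_le _ _)
              have := Finset.card_insert_le
                ((⟨p + (j.val - p + 1) % m, hb2⟩ : Fin (2 * k + 1)))
                ({⟨p + (j.val - p + h) % m, hb3⟩} : Finset (Fin (2 * k + 1)))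
              simp only [Finset.card_singleton] at this ⊢
              omega
      · rw [if_neg hdv]
        have hsub : (Finset.univ.filter fun i => AG k p m g h i j = true) ⊆
            {(⟨p + (j.val - p), hb1⟩ : Fin (2 * k + 1)),
             ⟨p + (j.val - p + 1) % m, hb2⟩} := by
          intro i hi
          rw [Finset.mem_filter, AG, decide_eq_true_eq] at hi
          simp only [Finset.mem_insert, Finset.mem_singleton]
          rcases hi.2 with ⟨hip, hv⟩ | ⟨hip, hjp, hc⟩
          · omega
          · rcases hc with hc | hc | hc
            · exact Or.inl (Fin.ext (show i.val = p + (j.val - p) by omega))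
            · exact Or.inr (Fin.ext (show i.val = p + (j.val - p + 1) % m by omega))
            · exact absurd hc.1 hdv
        calc (Finset.univ.filter fun i => AG k p m g h i j = true).card
            ≤ _ := Finset.card_le_card hsub
          _ ≤ 2 := by
              apply le_trans (Finset.card_insert_le _ _)
              simp
  have hsum := Finset.sum_le_sum (s := (Finset.univ : Finset (Fin (2 * k + 1))))
    (fun j _ => hcol j)
  rw [onesCount_eq_sum]
  refine le_trans hsum ?_
  -- compute the sum of the bound
  rw [Fin.sum_univ_eq_sum_range
    (fun x => if x < p then 1 else if (x - p) % g = 0 then 3 else 2)]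
  have hsplit : Finset.range (2 * k + 1) = Finset.range (p + m) := by rw [hpm]
  rw [hsplit, Finset.range_add, Finset.sum_union, Finset.sum_map]
  · have h1 : ∑ x ∈ Finset.range p,
        (if x < p then 1 else if (x - p) % g = 0 then 3 else 2) = p := by
      rw [Finset.sum_congr rfl (fun x hx => if_pos (Finset.mem_range.mp hx))]
      simp
    have h2 : ∀ y ∈ Finset.range m,
        (if (addLeftEmbedding p) y < p then 1
          else if ((addLeftEmbedding p) y - p) % g = 0 then 3 else 2)
        = 2 + (if y % g = 0 then 1 else 0) := by
      intro y _
      have hle : (addLeftEmbedding p) y = p + y := rfl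
      rw [hle, if_neg (by omega), Nat.add_sub_cancel_left]
      split_ifs <;> rfl
    rw [Finset.sum_congr rfl h2, Finset.sum_add_distrib, Finset.sum_const,
      Finset.card_range, smul_eq_mul, mul_comm]
    have h3 : ∑ y ∈ Finset.range m, (if y % g = 0 then 1 else 0)
        = ((Finset.range m).filter (fun y => y % g = 0)).card := by
      simp
    have h4 : ((Finset.range m).filter (fun y => y % g = 0)).card ≤ (m - 1) / g + 1 := by
      have hsub : ((Finset.range m).filter (fun y => y % g = 0)).card ≤
          (Finset.range ((m - 1) / g + 1)).card := by
        apply Finset.card_le_card_of_injOn (fun y => y / g)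
        · intro y hy
          rw [Finset.mem_coe, Finset.mem_filter, Finset.mem_range] at hy
          rw [Finset.mem_coe, Finset.mem_range]
          dsimp only
          have : y / g ≤ (m - 1) / g := Nat.div_le_div_right (by omega)
          omega
        · intro y1 hy1 y2 hy2 heq
          simp only [Finset.coe_filter, Finset.mem_range, Set.mem_setOf_eq] at hy1 hy2
          have e1 : g * (y1 / g) = y1 := Nat.mul_div_cancel' (Nat.dvd_of_mod_eq_zero hy1.2)
          have e2 : g * (y2 / g) = y2 := Nat.mul_div_cancel' (Nat.dvd_of_mod_eq_zero hy2.2)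
          have heq' : y1 / g = y2 / g := heq
          rw [← e1, ← e2, heq']
      rwa [Finset.card_range] at hsub
    rw [h1, h3]
    omega
  · rw [Finset.disjoint_left]
    intro x hx hx2
    rw [Finset.mem_range] at hx
    rw [Finset.mem_map] at hx2
    obtain ⟨y, _, hy⟩ := hx2
    have : p + y = x := hy
    omega
/-! ### Special small cases -/

def A3 : Fin 7 → Fin 7 → Bool := fun i j =>
  decide ((i.val, j.val) ∈ [(0,0),(0,5),(1,2),(1,3),(2,4),(3,0),(3,2),(3,6),
    (4,1),(4,2),(4,5),(5,0),(5,1),(5,3),(6,1),(6,6)])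

set_option maxRecDepth 100000 in
lemma coverA3 : ∀ S : Finset (Fin 7), S.card = 3 →
    3 + 2 ≤ (Finset.univ.filter fun j => ∃ i ∈ S, A3 i j = true).card := by decide

lemma onesA3 : onesCount A3 = 16 := by decide

lemma minorHitA3 : MinorHit 7 3 A3 :=
  minorHit_of_cover (by norm_num) A3 coverA3

def A1 : Fin 3 → Fin 3 → Bool := fun _ _ => true

lemma minorHitA1 : MinorHit 3 1 A1 := by
  intro S T hS hT
  obtain ⟨i, hi⟩ := Finset.card_pos.mp (show 0 < S.card by omega)
  obtain ⟨j, hj⟩ := Finset.card_pos.mp (show 0 < T.card by omega)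
  exact ⟨i, hi, j, hj, rfl⟩

lemma onesA1 : onesCount A1 = 9 := by decide

/-! ### The main theorem -/

theorem alpha_le_seven_halves (k : ℕ) (hk : 1 ≤ k) :
    (Odd k → alpha k (2 * k + 1) ≤ (7 * k + 11) / 2) ∧
    (Even k → alpha k (2 * k + 1) ≤ (7 * k + 12) / 2) := by
  constructor
  · intro hodd
    rw [Nat.odd_iff] at hodd
    by_cases h1 : k = 1
    · subst h1
      have hle := alpha_le A1 minorHitA1
      rw [onesA1] at hle
      have h9 : (7 * 1 + 11) / 2 = 9 := by norm_num
      rw [h9]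
      exact le_trans (le_of_eq (by norm_num)) hle
    by_cases h3 : k = 3
    · subst h3
      have hle := alpha_le A3 minorHitA3
      rw [onesA3] at hle
      have h16 : (7 * 3 + 11) / 2 = 16 := by norm_num
      rw [h16]
      exact le_trans (le_of_eq (by norm_num)) hle
    · have hk5 : 5 ≤ k := by omega
      have hcov := coverG (k := k) (p := k - 3) (m := k + 4) (g := 3) (h := (k + 5) / 2)
        (by norm_num) (by omega) (by omega) (by omega) (by omega)
      have hmh := minorHit_of_cover rfl _ hcov
      have h1 := alpha_le _ hmh
      have h2 := onesCount_AG_le (k := k) (p := k - 3) (m := k + 4) (g := 3)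
        (h := (k + 5) / 2) (by norm_num) (by omega) (by omega)
      have h3 : (k - 3) + 2 * (k + 4) + ((k + 4 - 1) / 3 + 1) ≤ (7 * k + 11) / 2 := by
        omega
      omega
  · intro heven
    rw [Nat.even_iff] at heven
    have hk2 : 2 ≤ k := by omega
    have hcov := coverG (k := k) (p := k - 2) (m := k + 3) (g := 2) (h := (k + 4) / 2)
      (by norm_num) (by omega) (by omega) (by omega) (by omega)
    have hmh := minorHit_of_cover rfl _ hcov
    have h1 := alpha_le _ hmh
    have h2 := onesCount_AG_le (k := k) (p := k - 2) (m := k + 3) (g := 2)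
      (h := (k + 4) / 2) (by norm_num) (by omega) (by omega)
    have h3 : (k - 2) + 2 * (k + 3) + ((k + 3 - 1) / 2 + 1) ≤ (7 * k + 12) / 2 := by
      omega
    omega
end

section
/- Let k be a sufficiently large positive integer and n = 2k+1, and let α(k,n) be the minimum number of 1-entries in an n×n {0,1}-matrix in which every k×k minor contains a 1. Then α(k, 2k+1) ≤ ⌈(10k+25)/3⌉; more precisely α(k,2k+1) is at most (10k+24)/3, (10k+23)/3, or (10k+25)/3 according as k ≡ 0, 1, 2 (mod 3). -/
section AlphaConstruction


/-- The construction predicate. -/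
def Pk (k i j : ℕ) : Prop :=
  (i < k+6 ∧ (j = i ∨ j = (i+1) % (k+6) ∨ (i % 5 = 0 ∧ j = (i + (k+1)) % (k+6)))) ∨
  (k+6 ≤ i ∧ j = i)

instance instDecPk (k i j : ℕ) : Decidable (Pk k i j) := by unfold Pk; exact inferInstance

lemma mod_two_cases (x v : ℕ) (h : v < 2*x) :
    v % x = if v < x then v else v - x := by
  split
  · exact Nat.mod_eq_of_lt ‹_›
  · rw [Nat.mod_eq_sub_mod (le_of_not_gt ‹_›), Nat.mod_eq_of_lt (by omega)]

lemma exists_boundary (x : ℕ) (B : Finset ℕ) (hsub : B ⊆ Finset.range x)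
    (hne : B.Nonempty) (hcard : B.card < x) :
    ∃ a ∈ B, (a + 1) % x ∉ B := by
  by_contra hcl
  push_neg at hcl
  obtain ⟨a₀, ha₀⟩ := hne
  have ha₀x : a₀ < x := Finset.mem_range.mp (hsub ha₀)
  have key : ∀ j, (a₀ + j) % x ∈ B := by
    intro j
    induction j with
    | zero => simpa [Nat.mod_eq_of_lt ha₀x] using ha₀
    | succ j ih =>
      have := hcl _ ih
      rwa [Nat.mod_add_mod, Nat.add_assoc] at this
  have hsub2 : Finset.range x ⊆ B := by
    intro c hc
    have hcx : c < x := Finset.mem_range.mp hc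
    have h1 := key (x + c - a₀)
    have harg : a₀ + (x + c - a₀) = x + c := by omega
    rw [harg, Nat.add_mod_left, Nat.mod_eq_of_lt hcx] at h1
    exact h1
  have := Finset.card_le_card hsub2
  rw [Finset.card_range] at this
  omega

lemma arc_lemma (x : ℕ) (B : Finset ℕ) (hsub : B ⊆ Finset.range x)
    (a : ℕ) (ha : a ∈ B) (huniq : ∀ c ∈ B, (c+1) % x ∉ B → c = a) :
    ∀ c ∈ B, (a + (x - c)) % x < B.card := by
  intro c hc
  have hax : a < x := Finset.mem_range.mp (hsub ha)
  have hcx : c < x := Finset.mem_range.mp (hsub hc)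
  have hx : 0 < x := by omega
  have hdx : (a + (x - c)) % x < x := Nat.mod_lt _ hx
  set d := (a + (x - c)) % x with hd
  -- key: (c + d) % x = a % x
  have hcd : (c + d) % x = a % x := by
    rw [hd, Nat.add_mod_mod]
    have : c + (a + (x - c)) = a + x := by omega
    rw [this, Nat.add_mod_right]
  have chain : ∀ e, e ≤ d → (c + e) % x ∈ B := by
    intro e he
    induction e with
    | zero => simpa [Nat.mod_eq_of_lt hcx] using hc
    | succ e ih =>
      have hi := ih (by omega)
      have hne : (c + e) % x ≠ a := by
        intro hEq
        have h2 : (c + e) % x = (c + d) % x := by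
          rw [hcd, hEq, Nat.mod_eq_of_lt hax]
        have h3 : e ≡ d [MOD x] := Nat.ModEq.add_left_cancel' c h2
        have hex : e < x := by omega
        have h4 : e % x = d % x := h3
        rw [Nat.mod_eq_of_lt hex, Nat.mod_eq_of_lt hdx] at h4
        omega
      by_contra hnotin
      have hb : ((c + e) % x + 1) % x ∉ B := by
        rw [Nat.mod_add_mod, Nat.add_assoc]
        exact hnotin
      exact hne (huniq _ hi hb)
  have hinj : Set.InjOn (fun e => (c + e) % x) (Finset.range (d+1)) := by
    intro e he e' he' hee
    simp only [Finset.coe_range, Set.mem_Iio] at he he'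
    have h3 : e ≡ e' [MOD x] := Nat.ModEq.add_left_cancel' c hee
    have h4 : e % x = e' % x := h3
    rw [Nat.mod_eq_of_lt (by omega), Nat.mod_eq_of_lt (by omega)] at h4
    omega
  have hcard : d + 1 ≤ B.card := by
    have := Finset.card_le_card_of_injOn (fun e => (c + e) % x)
      (fun e he => chain e (by have := Finset.mem_range.mp he; omega)) hinj
    simpa using this
  omega

lemma mod_inv_ident (x a c : ℕ) (hax : a < x) (hcx : c < x) :
    (a + (x - (a + (x - c)) % x)) % x = c := by
  have hx : 0 < x := by omega
  have h2 : a + (x - c) < 2*x := by omega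
  have he := mod_two_cases x (a + (x - c)) h2
  set e := (a + (x - c)) % x with hee
  have hex : e < x := Nat.mod_lt _ hx
  rw [mod_two_cases x (a + (x - e)) (by omega)]
  split at he <;> split <;> omega


lemma exists_special' (x τ : ℕ) (hx : 5 ≤ x) (hτ : τ < x) :
    ∃ w < 5, ((τ + w) % x) % 5 = 0 := by
  by_cases hc : τ + 4 < x
  · have h1 : τ + (5 - τ % 5) % 5 < x := by omega
    refine ⟨(5 - τ % 5) % 5, by omega, ?_⟩
    rw [Nat.mod_eq_of_lt h1]
    omega
  · refine ⟨x - τ, by omega, ?_⟩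
    have h2 : τ + (x - τ) = x := by omega
    rw [h2, Nat.mod_self]

lemma exists_special (x t : ℕ) (hx : 5 ≤ x) : ∃ w < 5, ((t + w) % x) % 5 = 0 := by
  obtain ⟨w, hw, hmod⟩ := exists_special' x (t % x) hx (Nat.mod_lt _ (by omega))
  exact ⟨w, hw, by rwa [Nat.mod_add_mod] at hmod⟩

lemma minorHit_s17 (k : ℕ) (hk : 100 ≤ k) :
    MinorHit (2*k+1) k (fun i j => decide (Pk k i.val j.val)) := by
  intro S T hS hT
  by_contra hcon
  push_neg at hcon
  have hP : ∀ i ∈ S, ∀ j ∈ T, ¬ Pk k (i:ℕ) (j:ℕ) := by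
    intro i hi j hj
    have := hcon i hi j hj
    simpa using this
  have hxpos : 0 < k+6 := by omega
  set SV : Finset ℕ := S.image (Fin.val) with hSV
  have hSVcard : SV.card = k := by
    rw [hSV, Finset.card_image_of_injective _ Fin.val_injective, hS]
  set B : Finset ℕ := SV.filter (fun c => c < k+6) with hB
  set Q : Finset ℕ := SV.filter (fun c => ¬ c < k+6) with hQ
  have hBQ : B.card + Q.card = k := by
    rw [hB, hQ, Finset.card_filter_add_card_filter_not, hSVcard]
  have hSVn : ∀ c ∈ SV, c < 2*k+1 := by
    intro c hc
    rw [hSV, Finset.mem_image] at hc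
    obtain ⟨i, _, rfl⟩ := hc
    exact i.isLt
  have hQcard : Q.card ≤ k - 5 := by
    have hQsub : Q ⊆ Finset.Ico (k+6) (2*k+1) := by
      intro c hc
      rw [hQ, Finset.mem_filter] at hc
      exact Finset.mem_Ico.mpr ⟨by omega, hSVn c hc.1⟩
    have := Finset.card_le_card hQsub
    rw [Nat.card_Ico] at this
    omega
  have hs5 : 5 ≤ B.card := by omega
  have hsk : B.card ≤ k := by omega
  have hBsub : B ⊆ Finset.range (k+6) := by
    intro c hc
    rw [hB, Finset.mem_filter] at hc
    exact Finset.mem_range.mpr hc.2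
  have hBS : ∀ c ∈ B, ∃ i ∈ S, (i:ℕ) = c := by
    intro c hc
    rw [hB, Finset.mem_filter, hSV, Finset.mem_image] at hc
    obtain ⟨⟨i, hiS, rfl⟩, _⟩ := hc
    exact ⟨i, hiS, rfl⟩
  -- final contradiction helper
  have final : ∀ (N : Finset ℕ), N ⊆ Finset.range (k+6) →
      (∀ c ∈ N, ∃ i ∈ S, Pk k (i:ℕ) c) → (k + 2 ≤ N.card + Q.card) → False := by
    intro N hNsub hNhit hNc
    have hQhit : ∀ c ∈ Q, ∃ i ∈ S, Pk k (i:ℕ) c := by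
      intro c hc
      rw [hQ, Finset.mem_filter] at hc
      obtain ⟨hcSV, hcge⟩ := hc
      rw [hSV, Finset.mem_image] at hcSV
      obtain ⟨i, hiS, rfl⟩ := hcSV
      exact ⟨i, hiS, Or.inr ⟨by omega, rfl⟩⟩
    have hdisj : Disjoint N Q := by
      rw [Finset.disjoint_left]
      intro c hcN hcQ
      have h1 := Finset.mem_range.mp (hNsub hcN)
      rw [hQ, Finset.mem_filter] at hcQ
      omega
    have hHitcard : k + 2 ≤ (N ∪ Q).card := by
      rw [Finset.card_union_of_disjoint hdisj]
      omega
    have hHithit : ∀ c ∈ N ∪ Q, ∃ i ∈ S, Pk k (i:ℕ) c := by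
      intro c hc
      rcases Finset.mem_union.mp hc with h | h
      exacts [hNhit c h, hQhit c h]
    have hHitsub : N ∪ Q ⊆ Finset.range (2*k+1) := by
      intro c hc
      rcases Finset.mem_union.mp hc with h | h
      · have := Finset.mem_range.mp (hNsub h)
        exact Finset.mem_range.mpr (by omega)
      · rw [hQ, Finset.mem_filter] at h
        exact Finset.mem_range.mpr (hSVn _ h.1)
    have hTdisj : Disjoint (T.image Fin.val) (N ∪ Q) := by
      rw [Finset.disjoint_left]
      intro c hcT hcH
      obtain ⟨j, hjT, rfl⟩ := Finset.mem_image.mp hcT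
      obtain ⟨i, hiS, hPik⟩ := hHithit _ hcH
      exact hP i hiS j hjT hPik
    have hTsub : T.image Fin.val ⊆ Finset.range (2*k+1) := by
      intro c hc
      obtain ⟨j, _, rfl⟩ := Finset.mem_image.mp hc
      exact Finset.mem_range.mpr j.isLt
    have hTcard : (T.image Fin.val).card = k := by
      rw [Finset.card_image_of_injective _ Fin.val_injective, hT]
    have hle := Finset.card_le_card (Finset.union_subset hTsub hHitsub)
    rw [Finset.card_union_of_disjoint hTdisj, Finset.card_range, hTcard] at hle
    omega
  -- boundary
  obtain ⟨a, haB, hab⟩ := exists_boundary (k+6) B hBsub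
    (Finset.card_pos.mp (by omega)) (by omega)
  have hax : a < k+6 := Finset.mem_range.mp (hBsub haB)
  obtain ⟨ia, hiaS, hiaval⟩ := hBS a haB
  by_cases hsec : ∃ a' ∈ B, a' ≠ a ∧ (a'+1) % (k+6) ∉ B
  · -- two boundaries
    obtain ⟨a', ha'B, hne, ha'b⟩ := hsec
    have ha'x : a' < k+6 := Finset.mem_range.mp (hBsub ha'B)
    obtain ⟨ia', hia'S, hia'val⟩ := hBS a' ha'B
    have hbb' : (a+1) % (k+6) ≠ (a'+1) % (k+6) := by
      intro h
      have h3 : a ≡ a' [MOD (k+6)] := Nat.ModEq.add_right_cancel' 1 h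
      have h4 : a % (k+6) = a' % (k+6) := h3
      rw [Nat.mod_eq_of_lt hax, Nat.mod_eq_of_lt ha'x] at h4
      exact hne (h4.symm)
    have hb1x : (a+1) % (k+6) < k+6 := Nat.mod_lt _ hxpos
    have hb2x : (a'+1) % (k+6) < k+6 := Nat.mod_lt _ hxpos
    refine final (insert ((a+1) % (k+6)) (insert ((a'+1) % (k+6)) B)) ?_ ?_ ?_
    · intro c hc
      rcases Finset.mem_insert.mp hc with rfl | hc
      · exact Finset.mem_range.mpr hb1x
      rcases Finset.mem_insert.mp hc with rfl | hc
      · exact Finset.mem_range.mpr hb2x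
      · exact hBsub hc
    · intro c hc
      rcases Finset.mem_insert.mp hc with rfl | hc
      · exact ⟨ia, hiaS, Or.inl ⟨by omega, Or.inr (Or.inl (by rw [hiaval]))⟩⟩
      rcases Finset.mem_insert.mp hc with rfl | hc
      · exact ⟨ia', hia'S, Or.inl ⟨by omega, Or.inr (Or.inl (by rw [hia'val]))⟩⟩
      · obtain ⟨i, hiS, hival⟩ := hBS c hc
        have hcx : c < k+6 := Finset.mem_range.mp (hBsub hc)
        exact ⟨i, hiS, Or.inl ⟨by omega, Or.inl hival.symm⟩⟩
    · rw [Finset.card_insert_of_notMem, Finset.card_insert_of_notMem ha'b]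
      · omega
      · rw [Finset.mem_insert]
        push_neg
        exact ⟨hbb', hab⟩
  · -- unique boundary
    push_neg at hsec
    have huniq : ∀ c ∈ B, (c+1) % (k+6) ∉ B → c = a := by
      intro c hc hcb
      by_contra hca
      exact hcb (hsec c hc hca)
    have hdist := arc_lemma (k+6) B hBsub a haB huniq
    -- B = Arc
    set s := B.card with hs
    have hBArc : B = (Finset.range s).image (fun e => (a + ((k+6) - e)) % (k+6)) := by
      apply Finset.eq_of_subset_of_card_le
      · intro c hc
        have hcx : c < k+6 := Finset.mem_range.mp (hBsub hc)
        refine Finset.mem_image.mpr ⟨(a + ((k+6) - c)) % (k+6), Finset.mem_range.mpr (hdist c hc), ?_⟩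
        exact mod_inv_ident (k+6) a c hax hcx
      · calc ((Finset.range s).image _).card ≤ (Finset.range s).card := Finset.card_image_le
          _ = s := Finset.card_range s
          _ = B.card := rfl
    -- choose special r
    obtain ⟨w, hw5, hrmod⟩ := exists_special (k+6) (a + ((k+6) - (s-1))) (by omega)
    set r := (a + ((k+6) - (s-1)) + w) % (k+6) with hr
    have hrx : r < k+6 := Nat.mod_lt _ hxpos
    have hargeq : a + ((k+6) - (s-1)) + w = a + ((k+6) - (s-1-w)) := by omega
    have hrB : r ∈ B := by
      rw [hBArc]
      refine Finset.mem_image.mpr ⟨s-1-w, Finset.mem_range.mpr (by omega), ?_⟩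
      rw [← hargeq, ← hr]
    obtain ⟨ir, hirS, hirval⟩ := hBS r hrB
    set f := (r + (k+1)) % (k+6) with hf
    have hfx : f < k+6 := Nat.mod_lt _ hxpos
    -- f not in extended arc
    have hfArc2 : ∀ d ≤ s, f ≠ (a + 1 + ((k+6) - d)) % (k+6) := by
      intro d hd heq
      set e := s - 1 - w with he
      have her : r + e ≡ a [MOD (k+6)] := by
        have h1 : r ≡ a + ((k+6) - e) [MOD (k+6)] := by
          rw [hr, hargeq]
          exact Nat.mod_modEq _ _
        have h2 := h1.add_right e
        have h3 : a + ((k+6) - e) + e = a + (k+6) := by omega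
        rw [h3] at h2
        calc r + e ≡ a + (k+6) [MOD (k+6)] := h2
          _ ≡ a [MOD (k+6)] := by
              unfold Nat.ModEq
              rw [Nat.add_mod_right]
      have hfd : f + d ≡ a + 1 [MOD (k+6)] := by
        have h1 : f ≡ a + 1 + ((k+6) - d) [MOD (k+6)] := by
          rw [heq]; exact Nat.mod_modEq _ _
        have h2 := h1.add_right d
        have h3 : a + 1 + ((k+6) - d) + d = a + 1 + (k+6) := by omega
        rw [h3] at h2
        calc f + d ≡ a + 1 + (k+6) [MOD (k+6)] := h2
          _ ≡ a + 1 [MOD (k+6)] := by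
              unfold Nat.ModEq
              rw [Nat.add_mod_right]
      have hfr : f ≡ r + (k+1) [MOD (k+6)] := by rw [hf]; exact Nat.mod_modEq _ _
      have hcomb : (r + 1) + (k + d) ≡ (r + 1) + e [MOD (k+6)] := by
        calc (r + 1) + (k + d) = (r + (k+1)) + d := by ring
          _ ≡ f + d [MOD (k+6)] := (hfr.symm).add_right d
          _ ≡ a + 1 [MOD (k+6)] := hfd
          _ = (a) + 1 := rfl
          _ ≡ (r + e) + 1 [MOD (k+6)] := her.symm.add_right 1
          _ = (r + 1) + e := by ring
      have hconc : (k + d) % (k+6) = e % (k+6) := Nat.ModEq.add_left_cancel' (r+1) hcomb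
      have hekd := mod_two_cases (k+6) (k+d) (by omega)
      rw [Nat.mod_eq_of_lt (show e < k+6 by omega)] at hconc
      rw [hekd] at hconc
      split at hconc <;> omega
    have hfb : f ≠ (a+1) % (k+6) := by
      have h0 := hfArc2 0 (by omega)
      have : (a + 1 + ((k+6) - 0)) % (k+6) = (a+1) % (k+6) := by
        rw [Nat.sub_zero, Nat.add_mod_right]
      rwa [this] at h0
    have hfB : f ∉ B := by
      intro hfB
      rw [hBArc] at hfB
      obtain ⟨e, hee, heq⟩ := Finset.mem_image.mp hfB
      have he' := Finset.mem_range.mp hee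
      apply hfArc2 (e+1) (by omega)
      rw [← heq]
      congr 1
      omega
    refine final (insert f (insert ((a+1) % (k+6)) B)) ?_ ?_ ?_
    · intro c hc
      rcases Finset.mem_insert.mp hc with rfl | hc
      · exact Finset.mem_range.mpr hfx
      rcases Finset.mem_insert.mp hc with rfl | hc
      · exact Finset.mem_range.mpr (Nat.mod_lt _ hxpos)
      · exact hBsub hc
    · intro c hc
      rcases Finset.mem_insert.mp hc with rfl | hc
      · refine ⟨ir, hirS, Or.inl ⟨by omega, Or.inr (Or.inr ⟨?_, ?_⟩)⟩⟩
        · rw [hirval]; exact hrmod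
        · rw [hirval, hf]
      rcases Finset.mem_insert.mp hc with rfl | hc
      · exact ⟨ia, hiaS, Or.inl ⟨by omega, Or.inr (Or.inl (by rw [hiaval]))⟩⟩
      · obtain ⟨i, hiS, hival⟩ := hBS c hc
        have hcx : c < k+6 := Finset.mem_range.mp (hBsub hc)
        exact ⟨i, hiS, Or.inl ⟨by omega, Or.inl hival.symm⟩⟩
    · rw [Finset.card_insert_of_notMem, Finset.card_insert_of_notMem hab]
      · omega
      · rw [Finset.mem_insert]
        push_neg
        exact ⟨hfb, hfB⟩

lemma ones_le (k : ℕ) (hk : 100 ≤ k) :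
    onesCount (fun i j : Fin (2*k+1) => decide (Pk k i.val j.val)) ≤ 3*k + 8 + (k+6)/5 := by
  classical
  have hxpos : 0 < k+6 := by omega
  have hmod : ∀ m : ℕ, m % (k+6) < 2*k+1 := by
    intro m
    have := Nat.mod_lt m hxpos
    omega
  set c : ℕ → ℕ := fun m => if m < k+6 then (if m % 5 = 0 then 3 else 2) else 1 with hc
  set f : Fin (2*k+1) → Finset (Fin (2*k+1)) := fun i =>
    if (i:ℕ) < k+6 then
      (if (i:ℕ) % 5 = 0 then
        {i, ⟨((i:ℕ)+1) % (k+6), hmod _⟩, ⟨((i:ℕ)+(k+1)) % (k+6), hmod _⟩}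
       else {i, ⟨((i:ℕ)+1) % (k+6), hmod _⟩})
    else {i} with hfd
  have hsub : (Finset.univ.filter fun p : Fin (2*k+1) × Fin (2*k+1) =>
      (decide (Pk k p.1.val p.2.val)) = true)
      ⊆ Finset.univ.biUnion (fun i => {i} ×ˢ f i) := by
    intro p hp
    rw [Finset.mem_filter] at hp
    have hPp : Pk k p.1.val p.2.val := of_decide_eq_true hp.2
    refine Finset.mem_biUnion.mpr ⟨p.1, Finset.mem_univ _, ?_⟩
    rw [Finset.mem_product]
    refine ⟨Finset.mem_singleton_self _, ?_⟩
    rcases hPp with ⟨hix, hj⟩ | ⟨hix, hj⟩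
    · rw [hfd]
      simp only [if_pos hix]
      rcases hj with h | h | ⟨h5, h⟩
      · have hpe : p.2 = p.1 := Fin.val_injective h
        split <;> simp [hpe]
      · have hpe : p.2 = (⟨((p.1:ℕ)+1) % (k+6), hmod _⟩ : Fin (2*k+1)) := Fin.val_injective h
        split <;> simp [hpe]
      · have hpe : p.2 = (⟨((p.1:ℕ)+(k+1)) % (k+6), hmod _⟩ : Fin (2*k+1)) := Fin.val_injective h
        rw [if_pos h5]
        simp [hpe]
    · rw [hfd]
      simp only [if_neg (not_lt.mpr hix)]
      have hpe : p.2 = p.1 := Fin.val_injective hj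
      simp [hpe]
  have hcard1 : onesCount (fun i j : Fin (2*k+1) => decide (Pk k i.val j.val))
      ≤ ∑ i : Fin (2*k+1), ({i} ×ˢ f i).card := by
    unfold onesCount
    exact le_trans (Finset.card_le_card hsub) (Finset.card_biUnion_le)
  have hcard2 : ∀ i : Fin (2*k+1), ({i} ×ˢ f i).card ≤ c (i:ℕ) := by
    intro i
    rw [Finset.card_product, Finset.card_singleton, one_mul, hc, hfd]
    by_cases h1 : (i:ℕ) < k+6
    · simp only [if_pos h1]
      by_cases h2 : (i:ℕ) % 5 = 0
      · simp only [if_pos h2]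
        exact Finset.card_le_three
      · simp only [if_neg h2]
        exact Finset.card_le_two
    · simp [if_neg h1]
  have hsum1 : ∑ i : Fin (2*k+1), ({i} ×ˢ f i).card ≤ ∑ i : Fin (2*k+1), c (i:ℕ) :=
    Finset.sum_le_sum (fun i _ => hcard2 i)
  have hsum2 : ∑ i : Fin (2*k+1), c (i:ℕ) = ∑ m ∈ Finset.range (2*k+1), c m :=
    Fin.sum_univ_eq_sum_range c (2*k+1)
  -- split the range sum
  have hsplit : ∑ m ∈ Finset.range (2*k+1), c m
      = ∑ m ∈ Finset.Ico 0 (k+6), c m + ∑ m ∈ Finset.Ico (k+6) (2*k+1), c m := by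
    rw [Finset.sum_Ico_consecutive c (Nat.zero_le _) (by omega : k+6 ≤ 2*k+1)]
    rw [Finset.range_eq_Ico]
  have hpart2 : ∑ m ∈ Finset.Ico (k+6) (2*k+1), c m = k - 5 := by
    have : ∀ m ∈ Finset.Ico (k+6) (2*k+1), c m = 1 := by
      intro m hm
      have := Finset.mem_Ico.mp hm
      rw [hc]
      simp only
      rw [if_neg (by omega)]
    rw [Finset.sum_congr rfl this, Finset.sum_const, Nat.card_Ico, smul_eq_mul, mul_one]
    omega
  have hpart1 : ∑ m ∈ Finset.Ico 0 (k+6), c m ≤ 2*(k+6) + ((k+6)/5 + 1) := by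
    have hcongr : ∀ m ∈ Finset.Ico 0 (k+6), c m = 2 + (if m % 5 = 0 then 1 else 0) := by
      intro m hm
      have := Finset.mem_Ico.mp hm
      rw [hc]
      simp only
      rw [if_pos (by omega)]
      split <;> rfl
    rw [Finset.sum_congr rfl hcongr, Finset.sum_add_distrib, Finset.sum_const, Nat.card_Ico,
      smul_eq_mul]
    have hfilt : (∑ m ∈ Finset.Ico 0 (k+6), if m % 5 = 0 then 1 else 0)
        = ((Finset.Ico 0 (k+6)).filter (fun m => m % 5 = 0)).card := by
      rw [Finset.card_filter]
    have hfcard : ((Finset.Ico 0 (k+6)).filter (fun m => m % 5 = 0)).card ≤ (k+6)/5 + 1 := by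
      have hss : ((Finset.Ico 0 (k+6)).filter (fun m => m % 5 = 0))
          ⊆ (Finset.range ((k+6)/5 + 1)).image (fun e => 5 * e) := by
        intro m hm
        rw [Finset.mem_filter, Finset.mem_Ico] at hm
        refine Finset.mem_image.mpr ⟨m / 5, Finset.mem_range.mpr (by omega), by omega⟩
      exact le_trans (Finset.card_le_card hss)
        (le_trans Finset.card_image_le (by rw [Finset.card_range]))
    omega
  calc onesCount (fun i j : Fin (2*k+1) => decide (Pk k i.val j.val))
      ≤ ∑ i : Fin (2*k+1), ({i} ×ˢ f i).card := hcard1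
    _ ≤ ∑ m ∈ Finset.range (2*k+1), c m := by rw [← hsum2]; exact hsum1
    _ ≤ (2*(k+6) + ((k+6)/5 + 1)) + (k - 5) := by rw [hsplit, hpart2]; omega
    _ ≤ 3*k + 8 + (k+6)/5 := by omega

end AlphaConstruction

theorem alpha_le_ten_thirds :
    ∃ K : ℕ, ∀ k : ℕ, K ≤ k →
      alpha k (2 * k + 1) ≤ (10 * k + 25 + 2) / 3 ∧
      (k % 3 = 0 → alpha k (2 * k + 1) ≤ (10 * k + 24) / 3) ∧
      (k % 3 = 1 → alpha k (2 * k + 1) ≤ (10 * k + 23) / 3) ∧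
      (k % 3 = 2 → alpha k (2 * k + 1) ≤ (10 * k + 25) / 3) := by
  refine ⟨100, fun k hk => ?_⟩
  have hmh := minorHit_s17 k hk
  have hones := ones_le k hk
  have hmem : onesCount (fun i j : Fin (2*k+1) => decide (Pk k i.val j.val)) ∈
      {m : ℕ | ∃ A : Fin (2*k+1) → Fin (2*k+1) → Bool, MinorHit (2*k+1) k A ∧ onesCount A = m} :=
    ⟨_, hmh, rfl⟩
  have halpha : alpha k (2 * k + 1) ≤ 3*k + 8 + (k+6)/5 :=
    le_trans (Nat.sInf_le hmem) hones
  exact ⟨by omega, fun h => by omega, fun h => by omega, fun h => by omega⟩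
end

section
/- Let α(k, 2k+1) denote the minimum number of ones in a (2k+1)×(2k+1) {0,1}-matrix in which every k×k minor contains a 1. For every positive integer a there exists a constant C(a) such that α(k, 2k+1) ≤ ((3a+1)k + C(a))/a for all k ≥ 1; consequently limsup_{k→∞} α(k,2k+1)/k ≤ 3. -/
open Finset

namespace AlphaAux

/-- Any run of `m ≥ a` consecutive positions mod `v` (starting below `v`) contains a
position divisible by `a`. -/
lemma grid_in_arc (v a c m : ℕ) (ha : 0 < a) (hcv : c < v) (hm : a ≤ m) :
    ∃ t, t < m ∧ a ∣ ((c + t) % v) := by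
  by_cases hwrap : v < c + m
  · refine ⟨v - c, by omega, ?_⟩
    have : (c + (v - c)) = v := by omega
    rw [this, Nat.mod_self]
    exact Nat.dvd_zero a
  · -- no wrap : find multiple of a inside [c, c+m)
    push_neg at hwrap
    rcases Nat.eq_zero_or_pos (c % a) with h0 | hpos
    · refine ⟨0, by omega, ?_⟩
      have hlt : c + 0 < v ∨ c + 0 = v := by omega
      rcases hlt with h | h
      · rw [Nat.mod_eq_of_lt h]
        simpa using (Nat.dvd_of_mod_eq_zero h0)
      · rw [h, Nat.mod_self]
        exact Nat.dvd_zero a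
    · refine ⟨a - c % a, ?_, ?_⟩
      · have := Nat.mod_lt c ha
        omega
      · have hdvd : a ∣ (c + (a - c % a)) := by
          have h1 : c = a * (c / a) + c % a := (Nat.div_add_mod c a).symm
          have h2 : c + (a - c % a) = a * (c / a) + a := by
            have := Nat.mod_lt c ha
            omega
          rw [h2]
          exact ⟨c / a + 1, by ring⟩
        have hle : c + (a - c % a) ≤ v := by
          have := Nat.mod_lt c ha
          omega
        rcases lt_or_eq_of_le hle with h | h
        · rwa [Nat.mod_eq_of_lt h]
        · rw [h, Nat.mod_self]
          exact Nat.dvd_zero a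

/-- Escape lemma: in any arc of length `j` (with `a ≤ j ≤ v - a - 1`) there is a
grid position whose antipode lands outside the arc's span. -/
lemma escape (v a j c : ℕ) (ha : 0 < a) (hc : c < v) (hja : a ≤ j)
    (hjk : j + a + 1 ≤ v) :
    ∃ t, t < j ∧ a ∣ ((c + t) % v) ∧ j < (t + (v + 1) / 2) % v := by
  set h := (v + 1) / 2 with hh
  by_cases hcase : j < h
  · obtain ⟨t, ht, hdvd⟩ := grid_in_arc v a c j ha hc hja
    refine ⟨t, ht, hdvd, ?_⟩
    have h1 : t + h < v := by omega
    rw [Nat.mod_eq_of_lt h1]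
    omega
  · push_neg at hcase
    obtain ⟨t', ht', hdvd⟩ := grid_in_arc v a ((c + (j + 1 - h)) % v) (v - j - 1) ha
      (Nat.mod_lt _ (by omega)) (by omega)
    refine ⟨j + 1 - h + t', by omega, ?_, ?_⟩
    · have heq : ((c + (j + 1 - h)) % v + t') % v = (c + (j + 1 - h + t')) % v := by
        rw [Nat.mod_add_mod, ← Nat.add_assoc]
      rwa [heq] at hdvd
    · have h1 : j + 1 - h + t' + h = j + 1 + t' := by omega
      rw [h1, Nat.mod_eq_of_lt (by omega)]
      omega

end AlphaAux
namespace AlphaAux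

lemma zmod_closed_univ {v : ℕ} [NeZero v] {H : Finset (ZMod v)} (hne : H.Nonempty)
    (hcl : ∀ i ∈ H, i - 1 ∈ H) : H = univ := by
  obtain ⟨i0, hi0⟩ := hne
  have key : ∀ m : ℕ, i0 - (m : ZMod v) ∈ H := by
    intro m
    induction m with
    | zero => simpa using hi0
    | succ p ih =>
        have h2 := hcl _ ih
        have h3 : i0 - (p : ZMod v) - 1 = i0 - ((p + 1 : ℕ) : ZMod v) := by
          push_cast; ring
        rwa [h3] at h2
  apply Finset.eq_univ_of_forall
  intro x
  have hx : x = i0 - (((i0 - x).val : ℕ) : ZMod v) := by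
    rw [ZMod.natCast_val, ZMod.cast_id]; ring
  rw [hx]; exact key _

lemma arc_of_one_exit {v : ℕ} [NeZero v] {H : Finset (ZMod v)} (hne : H.Nonempty)
    (hnu : H ≠ univ) (hone : (H \ H.image (· + 1)).card ≤ 1) :
    ∃ u : ZMod v, H = (Finset.range H.card).image (fun t : ℕ => u + (t : ZMod v)) := by
  -- find the unique exit point u : u ∈ H, u - 1 ∉ H
  have hexu : ∃ u ∈ H, u - 1 ∉ H := by
    by_contra hno
    push_neg at hno
    exact hnu (zmod_closed_univ hne hno)
  obtain ⟨u, hu, hu1⟩ := hexu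
  have humem : u ∈ H \ H.image (· + 1) := by
    simp only [mem_sdiff, mem_image]
    refine ⟨hu, ?_⟩
    rintro ⟨z, hz, hz1⟩
    exact hu1 (by rwa [show u - 1 = z by rw [← hz1]; ring])
  have hstep : ∀ i ∈ H, i ≠ u → i - 1 ∈ H := by
    intro i hi hiu
    by_contra h1
    have himem : i ∈ H \ H.image (· + 1) := by
      simp only [mem_sdiff, mem_image]
      refine ⟨hi, ?_⟩
      rintro ⟨z, hz, hz1⟩
      exact h1 (by rwa [show i - 1 = z by rw [← hz1]; ring])
    have : ({i, u} : Finset (ZMod v)) ⊆ H \ H.image (· + 1) := by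
      intro y hy
      rcases Finset.mem_insert.mp hy with rfl | hy
      · exact himem
      · rwa [Finset.mem_singleton.mp hy]
    have h2 := Finset.card_le_card this
    rw [Finset.card_insert_of_notMem (by simpa using hiu), Finset.card_singleton] at h2
    omega
  -- the walk from u
  have claim : ∀ d : ℕ, ∀ i ∈ H, (i - u).val = d → ∀ e : ℕ, e ≤ d → u + (e : ZMod v) ∈ H := by
    intro d
    induction d using Nat.strong_induction_on with
    | _ d IH =>
      intro i hi hval e he
      rcases Nat.eq_zero_or_pos d with rfl | hd
      · have : i - u = 0 := by
          have := (ZMod.val_eq_zero (i - u)).mp hval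
          exact this
        have hie : i = u := by
          have := sub_eq_zero.mp this
          exact this
        interval_cases e
        rw [hie] at hi
        simpa using hi
      · have hiu : i ≠ u := by
          intro h
          rw [h] at hval
          simp [ZMod.val_zero] at hval
          omega
        have hi1 : i - 1 ∈ H := hstep i hi hiu
        have hvd : (i - u).val < v := ZMod.val_lt _
        have hcast : i - u = ((d : ℕ) : ZMod v) := by
          rw [← hval, ZMod.natCast_val, ZMod.cast_id]
        have hval1 : (i - 1 - u).val = d - 1 := by
          have h1 : i - 1 - u = ((d - 1 : ℕ) : ZMod v) := by
            have h2 : i - 1 - u = (i - u) - 1 := by ring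
            rw [h2, hcast]
            have : ((d - 1 : ℕ) : ZMod v) + 1 = ((d : ℕ) : ZMod v) := by
              have : (d - 1) + 1 = d := by omega
              rw [← this]; push_cast; ring
            rw [← this]; ring
          rw [h1, ZMod.val_natCast, Nat.mod_eq_of_lt (by omega)]
        rcases Nat.lt_or_ge e d with he' | he'
        · exact IH (d - 1) (by omega) (i - 1) hi1 hval1 e (by omega)
        · have hed : e = d := by omega
          subst hed
          have : u + ((e : ℕ) : ZMod v) = i := by rw [← hcast]; ring
          rwa [this]
  -- H is exactly the arc
  refine ⟨u, ?_⟩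
  have hcardv : H.card ≤ v := by
    have := Finset.card_le_card (Finset.subset_univ H)
    simpa [ZMod.card] using this
  have hsub : H ⊆ (Finset.range H.card).image (fun t : ℕ => u + (t : ZMod v)) := by
    intro i hi
    by_contra hni
    have hd : H.card ≤ (i - u).val := by
      by_contra hlt
      push_neg at hlt
      exact hni (Finset.mem_image.mpr ⟨(i - u).val, Finset.mem_range.mpr hlt, by
        rw [ZMod.natCast_val, ZMod.cast_id]; ring⟩)
    have hvd : (i - u).val < v := ZMod.val_lt _
    have hallin : (Finset.range ((i - u).val + 1)).image (fun t : ℕ => u + (t : ZMod v)) ⊆ H := by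
      intro y hy
      obtain ⟨e, he, rfl⟩ := Finset.mem_image.mp hy
      exact claim _ i hi rfl e (by simpa using Nat.lt_succ_iff.mp (Finset.mem_range.mp he))
    have hinj : Set.InjOn (fun t : ℕ => u + (t : ZMod v)) (Finset.range ((i - u).val + 1)) := by
      intro x hx y hy hxy
      simp only [Finset.coe_range, Set.mem_Iio] at hx hy
      have h5 : ((x : ℕ) : ZMod v) = ((y : ℕ) : ZMod v) := add_left_cancel hxy
      have hxv : ((x : ℕ) : ZMod v).val = x := ZMod.val_cast_of_lt (by omega)
      have hyv : ((y : ℕ) : ZMod v).val = y := ZMod.val_cast_of_lt (by omega)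
      rw [h5, hyv] at hxv
      exact hxv.symm
    have hcard := Finset.card_le_card hallin
    rw [Finset.card_image_of_injOn hinj, Finset.card_range] at hcard
    omega
  have hinj2 : Set.InjOn (fun t : ℕ => u + (t : ZMod v)) (Finset.range H.card) := by
    intro x hx y hy hxy
    simp only [Finset.coe_range, Set.mem_Iio] at hx hy
    have h5 : ((x : ℕ) : ZMod v) = ((y : ℕ) : ZMod v) := add_left_cancel hxy
    have hxv : ((x : ℕ) : ZMod v).val = x := ZMod.val_cast_of_lt (by omega)
    have hyv : ((y : ℕ) : ZMod v).val = y := ZMod.val_cast_of_lt (by omega)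
    rw [h5, hyv] at hxv
    exact hxv.symm
  have hcard2 : ((Finset.range H.card).image (fun t : ℕ => u + (t : ZMod v))).card ≤ H.card := by
    rw [Finset.card_image_of_injOn hinj2, Finset.card_range]
  exact Finset.eq_of_subset_of_card_le hsub hcard2

end AlphaAux
namespace AlphaAux

lemma span_card {v a : ℕ} [NeZero v] (ha : 0 < a) {H : Finset (ZMod v)}
    (hja : a ≤ H.card) (hjk : H.card + a + 1 ≤ v) :
    H.card + 2 ≤ (H ∪ H.image (· + 1) ∪ (H.filter (fun i => a ∣ i.val)).image
      (fun i => i + (((v + 1) / 2 : ℕ) : ZMod v))).card := by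
  set I := H.image (· + 1) with hI
  set X := (H.filter (fun i => a ∣ i.val)).image
      (fun i => i + (((v + 1) / 2 : ℕ) : ZMod v)) with hX
  have hvcard : Fintype.card (ZMod v) = v := ZMod.card v
  have hne : H.Nonempty := Finset.card_pos.mp (by omega)
  have hnu : H ≠ univ := by
    intro h
    have := Finset.card_univ (α := ZMod v)
    rw [h, this, hvcard] at hjk
    omega
  have hIcard : I.card = H.card :=
    Finset.card_image_of_injective _ (add_left_injective 1)
  have hBcard : (H ∪ I).card = H.card + (I \ H).card := by
    rw [← Finset.union_sdiff_self_eq_union,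
      Finset.card_union_of_disjoint Finset.disjoint_sdiff]
  have hsd : (H \ I).card = (I \ H).card := by
    have h1 := Finset.card_sdiff_add_card_inter H I
    have h2 := Finset.card_sdiff_add_card_inter I H
    rw [Finset.inter_comm] at h2
    omega
  have hrpos : 1 ≤ (I \ H).card := by
    by_contra h0
    push_neg at h0
    have hempty : H \ I = ∅ := Finset.card_eq_zero.mp (by omega)
    have hcl : ∀ i ∈ H, i - 1 ∈ H := by
      intro i hi
      have hiI : i ∈ I := by
        by_contra hnotI
        have : i ∈ H \ I := Finset.mem_sdiff.mpr ⟨hi, hnotI⟩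
        rw [hempty] at this
        exact absurd this (Finset.notMem_empty i)
      obtain ⟨z, hz, hz1⟩ := Finset.mem_image.mp hiI
      rwa [show i - 1 = z by rw [← hz1]; ring]
    exact hnu (zmod_closed_univ hne hcl)
  rcases Nat.lt_or_ge (I \ H).card 2 with hr1 | hr2
  · -- exactly one exit: arc case
    have hone : (H \ I).card ≤ 1 := by omega
    obtain ⟨u, harc⟩ := arc_of_one_exit hne hnu hone
    obtain ⟨t, htj, hdvd, hesc⟩ := escape v a H.card u.val ha (ZMod.val_lt u) hja hjk
    have hjv : H.card < v := by omega
    have hi0 : u + (t : ZMod v) ∈ H := by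
      rw [harc]
      exact Finset.mem_image.mpr ⟨t, Finset.mem_range.mpr htj, rfl⟩
    have hi0val : (u + (t : ZMod v)).val = (u.val + t) % v := by
      rw [ZMod.val_add, ZMod.val_cast_of_lt (by omega)]
    have hx0 : u + (t : ZMod v) + (((v + 1) / 2 : ℕ) : ZMod v) ∈ X := by
      rw [hX]
      exact Finset.mem_image.mpr ⟨u + (t : ZMod v),
        Finset.mem_filter.mpr ⟨hi0, by rw [hi0val]; exact hdvd⟩, rfl⟩
    -- x0 is not in H ∪ I
    have hmemB : ∀ y ∈ H ∪ I, (y - u).val ≤ H.card := by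
      intro y hy
      rcases Finset.mem_union.mp hy with hyH | hyI
      · rw [harc] at hyH
        obtain ⟨e, he, rfl⟩ := Finset.mem_image.mp hyH
        have he' := Finset.mem_range.mp he
        have : u + (e : ZMod v) - u = ((e : ℕ) : ZMod v) := by ring
        rw [this, ZMod.val_cast_of_lt (by omega)]
        omega
      · obtain ⟨z, hz, rfl⟩ := Finset.mem_image.mp hyI
        rw [harc] at hz
        obtain ⟨e, he, rfl⟩ := Finset.mem_image.mp hz
        have he' := Finset.mem_range.mp he
        have : u + (e : ZMod v) + 1 - u = ((e + 1 : ℕ) : ZMod v) := by push_cast; ring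
        rw [this, ZMod.val_cast_of_lt (by omega)]
        omega
    have hx0notB : u + (t : ZMod v) + (((v + 1) / 2 : ℕ) : ZMod v) ∉ H ∪ I := by
      intro hmem
      have h1 := hmemB _ hmem
      have h2 : u + (t : ZMod v) + (((v + 1) / 2 : ℕ) : ZMod v) - u
          = ((t + (v + 1) / 2 : ℕ) : ZMod v) := by push_cast; ring
      rw [h2, ZMod.val_natCast] at h1
      omega
    have hsubset : insert (u + (t : ZMod v) + (((v + 1) / 2 : ℕ) : ZMod v)) (H ∪ I)
        ⊆ H ∪ I ∪ X := by
      intro y hy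
      rcases Finset.mem_insert.mp hy with rfl | hy
      · exact Finset.mem_union.mpr (Or.inr hx0)
      · exact Finset.mem_union.mpr (Or.inl hy)
    have hcard := Finset.card_le_card hsubset
    rw [Finset.card_insert_of_notMem hx0notB, hBcard] at hcard
    omega
  · -- at least two exits
    have hsub : H ∪ I ⊆ H ∪ I ∪ X := Finset.subset_union_left
    have := Finset.card_le_card hsub
    omega

end AlphaAux
namespace AlphaAux

lemma construction (k a s v : ℕ) (ha : 0 < a) (hak : a ≤ k)
    (hs : s = k - a) (hv : v = k + 1 + a) :
    ∃ A : Fin (2 * k + 1) → Fin (2 * k + 1) → Bool, MinorHit (2 * k + 1) k A ∧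
      onesCount A ≤ (2 * k + 1) + v + (v / a + 1) := by
  haveI : NeZero v := ⟨by omega⟩
  haveI : Fact (1 < v) := ⟨by omega⟩
  have hvpos : 0 < v := by omega
  have hn : 2 * k + 1 = s + v := by omega
  refine ⟨fun i j => decide ((j = i) ∨ (s ≤ i.val ∧ s ≤ j.val ∧
      (j.val - s = (i.val - s + 1) % v ∨
        (a ∣ (i.val - s) ∧ j.val - s = (i.val - s + (v + 1) / 2) % v)))), ?_, ?_⟩
  · -- MinorHit
    intro S T hS hT
    by_contra hcon
    push_neg at hcon
    set A : Fin (2 * k + 1) → Fin (2 * k + 1) → Bool :=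
      fun i j => decide ((j = i) ∨ (s ≤ i.val ∧ s ≤ j.val ∧
      (j.val - s = (i.val - s + 1) % v ∨
        (a ∣ (i.val - s) ∧ j.val - s = (i.val - s + (v + 1) / 2) % v)))) with hA
    set NS : Finset (Fin (2 * k + 1)) :=
      univ.filter (fun jc => ∃ i ∈ S, A i jc = true) with hNS
    have hdisj : Disjoint T NS := by
      rw [Finset.disjoint_left]
      intro jc hjT hjNS
      obtain ⟨-, i, hiS, hAij⟩ := Finset.mem_filter.mp hjNS
      exact hcon i hiS jc hjT hAij
    have hTN : T.card + NS.card ≤ 2 * k + 1 := by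
      have h1 := Finset.card_le_univ (T ∪ NS)
      rw [Finset.card_union_of_disjoint hdisj] at h1
      simpa using h1
    -- split S
    set X : Finset (Fin (2 * k + 1)) := S.filter (fun i => i.val < s) with hX
    set Sh : Finset (Fin (2 * k + 1)) := S.filter (fun i => ¬ i.val < s) with hSh
    have hsplit : X.card + Sh.card = k := by
      rw [hX, hSh, Finset.card_filter_add_card_filter_not, hS]
    have hXs : X.card ≤ s := by
      have h1 : X.image Fin.val ⊆ Finset.range s := by
        intro y hy
        obtain ⟨i, hi, rfl⟩ := Finset.mem_image.mp hy
        exact Finset.mem_range.mpr (Finset.mem_filter.mp hi).2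
      have h2 := Finset.card_le_card h1
      rwa [Finset.card_image_of_injective _ Fin.val_injective, Finset.card_range] at h2
    -- heavy rows as ZMod v
    set toZ : Fin (2 * k + 1) → ZMod v := fun i => ((i.val - s : ℕ) : ZMod v) with htoZ
    set HZ : Finset (ZMod v) := Sh.image toZ with hHZ
    have hShval : ∀ i ∈ Sh, s ≤ i.val ∧ i.val - s < v := by
      intro i hi
      have h1 := (Finset.mem_filter.mp hi).2
      have h2 := i.isLt
      omega
    have htoZval : ∀ i ∈ Sh, (toZ i).val = i.val - s := by
      intro i hi
      obtain ⟨h1, h2⟩ := hShval i hi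
      rw [htoZ]
      exact ZMod.val_cast_of_lt h2
    have hinj : Set.InjOn toZ Sh := by
      intro i hi j hj hij
      have h1 := htoZval i hi
      have h2 := htoZval j hj
      rw [hij] at h1
      obtain ⟨h3, -⟩ := hShval i hi
      obtain ⟨h4, -⟩ := hShval j hj
      exact Fin.val_injective (by omega)
    have hHcard : HZ.card = Sh.card := Finset.card_image_of_injOn hinj
    have hja : a ≤ HZ.card := by omega
    have hjk : HZ.card + a + 1 ≤ v := by omega
    -- the span
    set SP : Finset (ZMod v) := HZ ∪ HZ.image (· + 1) ∪ (HZ.filter (fun i => a ∣ i.val)).image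
      (fun i => i + (((v + 1) / 2 : ℕ) : ZMod v)) with hSP
    have hspan : HZ.card + 2 ≤ SP.card := span_card ha hja hjk
    set emb : ZMod v → Fin (2 * k + 1) := fun z => ⟨s + z.val, by
      have := ZMod.val_lt z; omega⟩ with hemb
    have hembinj : Function.Injective emb := by
      intro z z' h
      have : s + z.val = s + z'.val := congrArg Fin.val h
      exact ZMod.val_injective v (by omega)
    -- membership of spans in NS
    have hXNS : X ⊆ NS := by
      intro i hi
      refine Finset.mem_filter.mpr ⟨Finset.mem_univ _, i, (Finset.mem_filter.mp hi).1, ?_⟩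
      exact decide_eq_true (Or.inl rfl)
    have hSPNS : SP.image emb ⊆ NS := by
      intro y hy
      obtain ⟨z, hz, rfl⟩ := Finset.mem_image.mp hy
      rcases Finset.mem_union.mp hz with hz' | hz3
      · rcases Finset.mem_union.mp hz' with hz1 | hz2
        · -- diagonal
          obtain ⟨i, hiSh, rfl⟩ := Finset.mem_image.mp hz1
          obtain ⟨h1, h2⟩ := hShval i hiSh
          have hei : emb (toZ i) = i := by
            apply Fin.val_injective
            show s + (toZ i).val = i.val
            rw [htoZval i hiSh]
            omega
          rw [hei]
          refine Finset.mem_filter.mpr ⟨Finset.mem_univ _, i, (Finset.mem_filter.mp hiSh).1, ?_⟩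
          exact decide_eq_true (Or.inl rfl)
        · -- successor
          obtain ⟨w, hw, rfl⟩ := Finset.mem_image.mp hz2
          obtain ⟨i, hiSh, rfl⟩ := Finset.mem_image.mp hw
          obtain ⟨h1, h2⟩ := hShval i hiSh
          refine Finset.mem_filter.mpr ⟨Finset.mem_univ _, i, (Finset.mem_filter.mp hiSh).1, ?_⟩
          apply decide_eq_true
          refine Or.inr ⟨h1, by simp [hemb], Or.inl ?_⟩
          show (emb (toZ i + 1)).val - s = (i.val - s + 1) % v
          have hval : (toZ i + 1).val = (i.val - s + 1) % v := by
            rw [ZMod.val_add, htoZval i hiSh, ZMod.val_one]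
          simp only [hemb]
          omega
      · -- extra
        obtain ⟨i0, hfilt, rfl⟩ := Finset.mem_image.mp hz3
        obtain ⟨hi0HZ, hdvd⟩ := Finset.mem_filter.mp hfilt
        obtain ⟨i, hiSh, rfl⟩ := Finset.mem_image.mp hi0HZ
        obtain ⟨h1, h2⟩ := hShval i hiSh
        refine Finset.mem_filter.mpr ⟨Finset.mem_univ _, i, (Finset.mem_filter.mp hiSh).1, ?_⟩
        apply decide_eq_true
        have hdvd' : a ∣ (i.val - s) := by rwa [htoZval i hiSh] at hdvd
        refine Or.inr ⟨h1, by simp [hemb], Or.inr ⟨hdvd', ?_⟩⟩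
        show (emb (toZ i + (((v + 1) / 2 : ℕ) : ZMod v))).val - s
            = (i.val - s + (v + 1) / 2) % v
        have hval : (toZ i + (((v + 1) / 2 : ℕ) : ZMod v)).val
            = (i.val - s + (v + 1) / 2) % v := by
          rw [ZMod.val_add, htoZval i hiSh, ZMod.val_natCast]
          conv_rhs => rw [Nat.add_mod]
          rw [Nat.add_mod (i.val - s), Nat.mod_mod_of_dvd _ (dvd_refl v)]
        simp only [hemb]
        omega
    have hdisj2 : Disjoint X (SP.image emb) := by
      rw [Finset.disjoint_left]
      intro y hyX hyE
      have h1 := (Finset.mem_filter.mp hyX).2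
      obtain ⟨z, -, rfl⟩ := Finset.mem_image.mp hyE
      simp only [hemb] at h1
      omega
    have hNScard : k + 2 ≤ NS.card := by
      have hsub : X ∪ SP.image emb ⊆ NS := Finset.union_subset hXNS hSPNS
      have h1 := Finset.card_le_card hsub
      rw [Finset.card_union_of_disjoint hdisj2,
        Finset.card_image_of_injective _ hembinj] at h1
      omega
    omega
  · -- counting
    set A : Fin (2 * k + 1) → Fin (2 * k + 1) → Bool :=
      fun i j => decide ((j = i) ∨ (s ≤ i.val ∧ s ≤ j.val ∧
      (j.val - s = (i.val - s + 1) % v ∨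
        (a ∣ (i.val - s) ∧ j.val - s = (i.val - s + (v + 1) / 2) % v)))) with hA
    set g2 : Fin (2 * k + 1) → Fin (2 * k + 1) := fun i =>
      ⟨s + ((i.val - s + 1) % v), by have := Nat.mod_lt (i.val - s + 1) hvpos; omega⟩ with hg2
    set g3 : Fin (2 * k + 1) → Fin (2 * k + 1) := fun i =>
      ⟨s + ((i.val - s + (v + 1) / 2) % v), by
        have := Nat.mod_lt (i.val - s + (v + 1) / 2) hvpos; omega⟩ with hg3
    set G1 := (univ : Finset (Fin (2 * k + 1))).image (fun i => (i, i)) with hG1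
    set G2 := ((univ : Finset (Fin (2 * k + 1))).filter (fun i => s ≤ i.val)).image
      (fun i => (i, g2 i)) with hG2
    set G3 := ((univ : Finset (Fin (2 * k + 1))).filter
      (fun i => s ≤ i.val ∧ a ∣ (i.val - s))).image (fun i => (i, g3 i)) with hG3
    have hsub : (univ.filter fun p : Fin (2 * k + 1) × Fin (2 * k + 1) =>
        A p.1 p.2 = true) ⊆ G1 ∪ G2 ∪ G3 := by
      intro p hp
      obtain ⟨i, j⟩ := p
      have hAij' := (Finset.mem_filter.mp hp).2
      replace hAij' : A i j = true := hAij'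
      have hP := of_decide_eq_true hAij'
      rcases hP with hji | ⟨h1, h2, hrest⟩
      · apply Finset.mem_union.mpr; left; apply Finset.mem_union.mpr; left
        exact Finset.mem_image.mpr ⟨i, Finset.mem_univ _, by rw [show j = i from hji]⟩
      · rcases hrest with h3 | ⟨hdvd, h3⟩
        · apply Finset.mem_union.mpr; left; apply Finset.mem_union.mpr; right
          refine Finset.mem_image.mpr ⟨i, Finset.mem_filter.mpr ⟨Finset.mem_univ _, h1⟩, ?_⟩
          have : j = g2 i := by
            apply Fin.val_injective
            show j.val = s + ((i.val - s + 1) % v)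
            omega
          rw [this]
        · apply Finset.mem_union.mpr; right
          refine Finset.mem_image.mpr ⟨i,
            Finset.mem_filter.mpr ⟨Finset.mem_univ _, h1, hdvd⟩, ?_⟩
          have : j = g3 i := by
            apply Fin.val_injective
            show j.val = s + ((i.val - s + (v + 1) / 2) % v)
            omega
          rw [this]
    have hG1card : G1.card ≤ 2 * k + 1 := by
      calc G1.card ≤ (univ : Finset (Fin (2 * k + 1))).card := Finset.card_image_le
      _ = 2 * k + 1 := by simp
    have hG2card : G2.card ≤ v := by
      have h1 : G2.card ≤ ((univ : Finset (Fin (2 * k + 1))).filter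
          (fun i => s ≤ i.val)).card := Finset.card_image_le
      have h2 : ((univ : Finset (Fin (2 * k + 1))).filter (fun i => s ≤ i.val)).card
          ≤ (Finset.range v).card := by
        apply Finset.card_le_card_of_injOn (fun i => i.val - s)
        · intro i hi
          have := (Finset.mem_filter.mp hi).2
          have := i.isLt
          exact Finset.mem_range.mpr (by show i.val - s < v; omega)
        · intro i hi j hj h
          replace h : i.val - s = j.val - s := h
          have hi' := (Finset.mem_filter.mp hi).2
          have hj' := (Finset.mem_filter.mp hj).2
          exact Fin.val_injective (by omega)
      rw [Finset.card_range] at h2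
      omega
    have hG3card : G3.card ≤ v / a + 1 := by
      have h1 : G3.card ≤ ((univ : Finset (Fin (2 * k + 1))).filter
          (fun i => s ≤ i.val ∧ a ∣ (i.val - s))).card := Finset.card_image_le
      have h2 : ((univ : Finset (Fin (2 * k + 1))).filter
          (fun i => s ≤ i.val ∧ a ∣ (i.val - s))).card
          ≤ (Finset.range (v / a + 1)).card := by
        apply Finset.card_le_card_of_injOn (fun i => (i.val - s) / a)
        · intro i hi
          obtain ⟨-, h3, -⟩ := Finset.mem_filter.mp hi
          have h4 := i.isLt
          have h5 : i.val - s ≤ v := by omega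
          exact Finset.mem_range.mpr (by
            have := Nat.div_le_div_right (c := a) h5
            show (i.val - s) / a < v / a + 1
            omega)
        · intro i hi j hj h
          obtain ⟨-, hi1, hi2⟩ := Finset.mem_filter.mp hi
          obtain ⟨-, hj1, hj2⟩ := Finset.mem_filter.mp hj
          have hieq : i.val - s = a * ((i.val - s) / a) := (Nat.mul_div_cancel' hi2).symm
          have hjeq : j.val - s = a * ((j.val - s) / a) := (Nat.mul_div_cancel' hj2).symm
          replace h : (i.val - s) / a = (j.val - s) / a := h
          rw [h] at hieq
          exact Fin.val_injective (by omega)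
      rw [Finset.card_range] at h2
      omega
    have hfinal := Finset.card_le_card hsub
    have hu1 : (G1 ∪ G2 ∪ G3).card ≤ G1.card + G2.card + G3.card := by
      calc (G1 ∪ G2 ∪ G3).card ≤ (G1 ∪ G2).card + G3.card := Finset.card_union_le _ _
      _ ≤ G1.card + G2.card + G3.card := by
          have := Finset.card_union_le G1 G2
          omega
    unfold onesCount
    omega

end AlphaAux
namespace AlphaAux

lemma alpha_le_ones {k n : ℕ} (A : Fin n → Fin n → Bool) (h : MinorHit n k A) :
    alpha k n ≤ onesCount A :=
  Nat.sInf_le ⟨A, h, rfl⟩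

lemma alpha_le_sq (k n : ℕ) (hk : 1 ≤ k) : alpha k n ≤ n * n := by
  have hmh : MinorHit n k (fun _ _ => true) := by
    intro S T hS hT
    obtain ⟨i, hi⟩ := Finset.card_pos.mp (by omega : 0 < S.card)
    obtain ⟨j, hj⟩ := Finset.card_pos.mp (by omega : 0 < T.card)
    exact ⟨i, hi, j, hj, rfl⟩
  refine le_trans (alpha_le_ones _ hmh) ?_
  unfold onesCount
  calc (Finset.univ.filter fun p : Fin n × Fin n => (fun _ _ => true) p.1 p.2 = true).card
      ≤ (Finset.univ : Finset (Fin n × Fin n)).card := Finset.card_filter_le _ _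
    _ = n * n := by simp

lemma part_one : ∀ a : ℕ, 0 < a → ∃ C : ℕ, ∀ k : ℕ, 1 ≤ k →
    a * alpha k (2 * k + 1) ≤ (3 * a + 1) * k + C := by
  intro a ha
  refine ⟨a * (2 * a + 1) ^ 2 + a ^ 2 + 4 * a + 1, ?_⟩
  intro k hk
  by_cases hak : a ≤ k
  · obtain ⟨A, hA, hcnt⟩ := construction k a (k - a) (k + 1 + a) ha hak rfl rfl
    have h1 : alpha k (2 * k + 1) ≤ (2 * k + 1) + (k + 1 + a) + ((k + 1 + a) / a + 1) :=
      le_trans (alpha_le_ones A hA) hcnt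
    have h2 : a * alpha k (2 * k + 1)
        ≤ a * ((2 * k + 1) + (k + 1 + a) + ((k + 1 + a) / a + 1)) :=
      Nat.mul_le_mul_left a h1
    have h3 : a * ((k + 1 + a) / a) ≤ k + 1 + a := by
      rw [Nat.mul_comm]
      exact Nat.div_mul_le_self _ _
    have h6 : a * alpha k (2 * k + 1) ≤ (3 * a + 1) * k + (a ^ 2 + 4 * a + 1) := by
      calc a * alpha k (2 * k + 1)
          ≤ a * ((2 * k + 1) + (k + 1 + a) + ((k + 1 + a) / a + 1)) := h2
        _ = a * ((2 * k + 1) + (k + 1 + a) + 1) + a * ((k + 1 + a) / a) := by ring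
        _ ≤ a * ((2 * k + 1) + (k + 1 + a) + 1) + (k + 1 + a) := Nat.add_le_add_left h3 _
        _ = (3 * a + 1) * k + (a ^ 2 + 4 * a + 1) := by ring
    refine le_trans h6 ?_
    have h7 : a * (2 * a + 1) ^ 2 + a ^ 2 + 4 * a + 1
        = a * (2 * a + 1) ^ 2 + (a ^ 2 + 4 * a + 1) := by ring
    rw [h7]
    exact Nat.add_le_add_left (Nat.le_add_left _ _) _
  · push_neg at hak
    have h1 : alpha k (2 * k + 1) ≤ (2 * k + 1) * (2 * k + 1) := alpha_le_sq _ _ hk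
    have h2 : (2 * k + 1) * (2 * k + 1) ≤ (2 * a + 1) ^ 2 := by nlinarith
    have h3 : a * alpha k (2 * k + 1) ≤ a * (2 * a + 1) ^ 2 :=
      le_trans (Nat.mul_le_mul_left a h1) (Nat.mul_le_mul_left a h2)
    omega

end AlphaAux

theorem alpha_asymptotic :
    (∀ a : ℕ, 0 < a → ∃ C : ℕ, ∀ k : ℕ, 1 ≤ k →
      a * alpha k (2 * k + 1) ≤ (3 * a + 1) * k + C) ∧
    Filter.limsup (fun k : ℕ => (alpha k (2 * k + 1) : ℝ) / k) Filter.atTop ≤ 3 := by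
  constructor
  · exact AlphaAux.part_one
  · have hbdd : Filter.IsCoboundedUnder (· ≤ ·) Filter.atTop
        (fun k : ℕ => (alpha k (2 * k + 1) : ℝ) / k) := by
      exact Filter.IsBoundedUnder.isCoboundedUnder_le
        (Filter.isBoundedUnder_of ⟨0, fun k => by positivity⟩)
    apply le_of_forall_pos_le_add
    intro ε hε
    apply Filter.limsup_le_of_le hbdd
    set a : ℕ := max 1 ⌈(2 : ℝ) / ε⌉₊ with hadef
    have ha : 0 < a := le_max_left 1 _
    obtain ⟨C, hC⟩ := AlphaAux.part_one a ha
    have ha2 : (2 : ℝ) ≤ ε * a := by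
      have h1 : (2 : ℝ) / ε ≤ (⌈(2 : ℝ) / ε⌉₊ : ℝ) := Nat.le_ceil _
      have h2 : ((⌈(2 : ℝ) / ε⌉₊ : ℕ) : ℝ) ≤ (a : ℝ) := by
        exact_mod_cast Nat.cast_le.mpr (le_max_right 1 _)
      have h3 : (2 : ℝ) / ε ≤ (a : ℝ) := le_trans h1 h2
      calc (2 : ℝ) = ε * ((2 : ℝ) / ε) := by field_simp
        _ ≤ ε * a := by
            apply mul_le_mul_of_nonneg_left h3 (le_of_lt hε)
    filter_upwards [Filter.eventually_ge_atTop (max 1 C)] with kk hkk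
    have hk1 : 1 ≤ kk := le_trans (le_max_left _ _) hkk
    have hkC : C ≤ kk := le_trans (le_max_right _ _) hkk
    have hnat := hC kk hk1
    have hcast : (a : ℝ) * (alpha kk (2 * kk + 1) : ℝ) ≤ (3 * a + 1) * kk + C := by
      exact_mod_cast hnat
    have hkpos : (0 : ℝ) < kk := by exact_mod_cast hk1
    have hapos : (0 : ℝ) < a := by exact_mod_cast ha
    rw [div_le_iff₀ hkpos]
    rw [← mul_le_mul_iff_right₀ hapos]
    have hCk : (C : ℝ) ≤ (kk : ℝ) := by exact_mod_cast hkC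
    have hmul : 2 * (kk : ℝ) ≤ ε * a * kk :=
      mul_le_mul_of_nonneg_right ha2 (le_of_lt hkpos)
    calc (a : ℝ) * (alpha kk (2 * kk + 1) : ℝ) ≤ (3 * a + 1) * kk + C := hcast
      _ ≤ (a : ℝ) * ((3 + ε) * kk) := by nlinarith
end
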